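/- arXiv:1707.07363 — 4 statements merged into one kernel-verified Lean document; each statement's English description precedes it below -/
import Mathlib

section
/- Every metrically removable set E ⊆ ℝ² is totally disconnected. -/
set_option maxHeartbeats 1000000

open Set

/-- A set `E` in a metric space `X` is *metrically removable* if for every `ε > 0` and any two
points `a, b ∈ X` there is a curve connecting `a` to `b` that is disjoint from `E \ {a, b}`
and has length at most `dist a b + ε`. -/
def MetricallyRemovable {X : Type*} [MetricSpace X] (E : Set X) : Prop :=
  ∀ ε > 0, ∀ a b : X, ∃ γ : ℝ → X, ContinuousOn γ (Icc 0 1) ∧ γ 0 = a ∧ γ 1 = b ∧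
    (∀ t ∈ Icc (0:ℝ) 1, γ t ∉ E \ {a, b}) ∧
    eVariationOn γ (Icc 0 1) ≤ ENNReal.ofReal (dist a b + ε)

namespace MRAux
open Complex

lemma exp_arg_unit {ζ : ℂ} (hζ : ζ ≠ 0) : Complex.exp (Complex.arg ζ * Complex.I) = ζ / ‖ζ‖ := by
  have h := Complex.norm_mul_exp_arg_mul_I ζ
  have habs : (‖ζ‖ : ℂ) ≠ 0 := by
    simpa using (norm_ne_zero_iff.mpr hζ)
  field_simp
  linear_combination h

lemma re_pos_of_abs_sub_one_lt {ζ : ℂ} (h : ‖ζ - 1‖ < 1) : 0 < ζ.re := by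
  have h1 : |(ζ - 1).re| ≤ ‖ζ - 1‖ := Complex.abs_re_le_norm _
  have h2 : (ζ - 1).re = ζ.re - 1 := by simp
  rw [h2] at h1
  cases abs_le.1 h1 with
  | intro hl hr => linarith

lemma mem_slitPlane_of_abs_sub_one_lt {ζ : ℂ} (h : ‖ζ - 1‖ < 1) :
    ζ ∈ Complex.slitPlane :=
  Complex.mem_slitPlane_iff.2 (Or.inl (re_pos_of_abs_sub_one_lt h))

lemma eq_two_pi_int_of_exp_eq_one {s : ℝ} (h : Complex.exp (s * Complex.I) = 1) :
    ∃ k : ℤ, s = 2 * Real.pi * k := by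
  obtain ⟨n, hn⟩ := Complex.exp_eq_one_iff.1 h
  refine ⟨n, ?_⟩
  have hI : (Complex.I : ℂ) ≠ 0 := Complex.I_ne_zero
  have h2 : (s : ℂ) * Complex.I = ((n : ℂ) * (2 * Real.pi)) * Complex.I := by
    rw [hn]; ring
  have h3 : (s : ℂ) = (n : ℂ) * (2 * Real.pi) := mul_right_cancel₀ hI h2
  have : (s : ℂ) = ((2 * Real.pi * n : ℝ) : ℂ) := by push_cast; rw [h3]; ring
  exact_mod_cast this

lemma eq_of_int_valued {h : ℝ → ℝ} (hc : ContinuousOn h (Icc 0 1))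
    (hv : ∀ t ∈ Icc (0:ℝ) 1, ∃ k : ℤ, h t = 2 * Real.pi * k) : h 1 = h 0 := by
  have h0m : (0:ℝ) ∈ Icc (0:ℝ) 1 := by norm_num
  have h1m : (1:ℝ) ∈ Icc (0:ℝ) 1 := by norm_num
  obtain ⟨k0, hk0⟩ := hv 0 h0m
  obtain ⟨k1, hk1⟩ := hv 1 h1m
  have hπ := Real.pi_pos
  by_contra hne
  have hks : k0 ≠ k1 := by
    intro h'; apply hne; rw [hk0, hk1, h']
  rcases lt_or_gt_of_ne hks with hlt | hgt
  · -- k0 < k1, h 0 < h 1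
    have hy1 : h 0 < 2 * Real.pi * k0 + Real.pi := by rw [hk0]; linarith
    have hy2 : 2 * Real.pi * k0 + Real.pi < h 1 := by
      rw [hk1]
      have : (k0 : ℝ) + 1 ≤ k1 := by exact_mod_cast hlt
      nlinarith
    have hsub := intermediate_value_Icc (by norm_num : (0:ℝ) ≤ 1) hc
    obtain ⟨t, ht, hteq⟩ := hsub ⟨le_of_lt hy1, le_of_lt hy2⟩
    obtain ⟨k, hk⟩ := hv t ht
    rw [hk] at hteq
    have : (2 * (k - k0) : ℝ) = 1 := by
      push_cast
      nlinarith
    have : (2 * (k - k0) : ℤ) = 1 := by exact_mod_cast this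
    omega
  · have hy1 : h 1 < 2 * Real.pi * k1 + Real.pi := by rw [hk1]; linarith
    have hy2 : 2 * Real.pi * k1 + Real.pi < h 0 := by
      rw [hk0]
      have : (k1 : ℝ) + 1 ≤ k0 := by exact_mod_cast hgt
      nlinarith
    have hsub := intermediate_value_Icc' (by norm_num : (0:ℝ) ≤ 1) hc
    obtain ⟨t, ht, hteq⟩ := hsub ⟨le_of_lt hy1, le_of_lt hy2⟩
    obtain ⟨k, hk⟩ := hv t ht
    rw [hk] at hteq
    have : (2 * (k - k1) : ℝ) = 1 := by
      push_cast
      nlinarith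
    have : (2 * (k - k1) : ℤ) = 1 := by exact_mod_cast this
    omega


def IsLift (γ : ℝ → ℂ) (w : ℂ) (θ : ℝ → ℝ) : Prop :=
  ContinuousOn θ (Icc 0 1) ∧
    ∀ t ∈ Icc (0:ℝ) 1, γ t - w = (‖γ t - w‖ : ℂ) * Complex.exp (θ t * Complex.I)

lemma exists_lift {γ : ℝ → ℂ} (hγ : ContinuousOn γ (Icc 0 1)) {w : ℂ}
    (hw : ∀ t ∈ Icc (0:ℝ) 1, γ t ≠ w) : ∃ θ : ℝ → ℝ, IsLift γ w θ := by
  set f : ℝ → ℂ := fun t => γ t - w with hf_def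
  have hf : ContinuousOn f (Icc 0 1) := hγ.sub continuousOn_const
  have hfne : ∀ t ∈ Icc (0:ℝ) 1, f t ≠ 0 := fun t ht => sub_ne_zero.2 (hw t ht)
  have habsf : ContinuousOn (fun t => ‖f t‖) (Icc 0 1) :=
    continuous_norm.comp_continuousOn hf
  obtain ⟨t₀, ht₀, hmin⟩ := isCompact_Icc.exists_isMinOn (⟨0, by norm_num⟩ : (Icc (0:ℝ) 1).Nonempty) habsf
  set m : ℝ := ‖f t₀‖ with hm_def
  have hm : 0 < m := by
    have := hfne t₀ ht₀
    simpa [hm_def] using norm_pos_iff.mpr this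
  have huc : UniformContinuousOn f (Icc 0 1) :=
    isCompact_Icc.uniformContinuousOn_of_continuous hf
  obtain ⟨δ, hδ, hδ'⟩ := (Metric.uniformContinuousOn_iff).1 huc m hm
  obtain ⟨n, hn⟩ := exists_nat_one_div_lt hδ
  set N : ℕ := n + 1 with hN_def
  have hNpos : (0:ℝ) < N := by positivity
  have hstep : (1 : ℝ) / N < δ := by exact_mod_cast hn
  have main : ∀ k : ℕ, k ≤ N → ∃ θ : ℝ → ℝ, ContinuousOn θ (Icc 0 ((k:ℝ)/N)) ∧
      ∀ t ∈ Icc (0:ℝ) ((k:ℝ)/N), f t = (‖f t‖ : ℂ) * Complex.exp (θ t * Complex.I) := by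
    intro k hk
    induction k with
    | zero =>
      refine ⟨fun _ => Complex.arg (f 0), continuousOn_const, ?_⟩
      intro t ht
      simp only [Nat.cast_zero, zero_div] at ht
      have : t = 0 := le_antisymm ht.2 ht.1
      subst this
      exact (Complex.norm_mul_exp_arg_mul_I (f 0)).symm
    | succ k ih =>
      obtain ⟨θ, hθc, hθl⟩ := ih (le_of_lt (Nat.lt_of_succ_le hk))
      set a : ℝ := (k:ℝ)/N with ha_def
      set b : ℝ := ((k+1:ℕ):ℝ)/N with hb_def
      have ha0 : 0 ≤ a := by positivity
      have hab : a ≤ b := by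
        rw [ha_def, hb_def]
        gcongr
        push_cast; linarith
      have hb1 : b ≤ 1 := by
        rw [hb_def, div_le_one hNpos]
        exact_mod_cast hk
      have ha1 : a ≤ 1 := le_trans hab hb1
      have hIccsub : Icc a b ⊆ Icc (0:ℝ) 1 := fun s hs => ⟨le_trans ha0 hs.1, le_trans hs.2 hb1⟩
      have hfa : f a ≠ 0 := hfne a ⟨ha0, ha1⟩
      have hratio : ∀ t ∈ Icc a b, ‖f t / f a - 1‖ < 1 := by
        intro t ht
        have hba : b - a = 1 / N := by rw [hb_def, ha_def]; push_cast; field_simp; ring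
        have hdist : dist t a < δ := by
          rw [Real.dist_eq, _root_.abs_of_nonneg (by linarith [ht.1] : (0:ℝ) ≤ t - a)]
          have h1 : t - a ≤ b - a := by linarith [ht.2]
          rw [hba] at h1
          linarith
        have hfd : dist (f t) (f a) < m := hδ' t (hIccsub ht) a ⟨ha0, ha1⟩ hdist
        have heq : f t / f a - 1 = (f t - f a) / f a := by field_simp
        rw [heq, norm_div, div_lt_one (norm_pos_iff.mpr hfa)]
        calc ‖f t - f a‖ < m := by rwa [Complex.dist_eq] at hfd
          _ ≤ ‖f a‖ := hmin ⟨ha0, ha1⟩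
      have hslit : ∀ t ∈ Icc a b, f t / f a ∈ Complex.slitPlane := fun t ht =>
        mem_slitPlane_of_abs_sub_one_lt (hratio t ht)
      refine ⟨fun t => θ (min t a) + Complex.arg (f (max t a) / f a), ?_, ?_⟩
      · show ContinuousOn (fun t => θ (min t a) + Complex.arg (f (max t a) / f a)) (Icc 0 b)
        intro t ht
        have hmaxmem : max t a ∈ Icc a b := ⟨le_max_right _ _, max_le ht.2 hab⟩
        have hminC : ContinuousWithinAt (fun s : ℝ => min s a) (Icc 0 b) t :=
          (continuous_id.min continuous_const).continuousWithinAt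
        have hmaxC : ContinuousWithinAt (fun s : ℝ => max s a) (Icc 0 b) t :=
          (continuous_id.max continuous_const).continuousWithinAt
        have hc1 : ContinuousWithinAt (θ ∘ (fun s : ℝ => min s a)) (Icc 0 b) t :=
          ContinuousWithinAt.comp (hθc (min t a) ⟨le_min ht.1 ha0, min_le_right _ _⟩) hminC
            (fun s hs => ⟨le_min hs.1 ha0, min_le_right _ _⟩)
        have hfc0 : ContinuousWithinAt (f ∘ (fun s : ℝ => max s a)) (Icc 0 b) t :=
          ContinuousWithinAt.comp (hf (max t a) (hIccsub hmaxmem)) hmaxC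
            (fun s hs => hIccsub ⟨le_max_right _ _, max_le hs.2 hab⟩)
        have hfc : ContinuousWithinAt (fun s => f (max s a) / f a) (Icc 0 b) t := by
          exact ContinuousWithinAt.div_const (by simpa [Function.comp_def] using hfc0) _
        have hc2 : ContinuousWithinAt (Complex.arg ∘ (fun s => f (max s a) / f a)) (Icc 0 b) t := by
          apply ContinuousAt.comp_continuousWithinAt ?_ hfc
          exact Complex.continuousAt_arg (hslit _ hmaxmem)
        have := hc1.add hc2
        exact this
      · intro t ht
        show f t = (‖f t‖ : ℂ) *
          Complex.exp ((((θ (min t a) + Complex.arg (f (max t a) / f a) : ℝ)) : ℂ) * Complex.I)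
        rcases le_total t a with hta | hat
        · rw [min_eq_left hta, max_eq_right hta, div_self hfa, Complex.arg_one, add_zero]
          exact hθl t ⟨ht.1, hta⟩
        · rw [min_eq_right hat, max_eq_left hat]
          have htb : t ∈ Icc a b := ⟨hat, ht.2⟩
          have hft := hfne t (hIccsub htb)
          have hρ := div_ne_zero hft hfa
          have e1 : f a = (‖f a‖ : ℂ) * Complex.exp (θ a * Complex.I) :=
            hθl a ⟨ha0, le_refl a⟩
          have habsne_a : (‖f a‖ : ℂ) ≠ 0 := by simpa using norm_ne_zero_iff.mpr hfa
          have habsne_t : (‖f t‖ : ℂ) ≠ 0 := by simpa using norm_ne_zero_iff.mpr hft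
          have eexp : Complex.exp (θ a * Complex.I) = f a / ‖f a‖ := by
            rw [e1]; field_simp; simp [Complex.norm_exp_ofReal_mul_I, hfa]
          have eρ : Complex.exp (Complex.arg (f t / f a) * Complex.I) =
              (f t / f a) / ‖f t / f a‖ := exp_arg_unit hρ
          rw [Complex.ofReal_add, add_mul, Complex.exp_add, eexp, eρ, norm_div]
          push_cast
          field_simp
  obtain ⟨θ, hθc, hθl⟩ := main N (le_refl N)
  have hNN : ((N:ℝ))/N = 1 := div_self (ne_of_gt hNpos)
  rw [hNN] at hθc hθl
  exact ⟨θ, hθc, hθl⟩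

lemma exp_of_lift {γ : ℝ → ℂ} {w : ℂ} {θ : ℝ → ℝ} (hθ : IsLift γ w θ) {t : ℝ}
    (ht : t ∈ Icc (0:ℝ) 1) (hne : γ t ≠ w) :
    Complex.exp (θ t * Complex.I) = (γ t - w) / ‖γ t - w‖ := by
  have h := hθ.2 t ht
  have h0 : (‖γ t - w‖ : ℂ) ≠ 0 := by
    simpa using norm_ne_zero_iff.mpr (sub_ne_zero.2 hne)
  rw [eq_div_iff h0]
  linear_combination -h

lemma lift_increment_unique {γ : ℝ → ℂ} {w : ℂ} (hw : ∀ t ∈ Icc (0:ℝ) 1, γ t ≠ w)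
    {θ θ' : ℝ → ℝ} (h1 : IsLift γ w θ) (h2 : IsLift γ w θ') :
    θ 1 - θ 0 = θ' 1 - θ' 0 := by
  have key : ∀ t ∈ Icc (0:ℝ) 1, ∃ k : ℤ, (fun s => θ s - θ' s) t = 2 * Real.pi * k := by
    intro t ht
    apply eq_two_pi_int_of_exp_eq_one
    have e1 := exp_of_lift h1 ht (hw t ht)
    have e2 := exp_of_lift h2 ht (hw t ht)
    have hX : (γ t - w) / (‖γ t - w‖ : ℂ) ≠ 0 := by
      apply div_ne_zero (sub_ne_zero.2 (hw t ht))
      simpa using norm_ne_zero_iff.mpr (sub_ne_zero.2 (hw t ht))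
    have hsplit : Complex.exp (((θ t - θ' t : ℝ) : ℂ) * Complex.I)
        = Complex.exp (θ t * Complex.I) / Complex.exp (θ' t * Complex.I) := by
      rw [← Complex.exp_sub]
      push_cast
      ring_nf
    show Complex.exp (((θ t - θ' t : ℝ) : ℂ) * Complex.I) = 1
    rw [hsplit, e1, e2, div_self hX]
  have hcont : ContinuousOn (fun s => θ s - θ' s) (Icc 0 1) := h1.1.sub h2.1
  have := eq_of_int_valued hcont key
  linarith

lemma isLift_shift {γ : ℝ → ℂ} {w w' : ℂ} {θ : ℝ → ℝ} (hγ : ContinuousOn γ (Icc 0 1))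
    (hθ : IsLift γ w θ) (hlt : ∀ t ∈ Icc (0:ℝ) 1, dist w' w < dist (γ t) w) :
    IsLift γ w' (fun t => θ t + Complex.arg ((γ t - w') / (γ t - w))) := by
  have hne : ∀ t ∈ Icc (0:ℝ) 1, γ t ≠ w := by
    intro t ht h
    have h1 := hlt t ht
    have h2 : dist (γ t) w = 0 := by rw [h]; simp
    linarith [dist_nonneg (x := w') (y := w)]
  have hne' : ∀ t ∈ Icc (0:ℝ) 1, γ t ≠ w' := by
    intro t ht h
    have h1 := hlt t ht
    have h2 : dist (γ t) w = dist w' w := by rw [h]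
    linarith
  have hsub : ∀ t ∈ Icc (0:ℝ) 1,
      (γ t - w') / (γ t - w) - 1 = (w - w') / (γ t - w) := by
    intro t ht
    have := sub_ne_zero.2 (hne t ht)
    field_simp
    ring
  have hball : ∀ t ∈ Icc (0:ℝ) 1,
      ‖(γ t - w') / (γ t - w) - 1‖ < 1 := by
    intro t ht
    rw [hsub t ht, norm_div, div_lt_one (norm_pos_iff.mpr (sub_ne_zero.2 (hne t ht)))]
    have h1 : ‖w - w'‖ = dist w' w := by
      rw [Complex.dist_eq, ← norm_neg]
      congr 1
      ring
    have h2 : ‖γ t - w‖ = dist (γ t) w := (Complex.dist_eq _ _).symm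
    rw [h1, h2]
    exact hlt t ht
  have hslit : ∀ t ∈ Icc (0:ℝ) 1, (γ t - w') / (γ t - w) ∈ Complex.slitPlane :=
    fun t ht => mem_slitPlane_of_abs_sub_one_lt (hball t ht)
  constructor
  · intro t ht
    have hρc : ContinuousWithinAt (fun s => (γ s - w') / (γ s - w)) (Icc 0 1) t := by
      apply ContinuousWithinAt.div ((hγ t ht).sub continuousWithinAt_const)
        ((hγ t ht).sub continuousWithinAt_const)
      exact sub_ne_zero.2 (hne t ht)
    have hargc : ContinuousWithinAt (Complex.arg ∘ (fun s => (γ s - w') / (γ s - w)))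
        (Icc 0 1) t := by
      apply ContinuousAt.comp_continuousWithinAt ?_ hρc
      exact Complex.continuousAt_arg (hslit t ht)
    have := ((hθ.1 t ht).add hargc)
    exact this
  · intro t ht
    have hρne : (γ t - w') / (γ t - w) ≠ 0 :=
      div_ne_zero (sub_ne_zero.2 (hne' t ht)) (sub_ne_zero.2 (hne t ht))
    have e1 := exp_of_lift hθ ht (hne t ht)
    have e2 := exp_arg_unit hρne
    show γ t - w' = (‖γ t - w'‖ : ℂ) *
      Complex.exp (((θ t + Complex.arg ((γ t - w') / (γ t - w)) : ℝ) : ℂ) * Complex.I)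
    rw [Complex.ofReal_add, add_mul, Complex.exp_add, e1, e2, norm_div]
    have ha : (‖γ t - w‖ : ℂ) ≠ 0 := by
      simpa using norm_ne_zero_iff.mpr (sub_ne_zero.2 (hne t ht))
    have hb : (‖γ t - w'‖ : ℂ) ≠ 0 := by
      simpa using norm_ne_zero_iff.mpr (sub_ne_zero.2 (hne' t ht))
    have hc : γ t - w ≠ 0 := sub_ne_zero.2 (hne t ht)
    push_cast
    field_simp

lemma lift_increment_eq {γ : ℝ → ℂ} {w : ℂ} {R : ℝ} (hγ : ContinuousOn γ (Icc 0 1))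
    (hconf : ∀ t ∈ Icc (0:ℝ) 1, dist (γ t) (γ 0) ≤ R) (hR : R < dist (γ 0) w)
    {θ : ℝ → ℝ} (hθ : IsLift γ w θ) :
    θ 1 - θ 0 = Complex.arg ((γ 1 - w) / (γ 0 - w)) := by
  have h0mem : (0:ℝ) ∈ Icc (0:ℝ) 1 := by norm_num
  have h1mem : (1:ℝ) ∈ Icc (0:ℝ) 1 := by norm_num
  have hR0 : 0 ≤ R := le_trans dist_nonneg (hconf 0 h0mem)
  have hw0 : γ 0 ≠ w := by
    intro h
    rw [h] at hR
    simp at hR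
    linarith
  have hw0' : γ 0 - w ≠ 0 := sub_ne_zero.2 hw0
  have hwt : ∀ t ∈ Icc (0:ℝ) 1, γ t ≠ w := by
    intro t ht h
    have h1 := hconf t ht
    have h2 : dist (γ 0) w = dist (γ t) (γ 0) := by rw [h, dist_comm]
    linarith
  have hslit : ∀ t ∈ Icc (0:ℝ) 1, (γ t - w) / (γ 0 - w) ∈ Complex.slitPlane := by
    intro t ht
    by_contra hcon
    rw [Complex.mem_slitPlane_iff] at hcon
    push_neg at hcon
    obtain ⟨hre, him⟩ := hcon
    set ζ := (γ t - w) / (γ 0 - w) with hζdef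
    have hζ : ζ = ((ζ.re : ℝ) : ℂ) := by
      apply Complex.ext
      · simp
      · simpa using him
    have hmul : γ t - w = ζ * (γ 0 - w) := by
      rw [hζdef]; field_simp
    have hdist : dist (γ t) (γ 0) = ‖ζ - 1‖ * ‖γ 0 - w‖ := by
      rw [Complex.dist_eq, ← norm_mul]
      congr 1
      rw [sub_mul, one_mul, ← hmul]
      ring
    have habs1 : ‖ζ - 1‖ = |ζ.re - 1| := by
      rw [hζ]
      rw [show ((ζ.re : ℝ) : ℂ) - 1 = ((ζ.re - 1 : ℝ) : ℂ) by push_cast; ring]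
      exact Complex.norm_real _
    have hge : (1:ℝ) ≤ |ζ.re - 1| := by
      rw [abs_of_nonpos (by linarith)]
      linarith
    have hd0 : ‖γ 0 - w‖ = dist (γ 0) w := (Complex.dist_eq _ _).symm
    have : dist (γ 0) w ≤ dist (γ t) (γ 0) := by
      rw [hdist, habs1, hd0]
      nlinarith [dist_nonneg (x := γ 0) (y := w)]
    linarith [hconf t ht]
  set h : ℝ → ℝ := fun t => θ t - θ 0 - Complex.arg ((γ t - w) / (γ 0 - w)) with hh_def
  have hcont : ContinuousOn h (Icc 0 1) := by
    apply ContinuousOn.sub (hθ.1.sub continuousOn_const)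
    intro t ht
    have hρc : ContinuousWithinAt (fun s => (γ s - w) / (γ 0 - w)) (Icc 0 1) t :=
      ((hγ t ht).sub continuousWithinAt_const).div_const _
    have : ContinuousWithinAt (Complex.arg ∘ (fun s => (γ s - w) / (γ 0 - w))) (Icc 0 1) t := by
      apply ContinuousAt.comp_continuousWithinAt ?_ hρc
      exact Complex.continuousAt_arg (hslit t ht)
    simpa [Function.comp_def] using this
  have hval : ∀ t ∈ Icc (0:ℝ) 1, ∃ k : ℤ, h t = 2 * Real.pi * k := by
    intro t ht
    apply eq_two_pi_int_of_exp_eq_one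
    have hρne : (γ t - w) / (γ 0 - w) ≠ 0 :=
      div_ne_zero (sub_ne_zero.2 (hwt t ht)) hw0'
    have e1 := exp_of_lift hθ ht (hwt t ht)
    have e0 := exp_of_lift hθ h0mem hw0
    have e2 := exp_arg_unit hρne
    have hsplit : Complex.exp ((h t : ℂ) * Complex.I)
        = Complex.exp (θ t * Complex.I) / Complex.exp (θ 0 * Complex.I) /
          Complex.exp (Complex.arg ((γ t - w) / (γ 0 - w)) * Complex.I) := by
      rw [← Complex.exp_sub, ← Complex.exp_sub]
      rw [hh_def]
      push_cast
      ring_nf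
    rw [hsplit, e1, e0, e2, norm_div]
    have ha : (‖γ t - w‖ : ℂ) ≠ 0 := by
      simpa using norm_ne_zero_iff.mpr (sub_ne_zero.2 (hwt t ht))
    have hb : (‖γ 0 - w‖ : ℂ) ≠ 0 := by
      simpa using norm_ne_zero_iff.mpr hw0'
    have hd : γ t - w ≠ 0 := sub_ne_zero.2 (hwt t ht)
    push_cast
    field_simp
  have hend := eq_of_int_valued hcont hval
  have hzero : h 0 = 0 := by
    rw [hh_def]
    simp only [sub_self]
    rw [div_self hw0', Complex.arg_one]
    ring
  rw [hzero] at hend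
  rw [hh_def] at hend
  simp only at hend
  linarith

end MRAux

namespace MRAux
open Complex

lemma exists_not_mem_near {E : Set ℂ} (hE : MetricallyRemovable E) (x : ℂ) {ρ : ℝ}
    (hρ : 0 < ρ) : ∃ p : ℂ, dist p x < ρ ∧ p ∉ E := by
  by_contra hcon
  push_neg at hcon
  obtain ⟨γ, hc, h0, h1, hav, _⟩ := hE 1 one_pos x (x + ((ρ/2 : ℝ) : ℂ))
  set b : ℂ := x + ((ρ/2 : ℝ) : ℂ) with hb
  have hdistb : dist b x = ρ/2 := by
    rw [Complex.dist_eq, hb]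
    have : x + ((ρ/2 : ℝ) : ℂ) - x = ((ρ/2 : ℝ) : ℂ) := by ring
    rw [this, Complex.norm_real, Real.norm_eq_abs, abs_of_pos (by positivity)]
  have hg : ContinuousOn (fun t => dist (γ t) x) (Icc 0 1) := by
    simp only [Complex.dist_eq]
    exact continuous_norm.comp_continuousOn (hc.sub continuousOn_const)
  have hival := intermediate_value_Icc (by norm_num : (0:ℝ) ≤ 1) hg
  have hmem : ρ/4 ∈ Icc (dist (γ 0) x) (dist (γ 1) x) := by
    rw [h0, h1, dist_self, hdistb]
    constructor <;> linarith
  obtain ⟨t, ht, hdt⟩ := hival hmem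
  have hdt' : dist (γ t) x = ρ/4 := hdt
  have hPE : γ t ∈ E := hcon (γ t) (by rw [hdt']; linarith)
  have hmem2 : γ t ∈ ({x, b} : Set ℂ) := by
    by_contra hne
    exact hav t ht ⟨hPE, hne⟩
  rcases hmem2 with h | h
  · rw [h, dist_self] at hdt'; linarith
  · rw [mem_singleton_iff] at h
    rw [h, hdistb] at hdt'; linarith

lemma eVariationOn_comp_isometry {X Y : Type*} [PseudoEMetricSpace X] [PseudoEMetricSpace Y]
    {g : X → Y} (hg : Isometry g) (f : ℝ → X) (s : Set ℝ) :
    eVariationOn (g ∘ f) s = eVariationOn f s := by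
  apply iSup_congr
  intro p
  apply Finset.sum_congr rfl
  intro i _
  exact hg.edist_eq _ _

theorem key {E : Set ℂ} (hE : MetricallyRemovable E) : IsTotallyDisconnected E := by
  classical
  intro K hKE hKc x hx y hy
  by_contra hxy
  set d : ℝ := dist x y with hd_def
  have hd : 0 < d := dist_pos.2 hxy
  set r : ℝ := d/4 with hr_def
  set η : ℝ := d/100 with hη_def
  have hη : 0 < η := by rw [hη_def]; positivity
  have hr : 0 < r := by rw [hr_def]; positivity
  -- the eighth root of unity
  set ω : ℂ := ((Real.sqrt 2 / 2 : ℝ) : ℂ) + ((Real.sqrt 2 / 2 : ℝ) : ℂ) * Complex.I with hω_def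
  have hs2 : Real.sqrt 2 ^ 2 = 2 := Real.sq_sqrt (by norm_num)
  have hs2a : (1.41:ℝ) ≤ Real.sqrt 2 := by nlinarith [Real.sqrt_nonneg 2]
  have hωre : ω.re = Real.sqrt 2 / 2 := by simp [hω_def]
  have hωim : ω.im = Real.sqrt 2 / 2 := by simp [hω_def]
  have hnormSqω : Complex.normSq ω = 1 := by
    rw [Complex.normSq_apply, hωre, hωim]; nlinarith
  have habsω : ‖ω‖ = 1 := by
    nlinarith [norm_nonneg ω, Complex.sq_norm ω]
  have habsωp : ∀ i : ℕ, ‖ω ^ i‖ = 1 := by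
    intro i; rw [norm_pow, habsω, one_pow]
  have hnormSqωp : ∀ i : ℕ, Complex.normSq (ω ^ i) = 1 := by
    intro i
    have := Complex.sq_norm (ω ^ i)
    rw [habsωp] at this
    nlinarith
  have ha2 : ((Real.sqrt 2 / 2 : ℝ) : ℂ) ^ 2 = 1 / 2 := by
    rw [← Complex.ofReal_pow]
    have : (Real.sqrt 2 / 2) ^ 2 = (1/2 : ℝ) := by rw [div_pow, hs2]; norm_num
    rw [this]
    norm_num
  have hω2 : ω ^ 2 = Complex.I := by
    rw [hω_def]
    linear_combination (1 + 2*Complex.I + Complex.I^2) * ha2 + (1/2 : ℂ) * Complex.I_sq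
  have hω8 : ω ^ 8 = 1 := by
    rw [show (8:ℕ) = 2*4 from rfl, pow_mul, hω2,
      show (4:ℕ) = 2*2 from rfl, pow_mul, Complex.I_sq]
    norm_num
  have hconj : ∀ i : ℕ, (starRingEnd ℂ) (ω ^ i) * ω ^ (i+1) = ω := by
    intro i
    calc (starRingEnd ℂ) (ω ^ i) * ω ^ (i+1)
        = (ω ^ i * (starRingEnd ℂ) (ω ^ i)) * ω := by rw [pow_succ]; ring
      _ = ((Complex.normSq (ω ^ i) : ℝ) : ℂ) * ω := by rw [Complex.mul_conj]
      _ = ω := by rw [hnormSqωp]; norm_num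
  have hω1 : ‖ω - 1‖ ≤ 78/100 := by
    have hre1 : (ω - 1).re = Real.sqrt 2/2 - 1 := by simp [hω_def]
    have him1 : (ω - 1).im = Real.sqrt 2/2 := by simp [hω_def]
    have hns : Complex.normSq (ω - 1) = 2 - Real.sqrt 2 := by
      rw [Complex.normSq_apply, hre1, him1]; nlinarith
    nlinarith [Complex.sq_norm (ω - 1), norm_nonneg (ω - 1)]
  -- the octagon vertices
  set c : ℕ → ℂ := fun i => x + (r:ℂ) * ω^i with hc_def
  have hc8 : c 8 = c 0 := by simp [hc_def, hω8]
  have hcx : ∀ i, dist (c i) x = r := by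
    intro i
    rw [Complex.dist_eq, hc_def]
    have : x + (r:ℂ) * ω^i - x = (r:ℂ) * ω^i := by ring
    rw [this, norm_mul, Complex.norm_real, Real.norm_eq_abs, habsωp, abs_of_pos hr, mul_one]
  have hcc : ∀ i, dist (c i) (c (i+1)) ≤ (78/100) * r := by
    intro i
    rw [Complex.dist_eq, hc_def]
    have h1 : x + (r:ℂ) * ω^i - (x + (r:ℂ) * ω^(i+1)) = (r:ℂ) * ω^i * (1 - ω) := by
      rw [pow_succ]; ring
    rw [h1, norm_mul, norm_mul, Complex.norm_real, Real.norm_eq_abs, habsωp, abs_of_pos hr, mul_one]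
    have h2 : ‖1 - ω‖ = ‖ω - 1‖ := by
      rw [show (1:ℂ) - ω = -(ω - 1) by ring, norm_neg]
    rw [h2]
    calc r * ‖ω - 1‖ ≤ r * (78/100) := by
          apply mul_le_mul_of_nonneg_left hω1 hr.le
      _ = (78/100) * r := by ring
  -- pick the fence posts outside E
  have hpick : ∀ i : ℕ, ∃ p : ℂ, dist p (c i) < η ∧ p ∉ E :=
    fun i => exists_not_mem_near hE (c i) hη
  choose q hq1 hq2 using hpick
  set p : ℕ → ℂ := fun i => q (i % 8) with hp_def
  have hp8 : p 8 = p 0 := by simp [hp_def]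
  have hpE : ∀ i, p i ∉ E := fun i => hq2 _
  have hpc : ∀ i ≤ 8, dist (p i) (c i) < η := by
    intro i hi
    rcases eq_or_lt_of_le hi with h | h
    · subst h
      show dist (p 8) (c 8) < η
      rw [hc8]
      simpa [hp_def] using hq1 0
    · have : i % 8 = i := Nat.mod_eq_of_lt h
      simp only [hp_def, this]
      exact hq1 i
  -- the fence curves
  have hcurv : ∀ i : ℕ, ∃ γ : ℝ → ℂ, ContinuousOn γ (Icc 0 1) ∧ γ 0 = p i ∧ γ 1 = p (i+1) ∧
      (∀ t ∈ Icc (0:ℝ) 1, γ t ∉ E \ {p i, p (i+1)}) ∧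
      eVariationOn γ (Icc 0 1) ≤ ENNReal.ofReal (dist (p i) (p (i+1)) + η) :=
    fun i => hE η hη (p i) (p (i+1))
  choose γ hγc hγ0 hγ1 hγav hγlen using hcurv
  have hγE : ∀ i, ∀ t ∈ Icc (0:ℝ) 1, γ i t ∉ E := by
    intro i t ht hmem
    apply hγav i t ht
    refine ⟨hmem, ?_⟩
    intro hcontra
    rcases hcontra with h | h
    · rw [show γ i t = p i from h] at hmem; exact hpE i hmem
    · rw [show γ i t = p (i+1) from h] at hmem; exact hpE (i+1) hmem
  -- confinement of the curves
  have hRconf : ∀ i, ∀ t ∈ Icc (0:ℝ) 1, dist (γ i t) (γ i 0) ≤ dist (p i) (p (i+1)) + η := by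
    intro i t ht
    have h1 := eVariationOn.edist_le (γ i) ht (by norm_num : (0:ℝ) ∈ Icc (0:ℝ) 1)
    have h2 := le_trans h1 (hγlen i)
    rw [edist_dist] at h2
    exact (ENNReal.ofReal_le_ofReal_iff (by positivity)).1 h2
  have hpp : ∀ i < 8, dist (p i) (p (i+1)) ≤ (78/100)*r + 2*η := by
    intro i hi
    calc dist (p i) (p (i+1))
        ≤ dist (p i) (c i) + dist (c i) (c (i+1)) + dist (c (i+1)) (p (i+1)) :=
          dist_triangle4 _ _ _ _
      _ ≤ η + (78/100)*r + η := by
          have h1 := hpc i (by omega)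
          have h2 := hpc (i+1) (by omega)
          rw [dist_comm (c (i+1))] at *
          linarith [hcc i]
      _ = (78/100)*r + 2*η := by ring
  set R : ℝ := (78/100)*r + 3*η with hR_def
  have hconfR : ∀ i < 8, ∀ t ∈ Icc (0:ℝ) 1, dist (γ i t) (γ i 0) ≤ R := by
    intro i hi t ht
    calc dist (γ i t) (γ i 0) ≤ dist (p i) (p (i+1)) + η := hRconf i t ht
      _ ≤ ((78/100)*r + 2*η) + η := by linarith [hpp i hi]
      _ = R := by rw [hR_def]; ring
  have hpx : ∀ i ≤ 8, r - η ≤ dist (p i) x := by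
    intro i hi
    have h1 := hpc i hi
    have h2 : dist (c i) x ≤ dist (c i) (p i) + dist (p i) x := dist_triangle _ _ _
    rw [hcx i, dist_comm (c i)] at h2
    linarith
  have hpy : ∀ i ≤ 8, d - r - η ≤ dist (p i) y := by
    intro i hi
    have h1 := hpc i hi
    have h2 : dist x y ≤ dist x (c i) + dist (c i) (p i) + dist (p i) y := dist_triangle4 _ _ _ _
    rw [dist_comm x (c i), hcx i, ← hd_def, dist_comm (c i) (p i)] at h2
    linarith
  have hnum : R < r - η ∧ R < d - r - η := by
    rw [hR_def, hr_def, hη_def]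
    constructor <;> linarith
  have hRlt_x : ∀ i < 8, R < dist (γ i 0) x := by
    intro i hi
    rw [hγ0 i]
    linarith [hpx i (by omega), hnum.1]
  have hRlt_y : ∀ i < 8, R < dist (γ i 0) y := by
    intro i hi
    rw [hγ0 i]
    linarith [hpy i (by omega), hnum.2]
  -- the fence as a compact set
  set F : Set ℂ := ⋃ i : Fin 8, γ (i : ℕ) '' (Icc 0 1) with hF_def
  have hFcpt : IsCompact F :=
    isCompact_iUnion (fun i => isCompact_Icc.image_of_continuousOn (hγc i))
  have hFclosed : IsClosed F := hFcpt.isClosed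
  have hFE : ∀ w ∈ F, w ∉ E := by
    intro w hw
    obtain ⟨i, t, ht, rfl⟩ := by simpa [hF_def] using hw
    exact hγE i t ht
  have hFne : F.Nonempty := by
    refine ⟨p 0, ?_⟩
    rw [hF_def]
    exact mem_iUnion.2 ⟨⟨0, by norm_num⟩, ⟨0, by norm_num, hγ0 0⟩⟩
  have hKF : ∀ w ∈ K, w ∉ F := fun w hw hwF => hFE w hwF (hKE hw)
  have hwne : ∀ w, w ∉ F → ∀ i, i < 8 → ∀ t ∈ Icc (0:ℝ) 1, γ i t ≠ w := by
    intro w hw i hi t ht h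
    apply hw
    rw [hF_def]
    exact mem_iUnion.2 ⟨⟨i, hi⟩, ⟨t, ht, h⟩⟩
  -- the winding number
  set P : ℂ → ℝ → Prop := fun w v => ∃ Θ : ℕ → ℝ → ℝ, (∀ i, i < 8 → IsLift (γ i) w (Θ i)) ∧
      v = ∑ i ∈ Finset.range 8, (Θ i 1 - Θ i 0) with hP_def
  have hPex : ∀ w ∉ F, ∃ v, P w v := by
    intro w hw
    have hlift : ∀ i : ℕ, i < 8 → ∃ θ, IsLift (γ i) w θ := fun i hi =>
      exists_lift (hγc i) (hwne w hw i hi)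
    refine ⟨_, fun i => if h : i < 8 then (hlift i h).choose else fun _ => 0, ?_, rfl⟩
    intro i hi
    simp only [dif_pos hi]
    exact (hlift i hi).choose_spec
  have hPuniq : ∀ w ∉ F, ∀ v v', P w v → P w v' → v = v' := by
    rintro w hw v v' ⟨Θ, hΘ, hv⟩ ⟨Θ', hΘ', hv'⟩
    rw [hv, hv']
    apply Finset.sum_congr rfl
    intro i hi
    have hi' := Finset.mem_range.1 hi
    exact lift_increment_unique (hwne w hw i hi') (hΘ i hi') (hΘ' i hi')
  set n : ℂ → ℝ := fun w => if h : ∃ v, P w v then h.choose else 0 with hn_def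
  have hnP : ∀ w ∉ F, P w (n w) := by
    intro w hw
    have h := hPex w hw
    simp only [hn_def]
    rw [dif_pos h]
    exact h.choose_spec
  have hnval : ∀ w ∉ F, ∀ v, P w v → n w = v := fun w hw v hv =>
    hPuniq w hw _ _ (hnP w hw) hv
  -- locality of the winding number
  have hloc : ∀ w, w ∉ F → ∀ w', dist w' w < Metric.infDist w F → (w' ∉ F ∧ n w' = n w) := by
    intro w hw w' hw'
    have hdW : ∀ i, i < 8 → ∀ t ∈ Icc (0:ℝ) 1, dist w' w < dist (γ i t) w := by
      intro i hi t ht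
      calc dist w' w < Metric.infDist w F := hw'
        _ ≤ dist w (γ i t) := Metric.infDist_le_dist_of_mem
            (by rw [hF_def]; exact mem_iUnion.2 ⟨⟨i, hi⟩, ⟨t, ht, rfl⟩⟩)
        _ = dist (γ i t) w := dist_comm _ _
    have hw'F : w' ∉ F := by
      intro hmem
      have h2 : Metric.infDist w F ≤ dist w w' := Metric.infDist_le_dist_of_mem hmem
      rw [dist_comm w w'] at h2
      linarith
    obtain ⟨Θ, hΘ, hv⟩ := hnP w hw
    set g : ℂ → ℝ := fun z => Complex.arg ((z - w') / (z - w)) with hg_def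
    have hPw' : P w' (∑ i ∈ Finset.range 8, ((fun t => Θ i t + g (γ i t)) 1 -
        (fun t => Θ i t + g (γ i t)) 0)) := by
      refine ⟨fun i => fun t => Θ i t + g (γ i t), ?_, rfl⟩
      intro i hi
      exact isLift_shift (hγc i) (hΘ i hi) (hdW i hi)
    have hsum : ∑ i ∈ Finset.range 8, ((fun t => Θ i t + g (γ i t)) 1 -
        (fun t => Θ i t + g (γ i t)) 0)
        = (∑ i ∈ Finset.range 8, (Θ i 1 - Θ i 0)) +
          ∑ i ∈ Finset.range 8, (g (p (i+1)) - g (p i)) := by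
      rw [← Finset.sum_add_distrib]
      apply Finset.sum_congr rfl
      intro i _
      simp only
      rw [hγ0 i, hγ1 i]
      ring
    have htel : ∑ i ∈ Finset.range 8, (g (p (i+1)) - g (p i)) = g (p 8) - g (p 0) :=
      Finset.sum_range_sub (fun i => g (p i)) 8
    refine ⟨hw'F, ?_⟩
    have hval' := hnval w' hw'F _ hPw'
    rw [hval', hsum, htel, hp8, hv]
    ring
  -- the winding number is constant on K
  have hcon : n y = n x := by
    by_contra hne
    set U : Set ℂ := ⋃ w ∈ {w : ℂ | w ∉ F ∧ n w = n x}, Metric.ball w (Metric.infDist w F)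
      with hU_def
    set V : Set ℂ := ⋃ w ∈ {w : ℂ | w ∉ F ∧ n w ≠ n x}, Metric.ball w (Metric.infDist w F)
      with hV_def
    have hUopen : IsOpen U := isOpen_biUnion (fun _ _ => Metric.isOpen_ball)
    have hVopen : IsOpen V := isOpen_biUnion (fun _ _ => Metric.isOpen_ball)
    have hball_prop : ∀ w, w ∉ F → ∀ w', w' ∈ Metric.ball w (Metric.infDist w F) →
        w' ∉ F ∧ n w' = n w := by
      intro w hw w' hmem
      exact hloc w hw w' (by rwa [Metric.mem_ball] at hmem)
    have hUV : ∀ z, z ∈ U → z ∈ V → False := by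
      intro z hzU hzV
      obtain ⟨w1, hw1, hz1⟩ := mem_iUnion₂.1 hzU
      obtain ⟨w2, hw2, hz2⟩ := mem_iUnion₂.1 hzV
      have e1 := (hball_prop w1 hw1.1 z hz1).2
      have e2 := (hball_prop w2 hw2.1 z hz2).2
      apply hw2.2
      rw [← e2, e1, hw1.2]
    have hself : ∀ w, w ∉ F → w ∈ Metric.ball w (Metric.infDist w F) := by
      intro w hwF
      rw [Metric.mem_ball, dist_self]
      exact (hFclosed.notMem_iff_infDist_pos hFne).1 hwF
    have hcover : K ⊆ U ∪ V := by
      intro w hw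
      have hwF := hKF w hw
      by_cases hnw : n w = n x
      · exact Or.inl (mem_iUnion₂.2 ⟨w, ⟨hwF, hnw⟩, hself w hwF⟩)
      · exact Or.inr (mem_iUnion₂.2 ⟨w, ⟨hwF, hnw⟩, hself w hwF⟩)
    have hxU : x ∈ U := mem_iUnion₂.2 ⟨x, ⟨hKF x hx, rfl⟩, hself x (hKF x hx)⟩
    have hyV : y ∈ V := mem_iUnion₂.2 ⟨y, ⟨hKF y hy, hne⟩, hself y (hKF y hy)⟩
    obtain ⟨z, hzK, hzUV⟩ := hKc U V hUopen hVopen hcover ⟨x, hx, hxU⟩ ⟨y, hy, hyV⟩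
    exact hUV z hzUV.1 hzUV.2
  -- the winding number is positive at x
  have hnx : 0 < n x := by
    have hxF := hKF x hx
    obtain ⟨Θ, hΘ, hv⟩ := hnP x hxF
    rw [hv]
    apply Finset.sum_pos ?_ ⟨0, Finset.mem_range.2 (by norm_num)⟩
    intro i hi
    have hi' := Finset.mem_range.1 hi
    have hinc := lift_increment_eq (hγc i) (hconfR i hi') (hRlt_x i hi') (hΘ i hi')
    rw [hγ1 i, hγ0 i] at hinc
    rw [hinc]
    set u : ℂ := p (i+1) - x with hu_def
    set v : ℂ := p i - x with hv_def
    have hvabs : r - η ≤ ‖v‖ := by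
      rw [hv_def, ← Complex.dist_eq]
      exact hpx i (by omega)
    have hvne : v ≠ 0 := by
      intro h
      rw [h] at hvabs
      simp at hvabs
      rw [hr_def, hη_def] at hvabs
      linarith
    have hNpos : 0 < Complex.normSq v := Complex.normSq_pos.2 hvne
    set e : ℂ := p i - c i with he_def
    set e' : ℂ := p (i+1) - c (i+1) with he'_def
    have habse : ‖e‖ ≤ η := by
      rw [he_def, ← Complex.dist_eq]
      exact (hpc i (by omega)).le
    have habse' : ‖e'‖ ≤ η := by
      rw [he'_def, ← Complex.dist_eq]
      exact (hpc (i+1) (by omega)).le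
    have hu : u = (r:ℂ) * ω^(i+1) + e' := by
      rw [hu_def, he'_def, hc_def]; ring
    have hv2 : v = (r:ℂ) * ω^i + e := by
      rw [hv_def, he_def, hc_def]; ring
    have hexp : u * (starRingEnd ℂ) v =
        ((r:ℂ) * (r:ℂ)) * (ω^(i+1) * (starRingEnd ℂ) (ω^i)) +
        (r:ℂ) * (ω^(i+1) * (starRingEnd ℂ) e) +
        (r:ℂ) * (e' * (starRingEnd ℂ) (ω^i)) + e' * (starRingEnd ℂ) e := by
      rw [hu, hv2, map_add, map_mul, Complex.conj_ofReal]
      ring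
    have himA : (ω^(i+1) * (starRingEnd ℂ) (ω^i)).im = Real.sqrt 2 / 2 := by
      rw [mul_comm, hconj i, hωim]
    have himB : |(ω^(i+1) * (starRingEnd ℂ) e).im| ≤ η := by
      calc |(ω^(i+1) * (starRingEnd ℂ) e).im| ≤ ‖ω^(i+1) * (starRingEnd ℂ) e‖ :=
            Complex.abs_im_le_norm _
        _ = ‖e‖ := by rw [norm_mul, habsωp, Complex.norm_conj, one_mul]
        _ ≤ η := habse
    have himC : |(e' * (starRingEnd ℂ) (ω^i)).im| ≤ η := by
      calc |(e' * (starRingEnd ℂ) (ω^i)).im| ≤ ‖e' * (starRingEnd ℂ) (ω^i)‖ :=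
            Complex.abs_im_le_norm _
        _ = ‖e'‖ := by rw [norm_mul, Complex.norm_conj, habsωp, mul_one]
        _ ≤ η := habse'
    have himD : |(e' * (starRingEnd ℂ) e).im| ≤ η * η := by
      calc |(e' * (starRingEnd ℂ) e).im| ≤ ‖e' * (starRingEnd ℂ) e‖ :=
            Complex.abs_im_le_norm _
        _ = ‖e'‖ * ‖e‖ := by rw [norm_mul, Complex.norm_conj]
        _ ≤ η * η := by
            apply mul_le_mul habse' habse (norm_nonneg _) hη.le
    have hcross : 0 < (u * (starRingEnd ℂ) v).im := by
      have hrr : ((r:ℂ) * (r:ℂ)) = ((r*r : ℝ) : ℂ) := by push_cast; ring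
      have t1 : (((r:ℂ) * (r:ℂ)) * (ω^(i+1) * (starRingEnd ℂ) (ω^i))).im
          = (r*r) * (ω^(i+1) * (starRingEnd ℂ) (ω^i)).im := by
        rw [hrr, Complex.im_ofReal_mul]
      have t2 : ∀ Z : ℂ, ((r:ℂ) * Z).im = r * Z.im := fun Z => Complex.im_ofReal_mul r Z
      rw [hexp, Complex.add_im, Complex.add_im, Complex.add_im, t1, t2, t2, himA]
      have hB := abs_le.1 himB
      have hC := abs_le.1 himC
      have hD := abs_le.1 himD
      have hrd : r = d/4 := hr_def
      have hηd : η = d/100 := hη_def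
      nlinarith [hB.1, hC.1, hD.1, hs2a, hd, mul_pos hd hd]
    have him : 0 < (u / v).im := by
      have hdiv : u / v = (u * (starRingEnd ℂ) v) * (((Complex.normSq v)⁻¹ : ℝ) : ℂ) := by
        rw [div_eq_mul_inv, Complex.inv_def]
        ring
      rw [hdiv, mul_comm, Complex.im_ofReal_mul]
      exact mul_pos (inv_pos.2 hNpos) hcross
    have harg_nonneg : 0 ≤ Complex.arg (u/v) := Complex.arg_nonneg_iff.2 him.le
    have harg_ne : Complex.arg (u/v) ≠ 0 := by
      intro h
      have := (Complex.arg_eq_zero_iff.1 h).2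
      linarith
    exact lt_of_le_of_ne harg_nonneg (Ne.symm harg_ne)
  -- the winding number vanishes at y
  have hny : n y = 0 := by
    have hyF := hKF y hy
    obtain ⟨Θ, hΘ, hv⟩ := hnP y hyF
    set ρ : ℕ → ℂ := fun i => (p (i+1) - y) / (p i - y) with hρ_def
    have hpygap : ∀ i ≤ 8, d - r - η ≤ ‖p i - y‖ := by
      intro i hi
      rw [← Complex.dist_eq]
      exact hpy i hi
    have hgap_pos : (0:ℝ) < d - r - η := by
      rw [hr_def, hη_def]; linarith
    have hpyne : ∀ i ≤ 8, p i - y ≠ 0 := by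
      intro i hi h
      have := hpygap i hi
      rw [h] at this
      simp at this
      linarith
    have hinc : ∀ i, i < 8 → Θ i 1 - Θ i 0 = Complex.arg (ρ i) := by
      intro i hi
      have h := lift_increment_eq (hγc i) (hconfR i hi) (hRlt_y i hi) (hΘ i hi)
      rw [hγ1 i, hγ0 i] at h
      exact h
    have hρsub : ∀ i, i < 8 → ρ i - 1 = (p (i+1) - p i) / (p i - y) := by
      intro i hi
      rw [hρ_def]
      have := hpyne i (by omega)
      field_simp
      ring
    have hρ1 : ∀ i, i < 8 → ‖ρ i - 1‖ ≤ 3/10 := by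
      intro i hi
      rw [hρsub i hi, norm_div]
      have hnum : ‖p (i+1) - p i‖ ≤ (78/100)*r + 2*η := by
        rw [← Complex.dist_eq, dist_comm]
        exact hpp i hi
      have hden := hpygap i (by omega)
      rw [div_le_iff₀ (by linarith)]
      rw [hr_def, hη_def] at *
      linarith
    have hρre : ∀ i, i < 8 → (0:ℝ) ≤ (ρ i).re := by
      intro i hi
      have := re_pos_of_abs_sub_one_lt (lt_of_le_of_lt (hρ1 i hi) (by norm_num))
      linarith
    have hρim : ∀ i, i < 8 → |(ρ i).im| ≤ 3/10 := by
      intro i hi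
      have h1 : |(ρ i - 1).im| ≤ ‖ρ i - 1‖ := Complex.abs_im_le_norm _
      have h2 : (ρ i - 1).im = (ρ i).im := by simp
      rw [h2] at h1
      linarith [hρ1 i hi]
    have hρre7 : ∀ i, i < 8 → (7:ℝ)/10 ≤ (ρ i).re := by
      intro i hi
      have h1 : |(ρ i - 1).re| ≤ ‖ρ i - 1‖ := Complex.abs_re_le_norm _
      have h2 : (ρ i - 1).re = (ρ i).re - 1 := by simp
      rw [h2] at h1
      have := abs_le.1 h1
      linarith [hρ1 i hi, this.1]
    have hρabs7 : ∀ i, i < 8 → (7:ℝ)/10 ≤ ‖ρ i‖ := by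
      intro i hi
      linarith [Complex.re_le_norm (ρ i), hρre7 i hi]
    have hargb : ∀ i, i < 8 → |Complex.arg (ρ i)| < Real.pi/4 := by
      intro i hi
      rw [Complex.arg_of_re_nonneg (hρre i hi)]
      set qq : ℝ := (ρ i).im / ‖ρ i‖ with hqq_def
      have hqabs : |qq| ≤ (3/10)/(7/10) := by
        rw [hqq_def, abs_div, _root_.abs_of_nonneg (norm_nonneg _)]
        apply div_le_div₀ (by norm_num) (hρim i hi) (by linarith [hρabs7 i hi]) (hρabs7 i hi)
      have hqlt : |qq| < Real.sqrt 2 / 2 := by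
        have : ((3:ℝ)/10)/((7:ℝ)/10) = 3/7 := by norm_num
        rw [this] at hqabs
        apply lt_of_le_of_lt hqabs
        nlinarith [hs2a]
      have hub : Real.arcsin qq < Real.pi/4 := by
        by_contra hcon
        push_neg at hcon
        have := Real.pi_div_four_le_arcsin.1 hcon
        have := abs_le.1 hqlt.le
        linarith [hqlt, le_abs_self qq]
      have hlb : -(Real.pi/4) < Real.arcsin qq := by
        by_contra hcon
        push_neg at hcon
        have h1 : Real.pi/4 ≤ Real.arcsin (-qq) := by
          rw [Real.arcsin_neg]
          linarith
        have := Real.pi_div_four_le_arcsin.1 h1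
        have h2 := neg_abs_le qq
        linarith [hqlt]
      rw [abs_lt]
      exact ⟨hlb, hub⟩
    have hsum_eq : n y = ∑ i ∈ Finset.range 8, Complex.arg (ρ i) := by
      rw [hv]
      apply Finset.sum_congr rfl
      intro i hi
      exact hinc i (Finset.mem_range.1 hi)
    have hsumlt : |∑ i ∈ Finset.range 8, Complex.arg (ρ i)| < 2*Real.pi := by
      calc |∑ i ∈ Finset.range 8, Complex.arg (ρ i)|
          ≤ ∑ i ∈ Finset.range 8, |Complex.arg (ρ i)| := Finset.abs_sum_le_sum_abs _ _
        _ < ∑ _i ∈ Finset.range 8, (Real.pi/4) := by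
            apply Finset.sum_lt_sum_of_nonempty ⟨0, Finset.mem_range.2 (by norm_num)⟩
            intro i hi
            exact hargb i (Finset.mem_range.1 hi)
        _ = 2*Real.pi := by
            rw [Finset.sum_const, Finset.card_range, nsmul_eq_mul]
            ring
    have hρne : ∀ i, i < 8 → ρ i ≠ 0 := by
      intro i hi
      exact div_ne_zero (hpyne (i+1) (by omega)) (hpyne i (by omega))
    have hprodρ : ∀ k, k ≤ 8 → ∏ i ∈ Finset.range k, ρ i = (p k - y)/(p 0 - y) := by
      intro k
      induction k with
      | zero =>
        intro _
        rw [Finset.prod_range_zero, eq_comm]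
        exact div_self (hpyne 0 (by omega))
      | succ k ih =>
        intro hk
        rw [Finset.prod_range_succ, ih (by omega), hρ_def]
        have h0 := hpyne 0 (by omega)
        have hk' := hpyne k (by omega)
        field_simp
    have hprod1 : ∏ i ∈ Finset.range 8, ρ i = 1 := by
      rw [hprodρ 8 (le_refl 8), hp8]
      exact div_self (hpyne 0 (by omega))
    have hexp1 : Complex.exp (((∑ i ∈ Finset.range 8, Complex.arg (ρ i) : ℝ) : ℂ) *
        Complex.I) = 1 := by
      rw [Complex.ofReal_sum, Finset.sum_mul, Complex.exp_sum]
      have heach : ∀ i ∈ Finset.range 8, Complex.exp ((Complex.arg (ρ i) : ℂ) * Complex.I)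
          = ρ i / ((‖ρ i‖ : ℝ) : ℂ) := by
        intro i hi
        exact exp_arg_unit (hρne i (Finset.mem_range.1 hi))
      rw [Finset.prod_congr rfl heach, Finset.prod_div_distrib]
      have habsprod : ∏ i ∈ Finset.range 8, ((‖ρ i‖ : ℝ) : ℂ)
          = ((∏ i ∈ Finset.range 8, ‖ρ i‖ : ℝ) : ℂ) := by
        rw [Complex.ofReal_prod]
      rw [habsprod]
      have : ∏ i ∈ Finset.range 8, ‖ρ i‖ = ‖∏ i ∈ Finset.range 8, ρ i‖ := by
        rw [Complex.norm_prod]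
      rw [this, hprod1]
      simp
    obtain ⟨k, hk⟩ := eq_two_pi_int_of_exp_eq_one hexp1
    have hk0 : k = 0 := by
      by_contra hkne
      have h1 : (1:ℝ) ≤ |(k:ℝ)| := by
        have : (1:ℤ) ≤ |k| := Int.one_le_abs (by omega)
        calc (1:ℝ) = ((1:ℤ):ℝ) := by norm_num
          _ ≤ ((|k|:ℤ):ℝ) := by exact_mod_cast this
          _ = |(k:ℝ)| := by push_cast; ring
      rw [hk] at hsumlt
      have h2 : |2*Real.pi*(k:ℝ)| = 2*Real.pi*|(k:ℝ)| := by
        rw [abs_mul, abs_of_pos (by positivity : (0:ℝ) < 2*Real.pi)]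
      rw [h2] at hsumlt
      nlinarith [Real.pi_pos]
    rw [hsum_eq, hk, hk0]
    simp
  linarith [hnx, hny, hcon]

end MRAux

/-- Every metrically removable set in `ℝ²` is totally disconnected. -/
theorem isTotallyDisconnected_of_metricallyRemovable
    (E : Set (EuclideanSpace ℝ (Fin 2))) (hE : MetricallyRemovable E) :
    IsTotallyDisconnected E := by
  set e : ℂ ≃ₗᵢ[ℝ] EuclideanSpace ℝ (Fin 2) := Complex.orthonormalBasisOneI.repr with he_def
  have hE' : MetricallyRemovable ((⇑e) ⁻¹' E) := by
    intro ε hε a b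
    obtain ⟨γ, hc, h0, h1, hav, hlen⟩ := hE ε hε (e a) (e b)
    refine ⟨fun t => e.symm (γ t), ?_, ?_, ?_, ?_, ?_⟩
    · exact e.symm.continuous.comp_continuousOn hc
    · show e.symm (γ 0) = a
      rw [h0]; simp
    · show e.symm (γ 1) = b
      rw [h1]; simp
    · intro t ht hmem
      apply hav t ht
      obtain ⟨hmem1, hmem2⟩ := hmem
      constructor
      · have : e (e.symm (γ t)) ∈ E := hmem1
        simpa using this
      · intro hcontra
        apply hmem2
        rcases hcontra with h | h
        · left
          show e.symm (γ t) = a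
          rw [h]; simp
        · right
          rw [Set.mem_singleton_iff] at h ⊢
          show e.symm (γ t) = b
          rw [h]; simp
    · have heq : eVariationOn (fun t => e.symm (γ t)) (Icc 0 1) = eVariationOn γ (Icc 0 1) :=
        MRAux.eVariationOn_comp_isometry e.symm.isometry γ (Icc 0 1)
      rw [heq]
      have hdist : dist (e a) (e b) = dist a b := e.isometry.dist_eq a b
      rwa [hdist] at hlen
  have h2 := MRAux.key hE'
  intro K hK hKc
  have hsub : e.symm '' K ⊆ (⇑e) ⁻¹' E := by
    rintro z ⟨k, hk, rfl⟩
    have : e (e.symm k) ∈ E := by simpa using hK hk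
    exact this
  have hpre : IsPreconnected (e.symm '' K) :=
    hKc.image _ (e.symm.continuous.continuousOn)
  have hss := h2 (e.symm '' K) hsub hpre
  intro u hu v hv
  have := hss (Set.mem_image_of_mem _ hu) (Set.mem_image_of_mem _ hv)
  exact e.symm.injective this
end

section
/- For every n ≥ 2 there exists a compact set E ⊆ ℝⁿ with 𝓗ⁿ(E) > 0 (positive Lebesgue measure) that is metrically removable. -/
open Set MeasureTheory

open Filter Topology Metric
open scoped ENNReal

section Chain
variable {V : Type*} [NormedAddCommGroup V] [NormedSpace ℝ V]

/-- An infinite polygonal chain through the points `p k` (at times `1/k`),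
converging to `a` at time `0`. -/
noncomputable def chainFun (a : V) (p : ℕ → V) (t : ℝ) : V :=
  if t ≤ 0 then a
  else if 1 ≤ t then p 1
  else AffineMap.lineMap (p (⌊1/t⌋₊ + 1)) (p ⌊1/t⌋₊)
    ((t - 1/((⌊1/t⌋₊ : ℝ) + 1)) * ((⌊1/t⌋₊ : ℝ) * ((⌊1/t⌋₊ : ℝ) + 1)))

theorem chainFun_nonpos {a : V} {p : ℕ → V} {t : ℝ} (ht : t ≤ 0) : chainFun a p t = a :=
  if_pos ht

theorem chainFun_ge_one {a : V} {p : ℕ → V} {t : ℝ} (ht : 1 ≤ t) : chainFun a p t = p 1 := by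
  rw [chainFun, if_neg (by linarith), if_pos ht]

theorem chainFun_eval {a : V} {p : ℕ → V} {k : ℕ} (hk : 1 ≤ k) {t : ℝ}
    (ht : t ∈ Icc (1/((k:ℝ)+1)) (1/(k:ℝ))) :
    chainFun a p t = AffineMap.lineMap (p (k+1)) (p k)
      ((t - 1/((k:ℝ)+1)) * ((k:ℝ) * ((k:ℝ)+1))) := by
  have hk0 : (0:ℝ) < k := by exact_mod_cast hk
  have hk1 : (0:ℝ) < (k:ℝ) + 1 := by positivity
  have ht0 : (0:ℝ) < t := lt_of_lt_of_le (by positivity) ht.1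
  have ht2' : t * (k:ℝ) ≤ 1 := (le_div_iff₀ hk0).1 ht.2
  rw [chainFun, if_neg (not_le.2 ht0)]
  rcases eq_or_lt_of_le ht.1 with heq | hlt
  · -- t is the left endpoint 1/(k+1)
    have ht1 : t < 1 := by
      rw [← heq, div_lt_one hk1]; linarith
    rw [if_neg (not_le.2 ht1)]
    have h1t : 1/t = (k:ℝ) + 1 := by rw [← heq, one_div_one_div]
    have hfl : ⌊1/t⌋₊ = k + 1 := by
      rw [h1t]
      rw [show ((k:ℝ) + 1) = ((k+1 : ℕ) : ℝ) by push_cast; ring]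
      exact Nat.floor_natCast _
    rw [hfl]
    have e1 : ((t - 1/(((k+1:ℕ):ℝ)+1)) * (((k+1:ℕ):ℝ) * (((k+1:ℕ):ℝ)+1))) = 1 := by
      push_cast
      rw [← heq]
      field_simp
      try ring
    have e2 : ((t - 1/((k:ℝ)+1)) * ((k:ℝ) * ((k:ℝ)+1))) = 0 := by
      rw [← heq]; ring
    rw [e1, e2, AffineMap.lineMap_apply_one, AffineMap.lineMap_apply_zero]
  · have hlt' : 1 < t * ((k:ℝ)+1) := (div_lt_iff₀ hk1).1 hlt
    by_cases h1 : 1 ≤ t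
    · have hkR : (k:ℝ) ≤ 1 := by nlinarith
      have hk1' : k = 1 := le_antisymm (by exact_mod_cast hkR) hk
      subst hk1'
      have ht1 : t = 1 := le_antisymm (by simpa using ht.2) h1
      subst ht1
      rw [if_pos le_rfl]
      norm_num
    · rw [if_neg h1]
      have hfl : ⌊1/t⌋₊ = k := by
        rw [Nat.floor_eq_iff (by positivity)]
        constructor
        · rw [le_div_iff₀ ht0]
          nlinarith
        · push_cast
          rw [div_lt_iff₀ ht0]
          nlinarith
      rw [hfl]

theorem chainFun_vertex {a : V} {p : ℕ → V} {k : ℕ} (hk : 1 ≤ k) :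
    chainFun a p (1/(k:ℝ)) = p k := by
  have hk0 : (0:ℝ) < k := by exact_mod_cast hk
  have hmem : (1/(k:ℝ)) ∈ Icc (1/((k:ℝ)+1)) (1/(k:ℝ)) := by
    constructor
    · rw [div_le_div_iff₀ (by positivity) hk0]
      linarith
    · exact le_rfl
  rw [chainFun_eval hk hmem]
  have e1 : ((1/(k:ℝ) - 1/((k:ℝ)+1)) * ((k:ℝ) * ((k:ℝ)+1))) = 1 := by
    field_simp
    try ring
  rw [e1, AffineMap.lineMap_apply_one]

theorem chainFun_mem {a : V} {p : ℕ → V} {t : ℝ} (ht : 0 < t) :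
    ∃ k : ℕ, chainFun a p t ∈ segment ℝ (p (k+1)) (p k) := by
  by_cases h1 : 1 ≤ t
  · exact ⟨1, by rw [chainFun_ge_one h1]; exact right_mem_segment _ _ _⟩
  · push_neg at h1
    set k := ⌊1/t⌋₊ with hkdef
    have h1t : 1 < 1/t := by rw [lt_div_iff₀ ht]; linarith
    have hk : 1 ≤ k := Nat.le_floor (by exact_mod_cast h1t.le)
    have hk0 : (0:ℝ) < k := by exact_mod_cast hk
    have hfle : (k:ℝ) ≤ 1/t := Nat.floor_le (by positivity)
    have hflt : 1/t < (k:ℝ) + 1 := by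
      have := Nat.lt_floor_add_one (1/t)
      push_cast at this ⊢
      linarith
    have hmem : t ∈ Icc (1/((k:ℝ)+1)) (1/(k:ℝ)) := by
      constructor
      · rw [div_le_iff₀ (by positivity)]
        rw [div_lt_iff₀ ht] at hflt
        nlinarith
      · rw [le_div_iff₀ hk0]
        rw [le_div_iff₀ ht] at hfle
        nlinarith
    rw [chainFun_eval hk hmem]
    refine ⟨k, ?_⟩
    rw [segment_eq_image_lineMap]
    refine mem_image_of_mem _ ⟨?_, ?_⟩
    · exact mul_nonneg (sub_nonneg.2 hmem.1) (by positivity)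
    · have h2 : t - 1/((k:ℝ)+1) ≤ 1/(k:ℝ) - 1/((k:ℝ)+1) := by linarith [hmem.2]
      have h3 : (1/(k:ℝ) - 1/((k:ℝ)+1)) * ((k:ℝ) * ((k:ℝ)+1)) = 1 := by
        field_simp; try ring
      calc (t - 1/((k:ℝ)+1)) * ((k:ℝ) * ((k:ℝ)+1))
          ≤ (1/(k:ℝ) - 1/((k:ℝ)+1)) * ((k:ℝ) * ((k:ℝ)+1)) :=
            mul_le_mul_of_nonneg_right h2 (by positivity)
        _ = 1 := h3
end Chain

theorem nat_mul_le_two_pow (m : ℕ) : (m+1) * (m+2) ≤ 2^(m+2) := by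
  induction m with
  | zero => norm_num
  | succ k ih =>
    rcases Nat.eq_zero_or_pos k with hk | hk
    · subst hk; norm_num
    · have h1 : (k+1+1) * (k+1+2) ≤ 2 * ((k+1)*(k+2)) := by nlinarith
      calc (k+1+1) * (k+1+2) ≤ 2 * ((k+1)*(k+2)) := h1
        _ ≤ 2 * 2^(k+2) := by omega
        _ = 2^(k+1+2) := by ring

theorem cast_mul_le_two_pow (k : ℕ) (hk : 1 ≤ k) : ((k:ℝ) * ((k:ℝ)+1)) ≤ 2^(k+1) := by
  obtain ⟨m, rfl⟩ := Nat.exists_eq_add_of_le hk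
  have h2 : ((m+1) * (m+2) : ℕ) ≤ (2^(m+2) : ℕ) := nat_mul_le_two_pow m
  push_cast
  calc ((1:ℝ)+m) * (1+m+1) = ((m:ℝ)+1)*((m:ℝ)+2) := by ring
    _ ≤ 2^(m+2) := by exact_mod_cast h2
    _ = 2^(1+m+1) := by ring_nf

section ChainLip
variable {V : Type*} [NormedAddCommGroup V] [NormedSpace ℝ V]
variable {a : V} {p : ℕ → V} {δ : ℝ}

theorem chain_seg_dist (hδ : 0 ≤ δ) (hp : ∀ k, dist (p k) a ≤ δ / 2^k) (k : ℕ) :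
    dist (p (k+1)) (p k) ≤ 3*δ/2^(k+1) := by
  calc dist (p (k+1)) (p k) ≤ dist (p (k+1)) a + dist (p k) a := dist_triangle_right _ _ _
    _ ≤ δ/2^(k+1) + δ/2^k := add_le_add (hp _) (hp _)
    _ = 3*δ/2^(k+1) := by
        rw [pow_succ]
        field_simp
        ring

theorem chain_lip_interval (hδ : 0 ≤ δ) (hp : ∀ k, dist (p k) a ≤ δ / 2^k)
    {k : ℕ} (hk : 1 ≤ k) {s t : ℝ} (hs : s ∈ Icc (1/((k:ℝ)+1)) (1/(k:ℝ)))
    (ht : t ∈ Icc (1/((k:ℝ)+1)) (1/(k:ℝ))) (hst : s ≤ t) :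
    dist (chainFun a p s) (chainFun a p t) ≤ 3*δ*(t-s) := by
  have hk0 : (0:ℝ) < k := by exact_mod_cast hk
  rw [chainFun_eval hk hs, chainFun_eval hk ht, dist_lineMap_lineMap]
  have hM : (0:ℝ) ≤ (k:ℝ)*((k:ℝ)+1) := by positivity
  have h1 : dist ((s - 1/((k:ℝ)+1)) * ((k:ℝ) * ((k:ℝ)+1)))
      ((t - 1/((k:ℝ)+1)) * ((k:ℝ) * ((k:ℝ)+1))) = (t-s) * ((k:ℝ) * ((k:ℝ)+1)) := by
    rw [Real.dist_eq,
      show (s - 1/((k:ℝ)+1)) * ((k:ℝ) * ((k:ℝ)+1)) - (t - 1/((k:ℝ)+1)) * ((k:ℝ) * ((k:ℝ)+1))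
        = -((t-s) * ((k:ℝ)*((k:ℝ)+1))) from by ring,
      abs_neg, abs_of_nonneg (mul_nonneg (by linarith) hM)]
  rw [h1]
  calc (t-s) * ((k:ℝ) * ((k:ℝ)+1)) * dist (p (k+1)) (p k)
      ≤ (t-s) * ((k:ℝ) * ((k:ℝ)+1)) * (3*δ/2^(k+1)) := by
        apply mul_le_mul_of_nonneg_left (chain_seg_dist hδ hp k)
        exact mul_nonneg (by linarith) (by positivity)
    _ = (t-s) * (((k:ℝ) * ((k:ℝ)+1)) * (3*δ/2^(k+1))) := by ring
    _ ≤ (t-s) * ((2^(k+1) : ℝ) * (3*δ/2^(k+1))) := by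
        apply mul_le_mul_of_nonneg_left _ (by linarith)
        exact mul_le_mul_of_nonneg_right (cast_mul_le_two_pow k hk) (by positivity)
    _ = 3*δ*(t-s) := by
        field_simp

theorem chain_lip_ind (hδ : 0 ≤ δ) (hp : ∀ k, dist (p k) a ≤ δ / 2^k) :
    ∀ m : ℕ, ∀ s t : ℝ, 1/((m:ℝ)+1) ≤ s → s ≤ t →
      dist (chainFun a p s) (chainFun a p t) ≤ 3*δ*(t-s) := by
  intro m
  induction m with
  | zero =>
    intro s t hs hst
    simp only [Nat.cast_zero, zero_add, div_one] at hs
    rw [chainFun_ge_one hs, chainFun_ge_one (hs.trans hst), dist_self]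
    have : 0 ≤ t - s := by linarith
    positivity
  | succ m ih =>
    intro s t hs hst
    push_cast at hs
    by_cases hs1 : 1/((m:ℝ)+1) ≤ s
    · exact ih s t hs1 hst
    · push_neg at hs1
      have hsIcc : s ∈ Icc (1/((m:ℝ)+1+1)) (1/((m:ℝ)+1)) := ⟨hs, hs1.le⟩
      by_cases ht' : t ≤ 1/((m:ℝ)+1)
      · have h := chain_lip_interval hδ hp (k := m+1) (by omega)
          (by push_cast; exact hsIcc) (by push_cast; exact ⟨hs.trans hst, ht'⟩) hst
        push_cast at h
        exact h
      · push_neg at ht'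
        have hm0 : (0:ℝ) < (m:ℝ)+1 := by positivity
        have hvIcc : (1/((m:ℝ)+1)) ∈ Icc (1/((m:ℝ)+1+1)) (1/((m:ℝ)+1)) :=
          ⟨by rw [div_le_div_iff₀ (by positivity) hm0]; linarith, le_rfl⟩
        have h1 := chain_lip_interval hδ hp (k := m+1) (by omega)
          (by push_cast; exact hsIcc) (by push_cast; exact hvIcc) hs1.le
        have h2 := ih (1/((m:ℝ)+1)) t le_rfl ht'.le
        push_cast at h1
        calc dist (chainFun a p s) (chainFun a p t)
            ≤ dist (chainFun a p s) (chainFun a p (1/((m:ℝ)+1)))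
              + dist (chainFun a p (1/((m:ℝ)+1))) (chainFun a p t) := dist_triangle _ _ _
          _ ≤ 3*δ*(1/((m:ℝ)+1) - s) + 3*δ*(t - 1/((m:ℝ)+1)) := add_le_add h1 h2
          _ = 3*δ*(t-s) := by ring
end ChainLip

section Test
variable {V : Type*} [NormedAddCommGroup V] [NormedSpace ℝ V]
variable {a : V} {p : ℕ → V} {δ : ℝ}

theorem chain_lip_ind' (hδ : 0 ≤ δ) (hp : ∀ k, dist (p k) a ≤ δ / 2^k)
    (H : ∀ m : ℕ, ∀ s t : ℝ, 1/((m:ℝ)+1) ≤ s → s ≤ t →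
      dist (chainFun a p s) (chainFun a p t) ≤ 3*δ*(t-s)) : True := trivial

theorem chain_lip_pos_test (hδ : 0 ≤ δ)
    (H : ∀ m : ℕ, ∀ s t : ℝ, 1/((m:ℝ)+1) ≤ s → s ≤ t →
      dist (chainFun a p s) (chainFun a p t) ≤ 3*δ*(t-s))
    {s t : ℝ} (hs : 0 < s) (hst : s ≤ t) :
    dist (chainFun a p s) (chainFun a p t) ≤ 3*δ*(t-s) := by
  obtain ⟨m, hm⟩ := exists_nat_gt (1/s)
  have hm1 : 1/((m:ℝ)+1) ≤ s := by
    rw [div_le_iff₀ (by positivity)]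
    rw [div_lt_iff₀ hs] at hm
    nlinarith
  exact H m s t hm1 hst

theorem chain_dist_start_test (hδ : 0 ≤ δ) (hp : ∀ k, dist (p k) a ≤ δ / 2^k)
    (H : ∀ s t : ℝ, 0 < s → s ≤ t →
      dist (chainFun a p s) (chainFun a p t) ≤ 3*δ*(t-s))
    {t : ℝ} (ht : 0 < t) : dist a (chainFun a p t) ≤ 3*δ*t := by
  have hev : ∀ᶠ k : ℕ in atTop, dist a (chainFun a p t) ≤ δ/2^k + 3*δ*(t - 1/(k:ℝ)) := by
    filter_upwards [eventually_ge_atTop 1, eventually_ge_atTop ⌈1/t⌉₊] with k hk1 hk2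
    have hk0 : (0:ℝ) < k := by exact_mod_cast hk1
    have h1k : 1/(k:ℝ) ≤ t := by
      have h3 : 1/t ≤ (k:ℝ) := le_trans (Nat.le_ceil _) (by exact_mod_cast hk2)
      rw [div_le_iff₀ hk0]
      rw [div_le_iff₀ ht] at h3
      nlinarith
    calc dist a (chainFun a p t)
        ≤ dist a (p k) + dist (p k) (chainFun a p t) := dist_triangle _ _ _
      _ ≤ δ/2^k + 3*δ*(t - 1/(k:ℝ)) := by
          apply add_le_add
          · rw [dist_comm]; exact hp k
          · rw [← chainFun_vertex (a := a) (p := p) hk1]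
            exact H _ _ (by positivity) h1k
  have hlim : Tendsto (fun k:ℕ => δ/2^k + 3*δ*(t - 1/(k:ℝ))) atTop
      (𝓝 (0 + 3*δ*(t - 0))) := by
    apply Tendsto.add
    · have h2 : Tendsto (fun k:ℕ => ((1:ℝ)/2)^k) atTop (𝓝 0) := by
        apply tendsto_pow_atTop_nhds_zero_of_lt_one <;> norm_num
      have := h2.const_mul δ
      simp only [mul_zero] at this
      convert this using 2 with k
      rw [div_pow, one_pow]
      ring
    · exact (tendsto_const_nhds.sub tendsto_one_div_atTop_nhds_zero_nat).const_mul _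
  have := ge_of_tendsto hlim hev
  linarith

theorem chain_lip_test (hδ : 0 ≤ δ)
    (Hpos : ∀ s t : ℝ, 0 < s → s ≤ t →
      dist (chainFun a p s) (chainFun a p t) ≤ 3*δ*(t-s))
    (Hstart : ∀ t : ℝ, 0 < t → dist a (chainFun a p t) ≤ 3*δ*t) :
    ∀ s t : ℝ, s ≤ t → dist (chainFun a p s) (chainFun a p t) ≤ 3*δ*(t-s) := by
  intro s t hst
  by_cases ht : t ≤ 0
  · rw [chainFun_nonpos (hst.trans ht), chainFun_nonpos ht, dist_self]
    have : 0 ≤ t - s := by linarith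
    positivity
  · push_neg at ht
    by_cases hs : s ≤ 0
    · rw [chainFun_nonpos hs]
      have := Hstart t ht
      nlinarith
    · push_neg at hs
      exact Hpos s t hs hst
end Test

variable {Y : Type*} [PseudoMetricSpace Y]

theorem master_variation (f : ℝ → Y) (ℓ : ℝ → ℝ) (c d : ℝ) (hmono : Monotone ℓ)
    (H : ∀ s ∈ Icc c d, ∀ t ∈ Icc c d, s ≤ t → dist (f s) (f t) ≤ ℓ t - ℓ s) :
    eVariationOn f (Icc c d) ≤ ENNReal.ofReal (ℓ d - ℓ c) := by
  rcases le_or_gt c d with hcd | hcd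
  · apply iSup_le
    rintro ⟨m, u, hu, us⟩
    calc ∑ i ∈ Finset.range m, edist (f (u (i+1))) (f (u i))
        ≤ ∑ i ∈ Finset.range m, ENNReal.ofReal (ℓ (u (i+1)) - ℓ (u i)) := by
          apply Finset.sum_le_sum
          intro i _
          rw [edist_dist]
          apply ENNReal.ofReal_le_ofReal
          rw [dist_comm]
          exact H (u i) (us i) (u (i+1)) (us (i+1)) (hu (Nat.le_succ i))
      _ = ENNReal.ofReal (∑ i ∈ Finset.range m, (ℓ (u (i+1)) - ℓ (u i))) := by
          rw [ENNReal.ofReal_sum_of_nonneg]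
          intro i _
          exact sub_nonneg.2 (hmono (hu (Nat.le_succ i)))
      _ = ENNReal.ofReal (ℓ (u m) - ℓ (u 0)) := by rw [Finset.sum_range_sub (f := fun i => ℓ (u i))]
      _ ≤ ENNReal.ofReal (ℓ d - ℓ c) := by
          apply ENNReal.ofReal_le_ofReal
          have h1 := hmono (us m).2
          have h2 := hmono (us 0).1
          linarith
  · rw [Icc_eq_empty (not_le.2 hcd), eVariationOn.subsingleton f subsingleton_empty]
    exact zero_le

theorem master_cont (f : ℝ → Y) (ℓ : ℝ → ℝ) (c d : ℝ) (hℓ : Continuous ℓ)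
    (H : ∀ s ∈ Icc c d, ∀ t ∈ Icc c d, s ≤ t → dist (f s) (f t) ≤ ℓ t - ℓ s) :
    ContinuousOn f (Icc c d) := by
  intro x hx
  rw [ContinuousWithinAt, Metric.tendsto_nhdsWithin_nhds]
  intro ε hε
  obtain ⟨η, hη, hball⟩ := Metric.continuous_iff.1 hℓ x ε hε
  refine ⟨η, hη, fun {y} hy hyx => ?_⟩
  have key : dist (f y) (f x) ≤ dist (ℓ y) (ℓ x) := by
    rcases le_total y x with h | h
    · calc dist (f y) (f x) ≤ ℓ x - ℓ y := H y hy x hx h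
        _ ≤ |ℓ x - ℓ y| := le_abs_self _
        _ = dist (ℓ y) (ℓ x) := by rw [Real.dist_eq, abs_sub_comm]
    · calc dist (f y) (f x) = dist (f x) (f y) := dist_comm _ _
        _ ≤ ℓ y - ℓ x := H x hx y hy h
        _ ≤ |ℓ y - ℓ x| := le_abs_self _
        _ = dist (ℓ y) (ℓ x) := by rw [Real.dist_eq]
  exact lt_of_le_of_lt key (hball y hyx)

section Main

variable {n : ℕ}

theorem segment_volume_zero (hn : 2 ≤ n) (x y : EuclideanSpace ℝ (Fin n)) :
    volume (segment ℝ x y) = 0 := by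
  have hsub : segment ℝ x y ⊆ (affineSpan ℝ {x, y} : Set (EuclideanSpace ℝ (Fin n))) :=
    (AffineSubspace.convex _).segment_subset (subset_affineSpan ℝ _ (by simp))
      (subset_affineSpan ℝ _ (by simp))
  refine measure_mono_null hsub (Measure.addHaar_affineSubspace _ _ ?_)
  intro h
  have hd : (affineSpan ℝ ({x, y} : Set (EuclideanSpace ℝ (Fin n)))).direction = ⊤ := by
    rw [h]; exact AffineSubspace.direction_top ℝ _ _
  rw [direction_affineSpan, vectorSpan_pair] at hd
  have h1 : Module.finrank ℝ (ℝ ∙ (x -ᵥ y)) ≤ 1 := by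
    classical
    refine (finrank_span_le_card ({x -ᵥ y} : Set (EuclideanSpace ℝ (Fin n)))).trans ?_
    simp
  rw [hd] at h1
  have h2 : Module.finrank ℝ (⊤ : Submodule ℝ (EuclideanSpace ℝ (Fin n))) = n := by
    rw [finrank_top]; exact finrank_euclideanSpace_fin
  omega

theorem hausdorff_pos_of_volume_pos {E : Set (EuclideanSpace ℝ (Fin n))}
    (h : 0 < volume E) : 0 < μH[(n : ℝ)] E := by
  have hfr : (Module.finrank ℝ (EuclideanSpace ℝ (Fin n)) : ℝ) = (n : ℝ) := by
    norm_cast; exact finrank_euclideanSpace_fin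
  rw [← hfr]
  have hc : volume (α := EuclideanSpace ℝ (Fin n))
      = Measure.addHaarScalarFactor volume
          μH[(Module.finrank ℝ (EuclideanSpace ℝ (Fin n)) : ℝ)]
        • μH[(Module.finrank ℝ (EuclideanSpace ℝ (Fin n)) : ℝ)] :=
    Measure.isAddLeftInvariant_eq_smul _ _
  by_contra hzero
  push_neg at hzero
  simp only [le_zero_iff] at hzero
  rw [hc, Measure.smul_apply, hzero, smul_zero] at h
  exact lt_irrefl _ h

set_option maxHeartbeats 4000000 in
theorem exists_compact_metricallyRemovable_pos_measure' (hn : 2 ≤ n) :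
    ∃ E : Set (EuclideanSpace ℝ (Fin n)), IsCompact E ∧ 0 < μH[(n : ℝ)] E ∧
      MetricallyRemovable E := by
  classical
  set X := EuclideanSpace ℝ (Fin n) with hX
  set u : ℕ → X := TopologicalSpace.denseSeq X with hu_def
  have hu : DenseRange u := TopologicalSpace.denseRange_denseSeq X
  set seg : ℕ → Set X := fun m => segment ℝ (u m.unpair.1) (u m.unpair.2) with hseg_def
  have hsegcompact : ∀ m, IsCompact (seg m) := by
    intro m
    show IsCompact (segment ℝ _ _)
    rw [segment_eq_image_lineMap]
    exact isCompact_Icc.image AffineMap.lineMap_continuous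
  have hsegvol : ∀ m, volume (seg m) = 0 := fun m => segment_volume_zero hn _ _
  set κ := volume (closedBall (0 : X) 1) with hκ_def
  have hκ0 : 0 < κ := measure_closedBall_pos _ _ one_pos
  have hκtop : κ ≠ ∞ := measure_closedBall_lt_top.ne
  -- choice of tube radii
  have hchoice : ∀ m : ℕ, ∃ r > (0:ℝ), volume (thickening r (seg m)) ≤ κ/4 * (2⁻¹)^m := by
    intro m
    have hfin : volume (thickening 1 (seg m)) ≠ ∞ :=
      ((measure_mono (thickening_subset_cthickening 1 (seg m))).trans_lt
        (hsegcompact m).cthickening.measure_lt_top).ne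
    have ht := tendsto_measure_thickening (μ := volume) ⟨1, one_pos, hfin⟩ (s := seg m)
    rw [(hsegcompact m).isClosed.closure_eq, hsegvol m] at ht
    have hB : (0:ℝ≥0∞) < κ/4 * (2⁻¹)^m := by
      apply ENNReal.mul_pos
      · exact (ENNReal.div_pos hκ0.ne' (by norm_num)).ne'
      · exact pow_ne_zero m (by norm_num)
    have hev : ∀ᶠ r in nhdsWithin 0 (Ioi 0), volume (thickening r (seg m)) < κ/4 * (2⁻¹)^m :=
      ht.eventually_lt_const hB
    obtain ⟨r, hr, hrB⟩ := (eventually_mem_nhdsWithin.and hev).exists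
    exact ⟨r, hr, hrB.le⟩
  choose r hr hrB using hchoice
  set U := ⋃ m, thickening (r m) (seg m) with hU_def
  have hUopen : IsOpen U := isOpen_iUnion fun m => isOpen_thickening
  have hsegU : ∀ i j : ℕ, segment ℝ (u i) (u j) ⊆ U := by
    intro i j
    have he : segment ℝ (u i) (u j) = seg (Nat.pair i j) := by
      show _ = segment ℝ (u (Nat.unpair (Nat.pair i j)).1) (u (Nat.unpair (Nat.pair i j)).2)
      rw [Nat.unpair_pair]
    rw [he, hU_def]
    exact (self_subset_thickening (hr _) _).trans
      (subset_iUnion (fun m => thickening (r m) (seg m)) (Nat.pair i j))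
  refine ⟨closedBall 0 1 \ U, (isCompact_closedBall _ _).diff hUopen, ?_, ?_⟩
  · -- positive Hausdorff measure
    apply hausdorff_pos_of_volume_pos
    have hUvol : volume U ≤ κ/2 := by
      calc volume U ≤ ∑' m, volume (thickening (r m) (seg m)) := measure_iUnion_le _
        _ ≤ ∑' m, κ/4 * (2⁻¹)^m := ENNReal.tsum_le_tsum hrB
        _ = κ/2 := by
            rw [ENNReal.tsum_mul_left, ENNReal.tsum_geometric,
              show (1:ℝ≥0∞) - 2⁻¹ = 2⁻¹ from ENNReal.one_sub_inv_two,
              inv_inv, ENNReal.div_eq_inv_mul, ENNReal.div_eq_inv_mul,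
              show (4:ℝ≥0∞) = 2*2 by norm_num, ENNReal.mul_inv (by norm_num) (by norm_num),
              show (2:ℝ≥0∞)⁻¹ * 2⁻¹ * κ * 2 = 2⁻¹ * 2 * (2⁻¹ * κ) from by ring,
              ENNReal.inv_mul_cancel (by norm_num) (by norm_num), one_mul]
    have h1 : κ/2 < κ := ENNReal.half_lt_self hκ0.ne' hκtop
    have h2 : 0 < κ - κ/2 := tsub_pos_of_lt h1
    have h3 : κ - κ/2 ≤ κ - volume U := tsub_le_tsub_left hUvol κ
    have h4 : κ - volume U ≤ volume (closedBall 0 1 \ U) := le_measure_diff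
    exact lt_of_lt_of_le h2 (h3.trans h4)
  · -- metric removability
    intro ε hε a b
    set δ := ε/8 with hδ_def
    have hδ : 0 < δ := by rw [hδ_def]; linarith
    have hpick : ∀ (x : X) (k : ℕ), ∃ i, dist (u i) x ≤ δ/2^k := by
      intro x k
      obtain ⟨i, hi⟩ := Metric.denseRange_iff.1 hu x (δ/2^k) (by positivity)
      exact ⟨i, by rw [dist_comm]; exact hi.le⟩
    choose ia hia using fun k => hpick a k
    choose ib hib using fun k => hpick b k
    set p : ℕ → X := fun k => u (ia k) with hp_def
    set q : ℕ → X := fun k => u (ib k) with hq_def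
    have hpa : ∀ k, dist (p k) a ≤ δ/2^k := hia
    have hqb : ∀ k, dist (q k) b ≤ δ/2^k := hib
    have hg₁ : ∀ s t : ℝ, s ≤ t →
        dist (chainFun a p s) (chainFun a p t) ≤ 3*δ*(t-s) :=
      chain_lip_test hδ.le
        (fun s t hs hst => chain_lip_pos_test hδ.le (chain_lip_ind hδ.le hpa) hs hst)
        (fun t ht => chain_dist_start_test hδ.le hpa
          (fun s t hs hst => chain_lip_pos_test hδ.le (chain_lip_ind hδ.le hpa) hs hst) ht)
    have hg₂ : ∀ s t : ℝ, s ≤ t →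
        dist (chainFun b q s) (chainFun b q t) ≤ 3*δ*(t-s) :=
      chain_lip_test hδ.le
        (fun s t hs hst => chain_lip_pos_test hδ.le (chain_lip_ind hδ.le hqb) hs hst)
        (fun t ht => chain_dist_start_test hδ.le hqb
          (fun s t hs hst => chain_lip_pos_test hδ.le (chain_lip_ind hδ.le hqb) hs hst) ht)
    set γ : ℝ → X := fun t => if t ≤ 1/4 then chainFun a p (4*t)
      else if t ≤ 3/4 then (AffineMap.lineMap (p 1) (q 1) (2*(t - 1/4)) : X)
      else chainFun b q (4*(1-t)) with hγ_def
    have hγ0 : γ 0 = a := by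
      rw [hγ_def]
      simp only [if_pos (by norm_num : (0:ℝ) ≤ 1/4)]
      rw [mul_zero, chainFun_nonpos le_rfl]
    have hγ1 : γ 1 = b := by
      rw [hγ_def]
      simp only [if_neg (by norm_num : ¬((1:ℝ) ≤ 1/4)), if_neg (by norm_num : ¬((1:ℝ) ≤ 3/4))]
      rw [show (4:ℝ)*(1-1) = 0 by norm_num, chainFun_nonpos le_rfl]
    -- evaluation on the three pieces
    have hev1 : ∀ t ∈ Icc (0:ℝ) (1/4), γ t = chainFun a p (4*t) := by
      intro t ht
      rw [hγ_def]
      simp only [if_pos ht.2]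
    have hev2 : ∀ t ∈ Icc (1/4:ℝ) (3/4),
        γ t = (AffineMap.lineMap (p 1) (q 1) (2*(t - 1/4)) : X) := by
      intro t ht
      rw [hγ_def]
      by_cases h : t ≤ 1/4
      · have ht4 : t = 1/4 := le_antisymm h ht.1
        subst ht4
        simp only [if_pos le_rfl]
        rw [show (4:ℝ)*(1/4) = 1 by norm_num, chainFun_ge_one le_rfl,
          show (2:ℝ)*(1/4 - 1/4) = 0 by norm_num, AffineMap.lineMap_apply_zero]
      · simp only [if_neg h, if_pos ht.2]
    have hev3 : ∀ t ∈ Icc (3/4:ℝ) 1, γ t = chainFun b q (4*(1-t)) := by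
      intro t ht
      rw [hγ_def]
      by_cases h : t ≤ 3/4
      · have ht4 : t = 3/4 := le_antisymm h ht.1
        subst ht4
        simp only [if_neg (by norm_num : ¬((3/4:ℝ) ≤ 1/4)), if_pos le_rfl]
        rw [show (2:ℝ)*(3/4 - 1/4) = 1 by norm_num, AffineMap.lineMap_apply_one,
          show (4:ℝ)*(1-3/4) = 1 by norm_num, chainFun_ge_one le_rfl]
      · have hn14 : ¬ t ≤ 1/4 := fun hc => h (le_trans hc (by norm_num))
        simp only [if_neg hn14, if_neg h]
    -- the three two-point estimates
    have hH1 : ∀ s ∈ Icc (0:ℝ) (1/4), ∀ t ∈ Icc (0:ℝ) (1/4), s ≤ t →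
        dist (γ s) (γ t) ≤ (fun z => 12*δ*z) t - (fun z => 12*δ*z) s := by
      intro s hs t ht hst
      rw [hev1 s hs, hev1 t ht]
      have := hg₁ (4*s) (4*t) (by linarith)
      simp only
      nlinarith [this]
    have hH2 : ∀ s ∈ Icc (1/4:ℝ) (3/4), ∀ t ∈ Icc (1/4:ℝ) (3/4), s ≤ t →
        dist (γ s) (γ t) ≤ (fun z => (2*dist (p 1) (q 1))*z) t
          - (fun z => (2*dist (p 1) (q 1))*z) s := by
      intro s hs t ht hst
      rw [hev2 s hs, hev2 t ht, dist_lineMap_lineMap, Real.dist_eq,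
        show 2*(s - 1/4) - (2*(t - 1/4)) = -(2*(t-s)) from by ring, abs_neg,
        abs_of_nonneg (by linarith)]
      simp only
      ring_nf
      nlinarith [dist_nonneg (x := p 1) (y := q 1)]
    have hH3 : ∀ s ∈ Icc (3/4:ℝ) 1, ∀ t ∈ Icc (3/4:ℝ) 1, s ≤ t →
        dist (γ s) (γ t) ≤ (fun z => 12*δ*z) t - (fun z => 12*δ*z) s := by
      intro s hs t ht hst
      rw [hev3 s hs, hev3 t ht, dist_comm]
      have := hg₂ (4*(1-t)) (4*(1-s)) (by linarith)
      simp only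
      nlinarith [this]
    have hmono1 : Monotone (fun z : ℝ => 12*δ*z) := by
      intro x y hxy
      have h0 := mul_nonneg hδ.le (sub_nonneg.2 hxy)
      simp only
      nlinarith
    have hmono2 : Monotone (fun z : ℝ => (2*dist (p 1) (q 1))*z) := by
      intro x y hxy
      have hd := dist_nonneg (x := p 1) (y := q 1)
      have h0 := mul_nonneg hd (sub_nonneg.2 hxy)
      simp only
      nlinarith
    have hcont1 : Continuous (fun z : ℝ => 12*δ*z) := by fun_prop
    have hcont2 : Continuous (fun z : ℝ => (2*dist (p 1) (q 1))*z) := by fun_prop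
    refine ⟨γ, ?_, hγ0, hγ1, ?_, ?_⟩
    · -- continuity
      have hc1 := master_cont γ _ 0 (1/4) hcont1 hH1
      have hc2 := master_cont γ _ (1/4) (3/4) hcont2 hH2
      have hc3 := master_cont γ _ (3/4) 1 hcont1 hH3
      intro x hx
      have wc : ∀ (s : Set ℝ), IsClosed s → ContinuousOn γ s → ContinuousWithinAt γ s x := by
        intro s hsc hcs
        by_cases hxs : x ∈ s
        · exact hcs x hxs
        · exact continuousWithinAt_of_notMem_closure (by rwa [hsc.closure_eq])
      have hsub : Icc (0:ℝ) 1 ⊆ Icc 0 (1/4) ∪ (Icc (1/4) (3/4) ∪ Icc (3/4) 1) := by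
        intro y hy
        rcases le_total y (1/4) with h | h
        · exact Or.inl ⟨hy.1, h⟩
        · rcases le_total y (3/4) with h' | h'
          · exact Or.inr (Or.inl ⟨h, h'⟩)
          · exact Or.inr (Or.inr ⟨h', hy.2⟩)
      exact ((wc _ isClosed_Icc hc1).union
        ((wc _ isClosed_Icc hc2).union (wc _ isClosed_Icc hc3))).mono hsub
    · -- avoidance
      intro t ht hmem
      obtain ⟨⟨hball, hnotU⟩, hnotab⟩ := hmem
      simp only [mem_insert_iff, mem_singleton_iff, not_or] at hnotab
      by_cases h1 : t ≤ 1/4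
      · have he := hev1 t ⟨ht.1, h1⟩
        by_cases h0 : t ≤ 0
        · have ht0 : t = 0 := le_antisymm h0 ht.1
          exact hnotab.1 (by rw [ht0, hγ0])
        · push_neg at h0
          obtain ⟨k, hk⟩ := chainFun_mem (a := a) (p := p) (t := 4*t) (by linarith)
          exact hnotU (hsegU (ia (k+1)) (ia k) (by rwa [← he] at hk))
      · push_neg at h1
        by_cases h2 : t ≤ 3/4
        · have he := hev2 t ⟨h1.le, h2⟩
          have hU' : γ t ∈ segment ℝ (p 1) (q 1) := by
            rw [he, segment_eq_image_lineMap]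
            exact mem_image_of_mem _ ⟨by linarith, by linarith⟩
          exact hnotU (hsegU (ia 1) (ib 1) hU')
        · push_neg at h2
          have he := hev3 t ⟨h2.le, ht.2⟩
          by_cases ht1 : 1 ≤ t
          · have ht1' : t = 1 := le_antisymm ht.2 ht1
            exact hnotab.2 (by rw [ht1', hγ1])
          · push_neg at ht1
            obtain ⟨k, hk⟩ := chainFun_mem (a := b) (p := q) (t := 4*(1-t)) (by linarith)
            exact hnotU (hsegU (ib (k+1)) (ib k) (by rwa [← he] at hk))
    · -- variation bound
      have hv1 := master_variation γ _ 0 (1/4) hmono1 hH1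
      have hv2 := master_variation γ _ (1/4) (3/4) hmono2 hH2
      have hv3 := master_variation γ _ (3/4) 1 hmono1 hH3
      have A := eVariationOn.Icc_add_Icc γ (s := univ)
        (by norm_num : (0:ℝ) ≤ 1/4) (by norm_num : (1/4:ℝ) ≤ 3/4) (mem_univ _)
      have B := eVariationOn.Icc_add_Icc γ (s := univ)
        (by norm_num : (0:ℝ) ≤ 3/4) (by norm_num : (3/4:ℝ) ≤ 1) (mem_univ _)
      simp only [univ_inter] at A B
      have hd1q : dist (p 1) (q 1) ≤ δ/2 + (dist a b + δ/2) := by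
        calc dist (p 1) (q 1) ≤ dist (p 1) a + dist a (q 1) := dist_triangle _ _ _
          _ ≤ δ/2 + (dist a b + δ/2) := by
              apply add_le_add
              · have := hpa 1; rwa [pow_one] at this
              · calc dist a (q 1) ≤ dist a b + dist b (q 1) := dist_triangle _ _ _
                  _ ≤ dist a b + δ/2 := by
                      have := hqb 1
                      rw [pow_one] at this
                      rw [dist_comm b (q 1)]
                      linarith
      calc eVariationOn γ (Icc 0 1)
          = eVariationOn γ (Icc 0 (3/4)) + eVariationOn γ (Icc (3/4) 1) := B.symm
        _ = eVariationOn γ (Icc 0 (1/4)) + eVariationOn γ (Icc (1/4) (3/4))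
            + eVariationOn γ (Icc (3/4) 1) := by rw [A]
        _ ≤ ENNReal.ofReal (12*δ*(1/4) - 12*δ*0)
            + ENNReal.ofReal ((2*dist (p 1) (q 1))*(3/4) - (2*dist (p 1) (q 1))*(1/4))
            + ENNReal.ofReal (12*δ*1 - 12*δ*(3/4)) := by
              exact add_le_add (add_le_add hv1 hv2) hv3
        _ ≤ ENNReal.ofReal (dist a b + ε) := by
            rw [← ENNReal.ofReal_add (by nlinarith) (by nlinarith [dist_nonneg (x := p 1) (y := q 1)]),
              ← ENNReal.ofReal_add (by nlinarith [dist_nonneg (x := p 1) (y := q 1)]) (by nlinarith)]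
            apply ENNReal.ofReal_le_ofReal
            rw [hδ_def] at hd1q ⊢
            nlinarith
end Main


/-- For every `n ≥ 2` there is a compact metrically removable set `E ⊆ ℝⁿ` of positive
`n`-dimensional Hausdorff measure. -/
theorem exists_compact_metricallyRemovable_pos_measure {n : ℕ} (hn : 2 ≤ n) :
    ∃ E : Set (EuclideanSpace ℝ (Fin n)), IsCompact E ∧ 0 < μH[(n : ℝ)] E ∧
      MetricallyRemovable E := by
  exact exists_compact_metricallyRemovable_pos_measure' hn
end

section
/- If Ω is a domain (open connected set) in ℝⁿ and E ⊆ ℝⁿ is metrically removable, then the intrinsic metric of Ω ∖ E agrees with the intrinsic metric of Ω on Ω ∖ E: for all a, b ∈ Ω ∖ E, ρ_{Ω∖E}(a,b) = ρ_Ω(a,b). -/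
open Set
open scoped ENNReal

/-- The intrinsic metric of a set `A`: the infimum of lengths of curves joining `a` to `b`
within `A` (equal to `∞` if there is no rectifiable curve joining them in `A`). -/
noncomputable def intrinsicDist {X : Type*} [MetricSpace X] (A : Set X) (a b : X) : ℝ≥0∞ :=
  ⨅ (γ : ℝ → X) (_ : ContinuousOn γ (Icc 0 1)) (_ : γ 0 = a) (_ : γ 1 = b)
    (_ : ∀ t ∈ Icc (0:ℝ) 1, γ t ∈ A), eVariationOn γ (Icc 0 1)



section Helpers

variable {X : Type*} [MetricSpace X]


lemma intrinsicDist_le {A : Set X} {a b : X} {γ : ℝ → X}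
    (hc : ContinuousOn γ (Icc 0 1)) (h0 : γ 0 = a) (h1 : γ 1 = b)
    (hm : ∀ t ∈ Icc (0:ℝ) 1, γ t ∈ A) :
    intrinsicDist A a b ≤ eVariationOn γ (Icc 0 1) :=
  iInf_le_of_le γ (iInf_le_of_le hc (iInf_le_of_le h0 (iInf_le_of_le h1 (iInf_le _ hm))))

lemma intrinsicDist_self {A : Set X} {a : X} (ha : a ∈ A) : intrinsicDist A a a = 0 := by
  refine le_antisymm ?_ zero_le
  have h := intrinsicDist_le (A := A) (γ := fun _ => a) continuousOn_const rfl rfl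
    (fun t _ => ha)
  rwa [eVariationOn.constant_on (by
    intro x hx y hy
    obtain ⟨t, _, rfl⟩ := hx
    obtain ⟨s, _, rfl⟩ := hy
    rfl)] at h

end Helpers


section Concat

variable {X : Type*} [MetricSpace X]

lemma concat_le {A : Set X} {a b c : X} {γ₁ γ₂ : ℝ → X}
    (h₁c : ContinuousOn γ₁ (Icc 0 1)) (h₁0 : γ₁ 0 = a) (h₁1 : γ₁ 1 = b)
    (h₁m : ∀ t ∈ Icc (0:ℝ) 1, γ₁ t ∈ A)
    (h₂c : ContinuousOn γ₂ (Icc 0 1)) (h₂0 : γ₂ 0 = b) (h₂1 : γ₂ 1 = c)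
    (h₂m : ∀ t ∈ Icc (0:ℝ) 1, γ₂ t ∈ A) :
    intrinsicDist A a c ≤ eVariationOn γ₁ (Icc 0 1) + eVariationOn γ₂ (Icc 0 1) := by
  classical
  set f : ℝ → X := fun t => γ₁ (2 * t) with hf
  set g : ℝ → X := fun t => γ₂ (2 * t - 1) with hg
  set γ : ℝ → X := (Iic (2⁻¹ : ℝ)).piecewise f g with hγdef
  have hmapsf : MapsTo (fun t : ℝ => 2 * t) (Icc 0 2⁻¹) (Icc 0 1) := by
    intro t ht; simp only [mem_Icc] at ht ⊢; constructor <;> linarith [ht.1, ht.2]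
  have hmapsg : MapsTo (fun t : ℝ => 2 * t - 1) (Icc 2⁻¹ 1) (Icc 0 1) := by
    intro t ht; simp only [mem_Icc] at ht ⊢; constructor <;> linarith [ht.1, ht.2]
  have hfc : ContinuousOn f (Icc 0 2⁻¹) :=
    h₁c.comp ((continuous_const.mul continuous_id).continuousOn) hmapsf
  have hgc : ContinuousOn g (Icc 2⁻¹ 1) :=
    h₂c.comp (((continuous_const.mul continuous_id).sub continuous_const).continuousOn) hmapsg
  have heq : f (2⁻¹ : ℝ) = g (2⁻¹ : ℝ) := by
    simp only [hf, hg]; norm_num [h₁1, h₂0]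
  have hinter1 : Icc (0:ℝ) 1 ∩ Iic (2⁻¹:ℝ) = Icc 0 2⁻¹ := by
    ext x; simp only [mem_inter_iff, mem_Icc, mem_Iic]; constructor
    · rintro ⟨⟨h0, _⟩, h2⟩; exact ⟨h0, h2⟩
    · rintro ⟨h1, h2⟩; exact ⟨⟨h1, by linarith⟩, h2⟩
  have hinter2 : Icc (0:ℝ) 1 ∩ Ici (2⁻¹:ℝ) = Icc 2⁻¹ 1 := by
    ext x; simp only [mem_inter_iff, mem_Icc, mem_Ici]; constructor
    · rintro ⟨⟨_, h1⟩, h2⟩; exact ⟨h2, h1⟩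
    · rintro ⟨h1, h2⟩; exact ⟨⟨by linarith, h2⟩, h1⟩
  have hγf : EqOn γ f (Icc 0 2⁻¹) := fun t ht => Set.piecewise_eq_of_mem _ _ _ ht.2
  have hγg : EqOn γ g (Icc 2⁻¹ 1) := by
    intro t ht
    rcases eq_or_lt_of_le ht.1 with h | h
    · rw [← h]
      simpa [hγdef, Set.piecewise_eq_of_mem (Iic (2⁻¹:ℝ)) f g (le_refl (2⁻¹:ℝ))] using heq
    · exact Set.piecewise_eq_of_notMem _ _ _ (not_le.mpr h)
  have hcont : ContinuousOn γ (Icc 0 1) := by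
    have H := continuousOn_piecewise_ite' (s := Icc (0:ℝ) 1) (s' := Icc (0:ℝ) 1)
      (t := Iic (2⁻¹:ℝ)) (f := f) (g := g) ?_ ?_ rfl ?_
    · rwa [Set.ite_same] at H
    · rwa [closure_Iic, hinter1]
    · rwa [compl_Iic, closure_Ioi, hinter2]
    · intro x hx
      rw [frontier_Iic] at hx
      rw [show x = (2⁻¹:ℝ) from hx.2]
      exact heq
  have hmem : ∀ t ∈ Icc (0:ℝ) 1, γ t ∈ A := by
    intro t ht
    by_cases h : t ≤ (2⁻¹:ℝ)
    · rw [hγf ⟨ht.1, h⟩]; exact h₁m _ (hmapsf ⟨ht.1, h⟩)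
    · rw [hγg ⟨le_of_not_ge h, ht.2⟩]; exact h₂m _ (hmapsg ⟨le_of_not_ge h, ht.2⟩)
  have h0 : γ 0 = a := by
    rw [hγdef, Set.piecewise_eq_of_mem _ _ _ (by norm_num : (0:ℝ) ∈ Iic (2⁻¹:ℝ))]
    simp only [hf]; norm_num [h₁0]
  have h1 : γ 1 = c := by
    rw [hγdef, Set.piecewise_eq_of_notMem _ _ _ (by norm_num : ¬ (1:ℝ) ∈ Iic (2⁻¹:ℝ))]
    simp only [hg]; norm_num [h₂1]
  refine (intrinsicDist_le hcont h0 h1 hmem).trans ?_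
  -- variation estimate
  have hsplit : eVariationOn γ (Icc 0 2⁻¹) + eVariationOn γ (Icc 2⁻¹ 1)
      = eVariationOn γ (Icc 0 1) := by
    have := eVariationOn.Icc_add_Icc γ (s := Icc (0:ℝ) 1) (a := 0) (b := 2⁻¹) (c := 1)
      (by norm_num) (by norm_num) (by norm_num)
    rw [show Icc (0:ℝ) 1 ∩ Icc 0 2⁻¹ = Icc 0 2⁻¹ from
        inter_eq_self_of_subset_right (Icc_subset_Icc le_rfl (by norm_num)),
      show Icc (0:ℝ) 1 ∩ Icc 2⁻¹ 1 = Icc 2⁻¹ 1 from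
        inter_eq_self_of_subset_right (Icc_subset_Icc (by norm_num) le_rfl),
      inter_self] at this
    exact this
  rw [← hsplit]
  have e1 : eVariationOn γ (Icc 0 2⁻¹) ≤ eVariationOn γ₁ (Icc 0 1) := by
    rw [eVariationOn.eq_of_eqOn hγf]
    exact eVariationOn.comp_le_of_monotoneOn γ₁ _
      (fun x hx y hy h => mul_le_mul_of_nonneg_left h (by norm_num)) hmapsf
  have e2 : eVariationOn γ (Icc 2⁻¹ 1) ≤ eVariationOn γ₂ (Icc 0 1) := by
    rw [eVariationOn.eq_of_eqOn hγg]
    exact eVariationOn.comp_le_of_monotoneOn γ₂ _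
      (fun x hx y hy h => sub_le_sub_right (mul_le_mul_of_nonneg_left h (by norm_num)) 1) hmapsg
  exact add_le_add e1 e2

end Concat


section Triangle

variable {X : Type*} [MetricSpace X]

lemma intrinsicDist_triangle (A : Set X) (a b c : X) :
    intrinsicDist A a c ≤ intrinsicDist A a b + intrinsicDist A b c := by
  refine ENNReal.le_of_forall_pos_le_add fun ε hε htop => ?_
  have hX : intrinsicDist A a b ≠ ⊤ := by
    intro h; rw [h] at htop; simp at htop
  have hY : intrinsicDist A b c ≠ ⊤ := by
    intro h; rw [h, add_top] at htop; simp at htop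
  have hε2 : ((ε : ℝ≥0∞) / 2) ≠ 0 := by
    simp [ENNReal.div_eq_zero_iff, hε.ne']
  have h1 : intrinsicDist A a b < intrinsicDist A a b + (ε : ℝ≥0∞) / 2 :=
    ENNReal.lt_add_right hX hε2
  have h2 : intrinsicDist A b c < intrinsicDist A b c + (ε : ℝ≥0∞) / 2 :=
    ENNReal.lt_add_right hY hε2
  rw [intrinsicDist] at h1 h2
  rw [iInf_lt_iff] at h1 h2
  obtain ⟨γ₁, h1⟩ := h1
  rw [iInf_lt_iff] at h1; obtain ⟨h₁c, h1⟩ := h1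
  rw [iInf_lt_iff] at h1; obtain ⟨h₁0, h1⟩ := h1
  rw [iInf_lt_iff] at h1; obtain ⟨h₁1, h1⟩ := h1
  rw [iInf_lt_iff] at h1; obtain ⟨h₁m, h1⟩ := h1
  obtain ⟨γ₂, h2⟩ := h2
  rw [iInf_lt_iff] at h2; obtain ⟨h₂c, h2⟩ := h2
  rw [iInf_lt_iff] at h2; obtain ⟨h₂0, h2⟩ := h2
  rw [iInf_lt_iff] at h2; obtain ⟨h₂1, h2⟩ := h2
  rw [iInf_lt_iff] at h2; obtain ⟨h₂m, h2⟩ := h2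
  calc intrinsicDist A a c
      ≤ eVariationOn γ₁ (Icc 0 1) + eVariationOn γ₂ (Icc 0 1) :=
        concat_le h₁c h₁0 h₁1 h₁m h₂c h₂0 h₂1 h₂m
    _ ≤ (intrinsicDist A a b + (ε : ℝ≥0∞) / 2) + (intrinsicDist A b c + (ε : ℝ≥0∞) / 2) :=
        add_le_add h1.le h2.le
    _ = intrinsicDist A a b + intrinsicDist A b c + ε := by
        rw [add_add_add_comm, ENNReal.add_halves]

lemma intrinsicDist_chain (A : Set X) (q : ℕ → X) (hq0 : q 0 ∈ A) :
    ∀ N : ℕ, intrinsicDist A (q 0) (q N) ≤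
      ∑ i ∈ Finset.range N, intrinsicDist A (q i) (q (i + 1)) := by
  intro N
  induction N with
  | zero => simp [intrinsicDist_self hq0]
  | succ n ih =>
    rw [Finset.sum_range_succ]
    exact (intrinsicDist_triangle A (q 0) (q n) (q (n + 1))).trans (add_le_add_left ih _)

end Triangle


section Density

variable {X : Type*} [MetricSpace X]

lemma MetricallyRemovable.exists_notMem {E : Set X} (hE : MetricallyRemovable E)
    {p b : X} (hbp : b ≠ p) : ∃ q, q ∉ E ∧ dist q p ≤ dist b p := by
  obtain ⟨c, hc, hc0, hc1, hcE, -⟩ := hE 1 one_pos p b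
  have hcont : ContinuousOn (fun t => dist (c t) p) (Icc 0 1) := by
    have := continuous_dist.comp_continuousOn (hc.prodMk (continuousOn_const (c := p) (s := Icc (0:ℝ) 1)))
    exact this
  have hbp0 : 0 < dist b p := dist_pos.mpr hbp
  set m := dist b p / 2 with hm
  have hm0 : 0 < m := by positivity
  have hmem : m ∈ Icc (dist (c 0) p) (dist (c 1) p) := by
    rw [hc0, hc1, dist_self]
    exact ⟨by linarith, by linarith⟩
  obtain ⟨t, ht, hdist⟩ := intermediate_value_Icc (by norm_num : (0:ℝ) ≤ 1) hcont hmem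
  simp only at hdist
  refine ⟨c t, ?_, by rw [hdist]; linarith⟩
  intro hctE
  have hxy : c t ∈ ({p, b} : Set X) := by
    by_contra h2
    exact hcE t ht ⟨hctE, h2⟩
  rcases hxy with h | h
  · rw [h, dist_self] at hdist; linarith
  · rw [mem_singleton_iff] at h
    rw [h] at hdist
    linarith

lemma removable_step {E : Set X} (hE : MetricallyRemovable E) {x y : X}
    (hx : x ∉ E) (hy : y ∉ E) {ε₀ : ℝ} (hε₀ : 0 < ε₀) {Ω : Set X}
    (hball : ∀ z : X, dist z x ≤ dist x y + ε₀ → z ∈ Ω) :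
    intrinsicDist (Ω \ E) x y ≤ ENNReal.ofReal (dist x y + ε₀) := by
  obtain ⟨c, hc, hc0, hc1, hcE, hvar⟩ := hE ε₀ hε₀ x y
  have hpos : 0 ≤ dist x y + ε₀ := by positivity
  have h0mem : (0:ℝ) ∈ Icc (0:ℝ) 1 := ⟨le_refl 0, by norm_num⟩
  have hmem : ∀ t ∈ Icc (0:ℝ) 1, c t ∈ Ω \ E := by
    intro t ht
    have hnotE : c t ∉ E := by
      intro h
      have hxy2 : c t ∈ ({x, y} : Set X) := by
        by_contra h2
        exact hcE t ht ⟨h, h2⟩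
      rcases hxy2 with h3 | h3
      · rw [h3] at h; exact hx h
      · rw [mem_singleton_iff] at h3; rw [h3] at h; exact hy h
    refine ⟨hball _ ?_, hnotE⟩
    have hed : edist (c t) (c 0) ≤ ENNReal.ofReal (dist x y + ε₀) :=
      le_trans (eVariationOn.edist_le c ht h0mem) hvar
    rw [hc0] at hed
    exact (edist_le_ofReal hpos).mp hed
  exact (intrinsicDist_le hc hc0 hc1 hmem).trans hvar

end Density

/-- If `Ω ⊆ ℝⁿ` is a domain and `E` is metrically removable, then the intrinsic metric of
`Ω \ E` agrees with that of `Ω` on `Ω \ E`. -/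
theorem intrinsicDist_diff_eq {n : ℕ} (Ω E : Set (EuclideanSpace ℝ (Fin n)))
    (hopen : IsOpen Ω) (hconn : IsConnected Ω) (hE : MetricallyRemovable E) :
    ∀ a ∈ Ω \ E, ∀ b ∈ Ω \ E, intrinsicDist (Ω \ E) a b = intrinsicDist Ω a b := by
  intro a ha b hb
  refine le_antisymm ?_ ?_
  · -- hard direction
    rcases eq_or_ne a b with rfl | hab
    · rw [intrinsicDist_self ha]; exact zero_le
    have hnt : Nontrivial (EuclideanSpace ℝ (Fin n)) := ⟨⟨a, b, hab⟩⟩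
    refine le_iInf fun γ => le_iInf fun hγc => le_iInf fun hγ0 => le_iInf fun hγ1 =>
      le_iInf fun hγm => ?_
    refine ENNReal.le_of_forall_pos_le_add fun ε hε hLtop => ?_
    set L := eVariationOn γ (Icc 0 1) with hL
    have hε' : (0:ℝ) < (ε : ℝ) := hε
    -- compactness: a uniform radius inside Ω around the curve
    have hK : IsCompact (γ '' Icc 0 1) := isCompact_Icc.image_of_continuousOn hγc
    have hKΩ : γ '' Icc 0 1 ⊆ Ω := by rintro _ ⟨t, ht, rfl⟩; exact hγm t ht
    obtain ⟨r, hr, hthick⟩ := hK.exists_thickening_subset_open hopen hKΩ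
    have hball : ∀ x z : EuclideanSpace ℝ (Fin n), x ∈ γ '' Icc 0 1 → dist z x < r → z ∈ Ω :=
      fun x z hx hz => hthick (Metric.mem_thickening_iff.mpr ⟨x, hx, hz⟩)
    -- uniform continuity and the partition
    have huc := isCompact_Icc.uniformContinuousOn_of_continuous hγc
    rw [Metric.uniformContinuousOn_iff] at huc
    obtain ⟨δ, hδ, hucδ⟩ := huc (r / 8) (by positivity)
    obtain ⟨N, hN, hNδ⟩ : ∃ N : ℕ, 0 < N ∧ (1:ℝ) / N < δ := by
      obtain ⟨N₀, hN₀⟩ := exists_nat_one_div_lt hδ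
      exact ⟨N₀ + 1, N₀.succ_pos, by push_cast; exact hN₀⟩
    have hNR : (0:ℝ) < (N:ℝ) := by exact_mod_cast hN
    set u : ℕ → ℝ := fun i => min ((i:ℝ) / N) 1 with hu
    have hu_mono : Monotone u := by
      intro i j hij
      refine min_le_min ?_ le_rfl
      have hij' : (i:ℝ) ≤ (j:ℝ) := by exact_mod_cast hij
      gcongr
    have hu_mem : ∀ i, u i ∈ Icc (0:ℝ) 1 :=
      fun i => ⟨le_min (by positivity) zero_le_one, min_le_right _ _⟩
    have hu_eq : ∀ i, i ≤ N → u i = (i:ℝ) / N := by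
      intro i hi
      exact min_eq_left ((div_le_one hNR).mpr (by exact_mod_cast hi))
    have hu0 : u 0 = 0 := by simp [hu]
    have huN : u N = 1 := by
      rw [hu_eq N le_rfl, div_self hNR.ne']
    set p : ℕ → EuclideanSpace ℝ (Fin n) := fun i => γ (u i) with hp
    have hp0 : p 0 = a := by rw [hp]; simp only [hu0]; exact hγ0
    have hpN : p N = b := by rw [hp]; simp only [huN]; exact hγ1
    have hpK : ∀ i, p i ∈ γ '' Icc 0 1 := fun i => ⟨u i, hu_mem i, rfl⟩
    have hgap : ∀ i, i < N → dist (u i) (u (i + 1)) < δ := by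
      intro i hi
      rw [hu_eq i hi.le, hu_eq (i + 1) hi, Real.dist_eq]
      have h1 : ((i + 1 : ℕ):ℝ) / N - (i:ℝ) / N = 1 / N := by push_cast; ring
      rw [abs_sub_comm, h1, abs_of_pos (by positivity)]
      exact hNδ
    have hpdist : ∀ i, i < N → dist (p i) (p (i + 1)) < r / 8 :=
      fun i hi => hucδ _ (hu_mem i) _ (hu_mem (i + 1)) (hgap i hi)
    -- the parameters
    set η : ℝ := min (r / 8) ((ε : ℝ) / (4 * N)) with hηdef
    have hη : 0 < η := lt_min (by positivity) (by positivity)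
    have hη8 : η ≤ r / 8 := min_le_left _ _
    have hηε : η ≤ (ε : ℝ) / (4 * N) := min_le_right _ _
    set ε₀ : ℝ := min (r / 8) ((ε : ℝ) / (2 * N)) with hε₀def
    have hε₀ : 0 < ε₀ := lt_min (by positivity) (by positivity)
    have hε₀8 : ε₀ ≤ r / 8 := min_le_left _ _
    have hε₀ε : ε₀ ≤ (ε : ℝ) / (2 * N) := min_le_right _ _
    -- choosing the chain points
    have hq_ex : ∀ i : ℕ, ∃ q : EuclideanSpace ℝ (Fin n),
        (q ∈ Ω ∧ q ∉ E) ∧ dist q (p i) ≤ η ∧ (i = 0 → q = a) ∧ (N ≤ i → q = b) := by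
      intro i
      rcases eq_or_ne i 0 with rfl | hi0
      · exact ⟨a, ⟨ha.1, ha.2⟩, by rw [hp0, dist_self]; exact hη.le,
          fun _ => rfl, fun h => absurd h (by omega)⟩
      rcases le_or_gt N i with hiN | hiN
      · refine ⟨b, ⟨hb.1, hb.2⟩, ?_, fun h => absurd h hi0, fun _ => rfl⟩
        have hui : u i = 1 := min_eq_right ((one_le_div hNR).mpr (by exact_mod_cast hiN))
        have hpi : p i = b := by rw [hp]; simp only [hui]; exact hγ1
        rw [hpi, dist_self]; exact hη.le
      · -- find a point ≠ p i at distance η, then one outside E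
        obtain ⟨v, hv⟩ := exists_ne (0 : EuclideanSpace ℝ (Fin n))
        set w : EuclideanSpace ℝ (Fin n) := p i + (η / ‖v‖) • v with hw
        have hnv : (0:ℝ) < ‖v‖ := norm_pos_iff.mpr hv
        have hwd : dist w (p i) = η := by
          rw [hw, dist_self_add_left, norm_smul, norm_div, Real.norm_eq_abs,
            abs_of_pos hη, norm_norm, div_mul_cancel₀ _ hnv.ne']
        have hwne : w ≠ p i := by
          intro h
          rw [h, dist_self] at hwd
          exact hη.ne hwd
        obtain ⟨q, hqE, hqd⟩ := hE.exists_notMem hwne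
        rw [hwd] at hqd
        have hqΩ : q ∈ Ω := hball (p i) q (hpK i) (by linarith)
        exact ⟨q, ⟨hqΩ, hqE⟩, hqd, fun h => absurd h hi0, fun h => absurd h (not_le.mpr hiN)⟩
    choose q hqmem hqd hq0' hqN' using hq_ex
    have hq0 : q 0 = a := hq0' 0 rfl
    have hqN : q N = b := hqN' N le_rfl
    -- per-step estimate
    have hdistq : ∀ i, i < N → dist (q i) (q (i + 1)) ≤ dist (p i) (p (i + 1)) + 2 * η := by
      intro i hi
      have h4 := dist_triangle4 (q i) (p i) (p (i + 1)) (q (i + 1))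
      have d1 : dist (q i) (p i) ≤ η := hqd i
      have d2 : dist (p (i + 1)) (q (i + 1)) ≤ η := by rw [dist_comm]; exact hqd (i + 1)
      linarith
    have hstep : ∀ i, i < N → intrinsicDist (Ω \ E) (q i) (q (i + 1)) ≤
        ENNReal.ofReal (dist (q i) (q (i + 1)) + ε₀) := by
      intro i hi
      refine removable_step hE (hqmem i).2 (hqmem (i + 1)).2 hε₀ ?_
      intro z hz
      refine hball (p i) z (hpK i) ?_
      have h3 := dist_triangle z (q i) (p i)
      have d1 : dist (q i) (p i) ≤ η := hqd i
      have h1 := hdistq i hi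
      have h2 := hpdist i hi
      linarith
    -- assembling
    have chain := intrinsicDist_chain (Ω \ E) q (by rw [hq0]; exact ha) N
    rw [hq0, hqN] at chain
    have hsum_edist := eVariationOn.sum_le (f := γ) (n := N) hu_mono hu_mem
    have hofq : ENNReal.ofReal (∑ i ∈ Finset.range N, dist (p i) (p (i + 1))) ≤ L := by
      rw [ENNReal.ofReal_sum_of_nonneg (fun i _ => dist_nonneg)]
      refine le_trans (le_of_eq ?_) hsum_edist
      refine Finset.sum_congr rfl fun i _ => ?_
      rw [← edist_dist, edist_comm]
    calc intrinsicDist (Ω \ E) a b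
        ≤ ∑ i ∈ Finset.range N, intrinsicDist (Ω \ E) (q i) (q (i + 1)) := chain
      _ ≤ ∑ i ∈ Finset.range N, ENNReal.ofReal (dist (q i) (q (i + 1)) + ε₀) :=
          Finset.sum_le_sum fun i hi => hstep i (Finset.mem_range.mp hi)
      _ = ENNReal.ofReal (∑ i ∈ Finset.range N, (dist (q i) (q (i + 1)) + ε₀)) :=
          (ENNReal.ofReal_sum_of_nonneg fun i _ => by positivity).symm
      _ ≤ ENNReal.ofReal ((∑ i ∈ Finset.range N, dist (p i) (p (i + 1))) + (ε : ℝ)) := by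
          apply ENNReal.ofReal_le_ofReal
          rw [Finset.sum_add_distrib, Finset.sum_const, Finset.card_range, nsmul_eq_mul]
          have hs1 : ∑ i ∈ Finset.range N, dist (q i) (q (i + 1)) ≤
              (∑ i ∈ Finset.range N, dist (p i) (p (i + 1))) + (N:ℝ) * (2 * η) := by
            calc ∑ i ∈ Finset.range N, dist (q i) (q (i + 1))
                ≤ ∑ i ∈ Finset.range N, (dist (p i) (p (i + 1)) + 2 * η) :=
                  Finset.sum_le_sum fun i hi => hdistq i (Finset.mem_range.mp hi)
              _ = (∑ i ∈ Finset.range N, dist (p i) (p (i + 1))) + (N:ℝ) * (2 * η) := by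
                  rw [Finset.sum_add_distrib, Finset.sum_const, Finset.card_range, nsmul_eq_mul]
          have hb1 : (N:ℝ) * (2 * η) ≤ (ε : ℝ) / 2 := by
            calc (N:ℝ) * (2 * η) ≤ (N:ℝ) * (2 * ((ε:ℝ) / (4 * N))) := by
                  apply mul_le_mul_of_nonneg_left _ hNR.le
                  linarith
              _ = (ε : ℝ) / 2 := by field_simp; ring
          have hb2 : (N:ℝ) * ε₀ ≤ (ε : ℝ) / 2 := by
            calc (N:ℝ) * ε₀ ≤ (N:ℝ) * ((ε:ℝ) / (2 * N)) :=
                  mul_le_mul_of_nonneg_left hε₀ε hNR.le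
              _ = (ε : ℝ) / 2 := by field_simp
          linarith
      _ ≤ ENNReal.ofReal (∑ i ∈ Finset.range N, dist (p i) (p (i + 1))) +
            ENNReal.ofReal (ε : ℝ) := ENNReal.ofReal_add_le
      _ ≤ L + ε := by
          rw [ENNReal.ofReal_coe_nnreal]
          exact add_le_add_left hofq _
  · -- easy direction
    refine le_iInf fun γ => le_iInf fun hc => le_iInf fun h0 => le_iInf fun h1 =>
      le_iInf fun hm => ?_
    exact intrinsicDist_le hc h0 h1 fun t ht => (hm t ht).1
end

section
/- If E = ⋃_{k=1}^∞ E_k where each E_k ⊆ ℝⁿ is closed and metrically removable, then E is metrically removable. -/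
open Set

set_option linter.unusedSectionVars false
set_option linter.unusedVariables false
set_option maxHeartbeats 1000000

namespace MRaux

open Filter Topology

noncomputable section

variable {Y : Type*} [NormedAddCommGroup Y] [NormedSpace ℝ Y]

local notation "I01" => Set.Icc (0:ℝ) 1

/-! ### Elementary eVariationOn helpers -/

lemma evar_Icc_add (f : ℝ → Y) {a b c : ℝ} (hab : a ≤ b) (hbc : b ≤ c) :
    eVariationOn f (Icc a b) + eVariationOn f (Icc b c) = eVariationOn f (Icc a c) := by
  simpa using eVariationOn.Icc_add_Icc f (s := univ) hab hbc (mem_univ b)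

/-- standard affine reparametrization sending `[u,v]` to `[0,1]`. -/
def affstd (u v t : ℝ) : ℝ := (t - u) / (v - u)

lemma affstd_left (u v : ℝ) : affstd u v u = 0 := by simp [affstd]

lemma affstd_right {u v : ℝ} (h : u < v) : affstd u v v = 1 := by
  have : v - u ≠ 0 := sub_ne_zero.2 h.ne'
  simp [affstd, div_self this]

lemma affstd_mem {u v t : ℝ} (h : u < v) (ht : t ∈ Icc u v) : affstd u v t ∈ I01 := by
  have hv : (0:ℝ) < v - u := sub_pos.2 h
  constructor
  · exact div_nonneg (by linarith [ht.1]) hv.le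
  · show (t - u) / (v - u) ≤ 1
    rw [div_le_one hv]; linarith [ht.2]

lemma affstd_image {u v : ℝ} (h : u < v) : affstd u v '' Icc u v = I01 := by
  have hv : (0:ℝ) < v - u := sub_pos.2 h
  ext x
  constructor
  · rintro ⟨t, ht, rfl⟩
    exact affstd_mem h ht
  · rintro ⟨h0, h1⟩
    refine ⟨u + x * (v - u), ⟨by nlinarith, by nlinarith⟩, ?_⟩
    simp only [affstd]; rw [add_sub_cancel_left, mul_div_assoc, div_self hv.ne', mul_one]

lemma affstd_monotoneOn {u v : ℝ} (h : u < v) : MonotoneOn (affstd u v) (Icc u v) := by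
  intro a _ b _ hab
  have hv : (0:ℝ) < v - u := sub_pos.2 h
  show (a - u) / (v - u) ≤ (b - u) / (v - u)
  gcongr
  all_goals linarith

lemma affstd_continuous (u v : ℝ) : Continuous (affstd u v) := by
  unfold affstd
  fun_prop

lemma affstd_cancel {u v t : ℝ} (h : u < v) : u + affstd u v t * (v - u) = t := by
  have : v - u ≠ 0 := sub_ne_zero.2 h.ne'
  simp only [affstd]; rw [div_mul_eq_mul_div, mul_div_assoc, div_self this, mul_one]; ring

/-- If `g` coincides on `[u,v]` with `f ∘ affstd u v` then its variation on `[u,v]` equals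
the variation of `f` on `[0,1]`. -/
lemma evar_eq_of_reparam {g f : ℝ → Y} {u v : ℝ} (h : u < v)
    (hg : EqOn g (f ∘ affstd u v) (Icc u v)) :
    eVariationOn g (Icc u v) = eVariationOn f I01 := by
  rw [eVariationOn.eq_of_eqOn hg,
    eVariationOn.comp_eq_of_monotoneOn f (affstd u v) (affstd_monotoneOn h), affstd_image h]

lemma image_aff {u v : ℝ} (h : u < v) : (fun s : ℝ => u + s * (v - u)) '' I01 = Icc u v := by
  have hv : (0:ℝ) < v - u := sub_pos.2 h
  ext x
  constructor
  · rintro ⟨t, ⟨h0, h1⟩, rfl⟩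
    constructor
    · show u ≤ u + t * (v - u); nlinarith
    · show u + t * (v - u) ≤ v; nlinarith
  · intro hx
    exact ⟨affstd u v x, affstd_mem h hx, affstd_cancel h⟩

lemma evar_comp_aff {f : ℝ → Y} {u v : ℝ} (h : u < v) :
    eVariationOn (fun s => f (u + s * (v - u))) I01 = eVariationOn f (Icc u v) := by
  have hm : MonotoneOn (fun s : ℝ => u + s * (v - u)) I01 := by
    intro a _ b _ hab
    have hv : (0:ℝ) < v - u := sub_pos.2 h
    show u + a * (v - u) ≤ u + b * (v - u)
    nlinarith
  have := eVariationOn.comp_eq_of_monotoneOn f (fun s : ℝ => u + s * (v - u)) hm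
  rw [show (f ∘ fun s : ℝ => u + s * (v - u)) = (fun s => f (u + s * (v - u))) from rfl] at this
  rw [this, image_aff h]

lemma dist_le_of_evar {f : ℝ → Y} {L : ℝ} (hL : 0 ≤ L)
    (h : eVariationOn f I01 ≤ ENNReal.ofReal L)
    {s t : ℝ} (hs : s ∈ I01) (ht : t ∈ I01) : dist (f s) (f t) ≤ L := by
  have h2 := (eVariationOn.edist_le f hs ht).trans h
  rwa [edist_le_ofReal hL] at h2

lemma evar_const (a : Y) : eVariationOn (fun _ : ℝ => a) I01 = 0 :=
  eVariationOn.constant_on (by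
    intro x hx y hy
    rcases hx with ⟨s, _, rfl⟩; rcases hy with ⟨t, _, rfl⟩; rfl)

/-! ### Straight segments -/

def seg (p q : Y) : ℝ → Y := fun t => p + t • (q - p)

@[simp] lemma seg_zero (p q : Y) : seg p q 0 = p := by simp [seg]

@[simp] lemma seg_one (p q : Y) : seg p q 1 = q := by simp [seg]

lemma seg_cont (p q : Y) : ContinuousOn (seg p q) I01 := by
  unfold seg; fun_prop

lemma seg_evar (p q : Y) : eVariationOn (seg p q) I01 ≤ ENNReal.ofReal (dist p q) := by
  have hlip : LipschitzWith ‖q - p‖₊ (fun t : ℝ => p + t • (q - p)) := by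
    apply LipschitzWith.of_dist_le_mul
    intro s t
    have h1 : (p + s • (q - p)) - (p + t • (q - p)) = (s - t) • (q - p) := by
      rw [sub_smul]; abel
    rw [dist_eq_norm, h1, norm_smul, Real.dist_eq, Real.norm_eq_abs, coe_nnnorm, mul_comm]
  have hid : eVariationOn (id : ℝ → ℝ) I01 ≤ ENNReal.ofReal 1 := by
    have h2 := MonotoneOn.eVariationOn_le (f := (id : ℝ → ℝ)) (s := I01) monotoneOn_id
      (a := 0) (b := 1) (by norm_num) (by norm_num)
    simpa using h2
  have hcomp : eVariationOn (seg p q) I01 ≤ ↑‖q - p‖₊ * eVariationOn (id : ℝ → ℝ) I01 :=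
    (hlip.lipschitzOnWith (s := univ)).comp_eVariationOn_le (mapsTo_univ _ _)
  refine hcomp.trans ?_
  have h3 : (↑‖q - p‖₊ : ENNReal) * eVariationOn (id : ℝ → ℝ) I01
      ≤ ↑‖q - p‖₊ * ENNReal.ofReal 1 := by gcongr
  refine h3.trans (le_of_eq ?_)
  rw [← ENNReal.ofReal_coe_nnreal, coe_nnnorm, ← ENNReal.ofReal_mul (norm_nonneg _), mul_one,
    dist_eq_norm, norm_sub_rev]

/-! ### Gluing two curves -/

lemma contOn_union_closed {Z : Type*} [TopologicalSpace Z] {f : ℝ → Z} {s t : Set ℝ}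
    (hs : IsClosed s) (ht : IsClosed t)
    (h1 : ContinuousOn f s) (h2 : ContinuousOn f t) : ContinuousOn f (s ∪ t) := by
  intro x hx
  have A : ContinuousWithinAt f s x := by
    by_cases h : x ∈ s
    · exact h1 x h
    · exact continuousWithinAt_of_notMem_closure (by rwa [hs.closure_eq])
  have B : ContinuousWithinAt f t x := by
    by_cases h : x ∈ t
    · exact h2 x h
    · exact continuousWithinAt_of_notMem_closure (by rwa [ht.closure_eq])
  exact A.union B

/-- concatenation of two curves, junction at parameter `c`. -/
def catAt (c : ℝ) (f g : ℝ → Y) : ℝ → Y :=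
  fun t => if t ≤ c then f (affstd 0 c t) else g (affstd c 1 t)

section catAt

variable {c : ℝ} {f g : ℝ → Y}

lemma catAt_eq_left (hc : 0 < c) : EqOn (catAt c f g) (f ∘ affstd 0 c) (Icc 0 c) :=
  fun t ht => if_pos ht.2

lemma catAt_eq_right (hc : 0 < c) (hc1 : c < 1) (hj : f 1 = g 0) :
    EqOn (catAt c f g) (g ∘ affstd c 1) (Icc c 1) := by
  intro t ht
  rcases eq_or_lt_of_le ht.1 with heq | hlt
  · rw [← heq]
    have h1 : affstd 0 c c = 1 := affstd_right hc
    have h2 : affstd c 1 c = 0 := affstd_left c 1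
    simp only [catAt, if_pos le_rfl, h1, Function.comp_apply, h2, hj]
  · exact if_neg (not_le.2 hlt)

lemma catAt_zero (hc : 0 < c) : catAt c f g 0 = f 0 := by
  simp [catAt, hc.le, affstd_left, affstd]

lemma catAt_one (hc1 : c < 1) : catAt c f g 1 = g 1 := by
  have : ¬ (1:ℝ) ≤ c := not_le.2 hc1
  simp [catAt, this, affstd_right (show c < 1 from hc1)]

lemma catAt_contOn (hc : 0 < c) (hc1 : c < 1) (hj : f 1 = g 0)
    (hf : ContinuousOn f I01) (hg : ContinuousOn g I01) :
    ContinuousOn (catAt c f g) I01 := by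
  rw [show I01 = Icc 0 c ∪ Icc c 1 from (Icc_union_Icc_eq_Icc hc.le hc1.le).symm]
  apply contOn_union_closed isClosed_Icc isClosed_Icc
  · apply ContinuousOn.congr _ (catAt_eq_left hc)
    apply hf.comp (affstd_continuous 0 c).continuousOn
    intro t ht; exact affstd_mem hc ht
  · apply ContinuousOn.congr _ (catAt_eq_right hc hc1 hj)
    apply hg.comp (affstd_continuous c 1).continuousOn
    intro t ht; exact affstd_mem hc1 ht

lemma catAt_mem (hc : 0 < c) (hc1 : c < 1) {t : ℝ} (ht : t ∈ I01) :
    (∃ s ∈ I01, catAt c f g t = f s) ∨ (∃ s ∈ I01, catAt c f g t = g s) := by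
  by_cases h : t ≤ c
  · exact Or.inl ⟨affstd 0 c t, affstd_mem hc ⟨ht.1, h⟩, if_pos h⟩
  · exact Or.inr ⟨affstd c 1 t, affstd_mem hc1 ⟨(not_le.1 h).le, ht.2⟩, if_neg h⟩

lemma catAt_evar (hc : 0 < c) (hc1 : c < 1) (hj : f 1 = g 0) :
    eVariationOn (catAt c f g) I01 ≤ eVariationOn f I01 + eVariationOn g I01 := by
  rw [← evar_Icc_add (catAt c f g) hc.le hc1.le]
  apply add_le_add
  · exact le_of_eq (evar_eq_of_reparam hc (catAt_eq_left hc))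
  · exact le_of_eq (evar_eq_of_reparam hc1 (catAt_eq_right hc hc1 hj))

end catAt


/-! ### Curves from removability -/

lemma rem_curve {S : Set Y} (hrem : MetricallyRemovable S) {p q : Y} (hp : p ∉ S) (hq : q ∉ S)
    {σ : ℝ} (hσ : 0 < σ) :
    ∃ c : ℝ → Y, ContinuousOn c I01 ∧ c 0 = p ∧ c 1 = q ∧ (∀ t ∈ I01, c t ∉ S) ∧
      eVariationOn c I01 ≤ ENNReal.ofReal (dist p q + σ) ∧
      ∀ t ∈ I01, dist (c t) p ≤ dist p q + σ := by
  obtain ⟨c, hc, h0, h1, hav, hev⟩ := hrem σ hσ p q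
  refine ⟨c, hc, h0, h1, ?_, hev, ?_⟩
  · intro t ht hmem
    refine hav t ht ⟨hmem, ?_⟩
    intro hmem2
    simp only [Set.mem_insert_iff, Set.mem_singleton_iff] at hmem2
    rcases hmem2 with h3 | h3
    · rw [h3] at hmem; exact hp hmem
    · rw [h3] at hmem; exact hq hmem
  · intro t ht
    have h2 := dist_le_of_evar (add_nonneg dist_nonneg hσ.le) hev ht
      (Set.left_mem_Icc.2 zero_le_one)
    rwa [h0] at h2

lemma dense_compl [Nontrivial Y] {S : Set Y} (hrem : MetricallyRemovable S) : Dense Sᶜ := by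
  rw [Metric.dense_iff]
  intro x r hr
  obtain ⟨v, hv⟩ := exists_ne (0 : Y)
  have hvn : (0:ℝ) < ‖v‖ := norm_pos_iff.2 hv
  set b := x + ((r + 1) / ‖v‖) • v with hbdef
  have hbx : dist b x = r + 1 := by
    rw [dist_eq_norm, show b - x = ((r + 1) / ‖v‖) • v by rw [hbdef]; abel,
      norm_smul, Real.norm_eq_abs, abs_of_pos (by positivity)]
    field_simp
  have hbne : b ≠ x := fun h => by rw [h, dist_self] at hbx; linarith
  obtain ⟨γ, hcont, h0, h1, hav, _⟩ := hrem 1 one_pos x b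
  set B := {t : ℝ | t ∈ I01 ∧ γ t ≠ x} with hBdef
  have hB1 : (1:ℝ) ∈ B := ⟨Set.right_mem_Icc.2 zero_le_one, by rw [h1]; exact hbne⟩
  have hBne : B.Nonempty := ⟨1, hB1⟩
  have hBbd : BddBelow B := ⟨0, fun t ht => ht.1.1⟩
  set u := sInf B with hudef
  have hu0 : 0 ≤ u := le_csInf hBne fun t ht => ht.1.1
  have hu1 : u ≤ 1 := csInf_le hBbd hB1
  have huI : u ∈ I01 := ⟨hu0, hu1⟩
  have hbelow : ∀ t, 0 ≤ t → t < u → γ t = x := by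
    intro t ht htu
    by_contra hne
    exact absurd (csInf_le hBbd ⟨⟨ht, htu.le.trans hu1⟩, hne⟩) (not_le.2 htu)
  have hγu : γ u = x := by
    by_contra hne
    have hupos : 0 < u := by
      rcases hu0.lt_or_eq with h | h
      · exact h
      · exact absurd (h ▸ h0) hne
    obtain ⟨d, hd, hdd⟩ := Metric.continuousWithinAt_iff.1 (hcont u huI)
      (dist (γ u) x) (dist_pos.2 hne)
    set t := max (u - d / 2) 0 with htdef
    have htI : t ∈ I01 := ⟨le_max_right _ _, max_le (by linarith) (by linarith)⟩
    have htu : t < u := max_lt (by linarith) hupos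
    have hdist : dist t u < d := by
      rw [Real.dist_eq, abs_of_nonpos (by linarith)]
      have h5 : u - d / 2 ≤ t := le_max_left _ _
      linarith
    have h6 := hdd htI hdist
    rw [hbelow t htI.1 htu, dist_comm] at h6
    exact absurd h6 (lt_irrefl _)
  obtain ⟨d, hd, hdd⟩ := Metric.continuousWithinAt_iff.1 (hcont u huI)
    (min r 1) (lt_min hr one_pos)
  obtain ⟨t', ht'B, ht'lt⟩ := exists_lt_of_csInf_lt hBne
    (show sInf B < u + d by rw [← hudef]; linarith)
  have ht'u : u ≤ t' := hudef ▸ csInf_le hBbd ht'B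
  have hdist : dist t' u < d := by
    rw [Real.dist_eq, abs_of_nonneg (by linarith)]; linarith
  have hclose := hdd ht'B.1 hdist
  rw [hγu] at hclose
  have hne_x : γ t' ≠ x := ht'B.2
  have hne_b : γ t' ≠ b := by
    intro h
    rw [h] at hclose
    have h7 := lt_of_lt_of_le hclose (min_le_right r 1)
    rw [hbx] at h7; linarith
  have hnotS : γ t' ∉ S := by
    intro hmem
    refine hav t' ht'B.1 ⟨hmem, ?_⟩
    intro hmem2
    simp only [Set.mem_insert_iff, Set.mem_singleton_iff] at hmem2
    rcases hmem2 with h3 | h3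
    · exact hne_x h3
    · exact hne_b h3
  exact ⟨γ t', Metric.mem_ball.2 (lt_of_lt_of_le hclose (min_le_left r 1)), hnotS⟩

/-! ### The surgery lemma -/

lemma surgN {S F : Set Y} [Nontrivial Y] (hrem : MetricallyRemovable S)
    {δ ρ η σ₀ : ℝ} (hδ : 0 < δ) (hρ : 0 < ρ) (hη : 0 < η) (hσ₀ : 0 < σ₀)
    (hρδ : ρ ≤ δ / 32) (hηδ : η ≤ δ / 32) (hσδ : σ₀ ≤ δ / 32) :
    ∀ M : ℕ, ∀ γ : ℝ → Y, ∀ p q : Y,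
      ContinuousOn γ I01 →
      (∀ t ∈ I01, ∀ y ∈ F, δ ≤ dist (γ t) y) →
      (∀ s ∈ I01, ∀ t ∈ I01, |s - t| * (M + 1) ≤ 1 → dist (γ s) (γ t) ≤ ρ) →
      p ∉ S → (∀ y ∈ F, δ / 2 ≤ dist p y) → dist p (γ 0) ≤ η →
      q ∉ S → (∀ y ∈ F, δ / 2 ≤ dist q y) → dist q (γ 1) ≤ η →
      ∃ γ' : ℝ → Y, ContinuousOn γ' I01 ∧ γ' 0 = p ∧ γ' 1 = q ∧
        (∀ t ∈ I01, γ' t ∉ S ∧ ∀ y ∈ F, δ / 4 ≤ dist (γ' t) y) ∧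
        eVariationOn γ' I01 ≤ eVariationOn γ I01 + (M + 1) * ENNReal.ofReal (2 * η + σ₀) ∧
        (∀ t ∈ I01, dist (γ' t) (γ t) ≤ 3 * η + 2 * ρ + σ₀) := by
  intro M
  induction M with
  | zero =>
    intro γ p q hcont hF hmod hpS hpF hp0 hqS hqF hq1
    obtain ⟨c, hc, h0, h1, hav, hev, hball⟩ := rem_curve hrem hpS hqS hσ₀
    have h01 : dist (γ 0) (γ 1) ≤ ρ := by
      apply hmod 0 (by norm_num) 1 (by norm_num)
      push_cast
      norm_num
    have hpq : dist p q ≤ 2 * η + ρ := by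
      have h4 := dist_triangle4 p (γ 0) (γ 1) q
      rw [dist_comm (γ 1) q] at h4
      linarith
    have hpq2 : dist p q ≤ 2 * η + dist (γ 0) (γ 1) := by
      have h4 := dist_triangle4 p (γ 0) (γ 1) q
      rw [dist_comm (γ 1) q] at h4
      linarith
    refine ⟨c, hc, h0, h1, ?_, ?_, ?_⟩
    · intro t ht
      refine ⟨hav t ht, fun y hy => ?_⟩
      have hc1 : dist (c t) p ≤ dist p q + σ₀ := hball t ht
      have hpy := hpF y hy
      have h5 : dist p y ≤ dist p (c t) + dist (c t) y := dist_triangle _ _ _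
      rw [dist_comm p (c t)] at h5
      linarith
    · calc eVariationOn c I01 ≤ ENNReal.ofReal (dist p q + σ₀) := hev
        _ ≤ ENNReal.ofReal ((2 * η + σ₀) + dist (γ 0) (γ 1)) := by
            apply ENNReal.ofReal_le_ofReal; linarith
        _ = ENNReal.ofReal (2 * η + σ₀) + ENNReal.ofReal (dist (γ 0) (γ 1)) :=
            ENNReal.ofReal_add (by positivity) dist_nonneg
        _ ≤ ENNReal.ofReal (2 * η + σ₀) + eVariationOn γ I01 := by
            gcongr
            rw [← edist_dist]
            exact eVariationOn.edist_le γ (Set.left_mem_Icc.2 zero_le_one)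
              (Set.right_mem_Icc.2 zero_le_one)
        _ ≤ eVariationOn γ I01 + (↑(0:ℕ) + 1) * ENNReal.ofReal (2 * η + σ₀) := by
            simp [add_comm]
    · intro t ht
      have h1' : dist (c t) p ≤ dist p q + σ₀ := hball t ht
      have h2' : dist (γ 0) (γ t) ≤ ρ := by
        apply hmod 0 (by norm_num) t ht
        push_cast
        rw [zero_sub, abs_neg, abs_of_nonneg ht.1]
        linarith [ht.2]
      have h4 := dist_triangle4 (c t) p (γ 0) (γ t)
      linarith
  | succ M ih =>
    intro γ p q hcont hF hmod hpS hpF hp0 hqS hqF hq1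
    have hM2 : (0:ℝ) < (M:ℝ) + 2 := by positivity
    set t₁ : ℝ := 1 / ((M:ℝ) + 2) with ht₁def
    have ht₁pos : 0 < t₁ := by positivity
    have ht₁lt : t₁ < 1 := by
      rw [ht₁def, div_lt_one hM2]; linarith
    have ht₁I : t₁ ∈ I01 := ⟨ht₁pos.le, ht₁lt.le⟩
    obtain ⟨z, hzSc, hzd⟩ := (dense_compl hrem).exists_dist_lt (γ t₁) hη
    have hzS : z ∉ S := hzSc
    have hmod1 : dist (γ 0) (γ t₁) ≤ ρ := by
      apply hmod 0 (by norm_num) t₁ ht₁I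
      rw [zero_sub, abs_neg, abs_of_nonneg ht₁pos.le, ht₁def]
      push_cast
      rw [div_mul_eq_mul_div, one_mul, div_le_one hM2]
      linarith
    have hzF : ∀ y ∈ F, δ / 2 ≤ dist z y := by
      intro y hy
      have h2 := hF t₁ ht₁I y hy
      have h3 : dist (γ t₁) y ≤ dist (γ t₁) z + dist z y := dist_triangle _ _ _
      linarith [hzd.le]
    obtain ⟨c₀, hc₀cont, hc₀0, hc₀1, hc₀av, hc₀ev, hc₀ball⟩ := rem_curve hrem hpS hzS hσ₀
    have hpz : dist p z ≤ 2 * η + ρ := by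
      have h4 := dist_triangle4 p (γ 0) (γ t₁) z
      linarith [hzd.le, hp0, hmod1, dist_comm (γ t₁) z ▸ hzd.le]
    have hpz2 : dist p z ≤ 2 * η + dist (γ 0) (γ t₁) := by
      have h4 := dist_triangle4 p (γ 0) (γ t₁) z
      have h5 : dist (γ t₁) z ≤ η := by rw [dist_comm] at hzd ⊢; exact hzd.le
      linarith [hp0]
    set γr : ℝ → Y := fun s => γ (t₁ + s * (1 - t₁)) with hγrdef
    have hmapsto : ∀ s ∈ I01, t₁ + s * (1 - t₁) ∈ I01 := by
      intro s hs
      constructor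
      · nlinarith [hs.1, ht₁lt.le]
      · nlinarith [hs.2, ht₁lt.le]
    have hγrcont : ContinuousOn γr I01 := by
      apply hcont.comp (by fun_prop)
      intro s hs
      exact hmapsto s hs
    have hγr0 : γr 0 = γ t₁ := by simp [hγrdef]
    have hγr1 : γr 1 = γ 1 := by simp [hγrdef]
    have hγrF : ∀ s ∈ I01, ∀ y ∈ F, δ ≤ dist (γr s) y := fun s hs => hF _ (hmapsto s hs)
    have hcastkey : (1 - t₁) * ((M:ℝ) + 1 + 1) = (M:ℝ) + 1 := by
      rw [ht₁def]; field_simp; ring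
    have hγrmod : ∀ s ∈ I01, ∀ t ∈ I01, |s - t| * ((M:ℝ) + 1) ≤ 1 →
        dist (γr s) (γr t) ≤ ρ := by
      intro s hs t ht hst
      apply hmod _ (hmapsto s hs) _ (hmapsto t ht)
      have he : (t₁ + s * (1 - t₁)) - (t₁ + t * (1 - t₁)) = (s - t) * (1 - t₁) := by ring
      push_cast
      rw [he, abs_mul, abs_of_nonneg (by linarith [ht₁lt.le] : (0:ℝ) ≤ 1 - t₁)]
      calc |s - t| * (1 - t₁) * ((M:ℝ) + 1 + 1) = |s - t| * ((M:ℝ) + 1) := by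
            rw [mul_assoc, hcastkey]
        _ ≤ 1 := hst
    have hzr0 : dist z (γr 0) ≤ η := by
      rw [hγr0, dist_comm]; exact hzd.le
    have hqr1 : dist q (γr 1) ≤ η := by rw [hγr1]; exact hq1
    obtain ⟨γ'', h''cont, h''0, h''1, h''av, h''ev, h''dev⟩ :=
      ih γr z q hγrcont hγrF (by exact_mod_cast hγrmod) hzS hzF hzr0 hqS hqF hqr1
    have hj : c₀ 1 = γ'' 0 := by rw [hc₀1, h''0]
    set γ' := catAt t₁ c₀ γ'' with hγ'def
    have hγ'cont : ContinuousOn γ' I01 := catAt_contOn ht₁pos ht₁lt hj hc₀cont h''cont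
    refine ⟨γ', hγ'cont, ?_, ?_, ?_, ?_, ?_⟩
    · rw [hγ'def, catAt_zero ht₁pos, hc₀0]
    · rw [hγ'def, catAt_one ht₁lt, h''1]
    · intro t ht
      rcases catAt_mem (f := c₀) (g := γ'') ht₁pos ht₁lt ht with ⟨s, hsI, hs⟩ | ⟨s, hsI, hs⟩
      · rw [hγ'def, hs]
        refine ⟨hc₀av s hsI, fun y hy => ?_⟩
        have hb := hc₀ball s hsI
        have hpy := hpF y hy
        have h5 : dist p y ≤ dist p (c₀ s) + dist (c₀ s) y := dist_triangle _ _ _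
        rw [dist_comm p (c₀ s)] at h5
        linarith
      · rw [hγ'def, hs]
        exact h''av s hsI
    · have hev' : eVariationOn γ' I01 ≤ eVariationOn c₀ I01 + eVariationOn γ'' I01 :=
        catAt_evar ht₁pos ht₁lt hj
      have hc₀bound : eVariationOn c₀ I01 ≤
          ENNReal.ofReal (2 * η + σ₀) + eVariationOn γ (Icc 0 t₁) := by
        calc eVariationOn c₀ I01 ≤ ENNReal.ofReal (dist p z + σ₀) := hc₀ev
          _ ≤ ENNReal.ofReal ((2 * η + σ₀) + dist (γ 0) (γ t₁)) := by
              apply ENNReal.ofReal_le_ofReal; linarith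
          _ = ENNReal.ofReal (2 * η + σ₀) + ENNReal.ofReal (dist (γ 0) (γ t₁)) :=
              ENNReal.ofReal_add (by positivity) dist_nonneg
          _ ≤ ENNReal.ofReal (2 * η + σ₀) + eVariationOn γ (Icc 0 t₁) := by
              gcongr
              rw [← edist_dist]
              exact eVariationOn.edist_le γ (Set.left_mem_Icc.2 ht₁pos.le)
                (Set.right_mem_Icc.2 ht₁pos.le)
      have hγrev : eVariationOn γr I01 = eVariationOn γ (Icc t₁ 1) := evar_comp_aff ht₁lt
      calc eVariationOn γ' I01 ≤ eVariationOn c₀ I01 + eVariationOn γ'' I01 := hev'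
        _ ≤ (ENNReal.ofReal (2 * η + σ₀) + eVariationOn γ (Icc 0 t₁)) +
            (eVariationOn γ (Icc t₁ 1) + (↑M + 1) * ENNReal.ofReal (2 * η + σ₀)) := by
            refine add_le_add hc₀bound (h''ev.trans ?_)
            rw [hγrev]
        _ = (eVariationOn γ (Icc 0 t₁) + eVariationOn γ (Icc t₁ 1)) +
            (↑M + 1 + 1) * ENNReal.ofReal (2 * η + σ₀) := by ring
        _ = eVariationOn γ I01 + (↑(M + 1) + 1) * ENNReal.ofReal (2 * η + σ₀) := by
            rw [evar_Icc_add γ ht₁pos.le ht₁lt.le]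
            push_cast
            ring
    · intro t ht
      by_cases htc : t ≤ t₁
      · have heq : γ' t = c₀ (affstd 0 t₁ t) :=
          catAt_eq_left (f := c₀) (g := γ'') ht₁pos ⟨ht.1, htc⟩
        have hs'I : affstd 0 t₁ t ∈ I01 := by
          have := affstd_mem (u := 0) (v := t₁) ht₁pos ⟨ht.1, htc⟩
          simpa using this
        have hb := hc₀ball _ hs'I
        have hmt : dist (γ 0) (γ t) ≤ ρ := by
          apply hmod 0 (by norm_num) t ht
          rw [zero_sub, abs_neg, abs_of_nonneg ht.1]
          push_cast
          calc t * ((M:ℝ) + 1 + 1) ≤ t₁ * ((M:ℝ) + 2) := by nlinarith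
            _ = 1 := by rw [ht₁def]; field_simp
        have h4 := dist_triangle4 (c₀ (affstd 0 t₁ t)) p (γ 0) (γ t)
        rw [heq]
        linarith
      · push_neg at htc
        have heq : γ' t = γ'' (affstd t₁ 1 t) :=
          catAt_eq_right (f := c₀) (g := γ'') ht₁pos ht₁lt hj ⟨htc.le, ht.2⟩
        have hs'I : affstd t₁ 1 t ∈ I01 := affstd_mem ht₁lt ⟨htc.le, ht.2⟩
        have hdev := h''dev _ hs'I
        have hback : γr (affstd t₁ 1 t) = γ t := by
          show γ (t₁ + affstd t₁ 1 t * (1 - t₁)) = γ t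
          rw [affstd_cancel ht₁lt]
        rw [heq, ← hback]
        exact hdev

lemma surgery {S F : Set Y} [Nontrivial Y] (hrem : MetricallyRemovable S)
    {γ : ℝ → Y} (hcont : ContinuousOn γ I01) {δ : ℝ} (hδ : 0 < δ)
    (hF : ∀ t ∈ I01, ∀ y ∈ F, δ ≤ dist (γ t) y)
    (hpS : γ 0 ∉ S) (hqS : γ 1 ∉ S) {σ dv : ℝ} (hσ : 0 < σ) (hdv : 0 < dv) :
    ∃ γ' : ℝ → Y, ContinuousOn γ' I01 ∧ γ' 0 = γ 0 ∧ γ' 1 = γ 1 ∧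
      (∀ t ∈ I01, γ' t ∉ S ∧ ∀ y ∈ F, δ / 4 ≤ dist (γ' t) y) ∧
      eVariationOn γ' I01 ≤ eVariationOn γ I01 + ENNReal.ofReal σ ∧
      (∀ t ∈ I01, dist (γ' t) (γ t) ≤ dv) := by
  set ρ : ℝ := min (δ / 32) (dv / 8) with hρdef
  have hρ : 0 < ρ := lt_min (by positivity) (by positivity)
  obtain ⟨d₀, hd₀, hucd⟩ := Metric.uniformContinuousOn_iff.1
    (isCompact_Icc.uniformContinuousOn_of_continuous hcont) ρ hρ
  obtain ⟨M, hM⟩ := exists_nat_one_div_lt hd₀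
  set η : ℝ := min ρ (σ / (3 * ((M:ℝ) + 2))) with hηdef
  have hη : 0 < η := lt_min hρ (by positivity)
  have hηρ : η ≤ ρ := min_le_left _ _
  have hρδ32 : ρ ≤ δ / 32 := min_le_left _ _
  have hmod : ∀ s ∈ I01, ∀ t ∈ I01, |s - t| * ((M:ℝ) + 1) ≤ 1 → dist (γ s) (γ t) ≤ ρ := by
    intro s hs t ht hst
    have hMpos : (0:ℝ) < (M:ℝ) + 1 := by positivity
    have h1 : |s - t| ≤ 1 / ((M:ℝ) + 1) := by
      rw [le_div_iff₀ hMpos]; exact hst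
    have h2 : dist s t < d₀ := lt_of_le_of_lt (by rwa [Real.dist_eq]) hM
    exact (hucd s hs t ht h2).le
  obtain ⟨γ', h1, h2, h3, h4, h5, h6⟩ := surgN hrem hδ hρ hη hη hρδ32 (hηρ.trans hρδ32)
    (hηρ.trans hρδ32) M γ (γ 0) (γ 1) hcont hF (by exact_mod_cast hmod) hpS
    (fun y hy => by linarith [hF 0 (Set.left_mem_Icc.2 zero_le_one) y hy])
    (by simp [hη.le])
    hqS (fun y hy => by linarith [hF 1 (Set.right_mem_Icc.2 zero_le_one) y hy])
    (by simp [hη.le])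
  have hbud : ((M:ENNReal) + 1) * ENNReal.ofReal (2 * η + η) ≤ ENNReal.ofReal σ := by
    have hcast : ((M:ENNReal) + 1) = ENNReal.ofReal ((M:ℝ) + 1) := by
      rw [ENNReal.ofReal_add (Nat.cast_nonneg M) zero_le_one, ENNReal.ofReal_natCast,
        ENNReal.ofReal_one]
    rw [hcast, ← ENNReal.ofReal_mul (by positivity)]
    apply ENNReal.ofReal_le_ofReal
    have hη2 : η ≤ σ / (3 * ((M:ℝ) + 2)) := min_le_right _ _
    have hpos : (0:ℝ) < 3 * ((M:ℝ) + 2) := by positivity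
    have h10 : ((M:ℝ) + 1) * (2 * η + η) ≤ ((M:ℝ) + 1) * (3 * (σ / (3 * ((M:ℝ) + 2)))) := by
      have : (0:ℝ) ≤ (M:ℝ) + 1 := by positivity
      nlinarith
    have h11 : ((M:ℝ) + 1) * (3 * (σ / (3 * ((M:ℝ) + 2)))) ≤ σ := by
      rw [show ((M:ℝ) + 1) * (3 * (σ / (3 * ((M:ℝ) + 2)))) = σ * (((M:ℝ) + 1) / ((M:ℝ) + 2))
        by field_simp]
      have h12 : ((M:ℝ) + 1) / ((M:ℝ) + 2) ≤ 1 := by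
        rw [div_le_one (by positivity)]; linarith
      nlinarith [hσ.le]
    linarith
  refine ⟨γ', h1, h2, h3, h4, ?_, ?_⟩
  · refine h5.trans ?_
    exact add_le_add_right hbud _
  · intro t ht
    have := h6 t ht
    have hρdv : ρ ≤ dv / 8 := min_le_right _ _
    linarith


/-! ### Iterating the surgery to avoid countably many sets -/

def APred (E : ℕ → Set Y) (p q : Y) (σ : ℝ) (n : ℕ) (γ : ℝ → Y) (b : ℝ) : Prop :=
  ContinuousOn γ I01 ∧ γ 0 = p ∧ γ 1 = q ∧ 0 < b ∧
  (∀ t ∈ I01, ∀ j < n, ∀ y ∈ E j, 4 * b ≤ dist (γ t) y) ∧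
  eVariationOn γ I01 ≤ ENNReal.ofReal (dist p q + σ / 2 - σ / 2 ^ (n + 1))

lemma sep_margin {γ : ℝ → Y} (hcont : ContinuousOn γ I01) {n : ℕ} {E : ℕ → Set Y}
    (hcl : ∀ k, IsClosed (E k)) (hav : ∀ t ∈ I01, ∀ j < n, γ t ∉ E j) :
    ∃ m : ℝ, 0 < m ∧ ∀ t ∈ I01, ∀ j < n, ∀ y ∈ E j, m ≤ dist (γ t) y := by
  induction n with
  | zero => exact ⟨1, one_pos, fun t ht j hj => absurd hj (Nat.not_lt_zero j)⟩
  | succ n ihn =>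
    obtain ⟨m, hm, hmle⟩ := ihn fun t ht j hj => hav t ht j (hj.trans n.lt_succ_self)
    rcases (E n).eq_empty_or_nonempty with he | hne
    · refine ⟨m, hm, fun t ht j hj y hy => ?_⟩
      rcases Nat.lt_succ_iff_lt_or_eq.1 hj with h | h
      · exact hmle t ht j h y hy
      · rw [h, he] at hy; exact absurd hy (Set.notMem_empty y)
    · have hcont2 : ContinuousOn (fun t => Metric.infDist (γ t) (E n)) I01 :=
        (Metric.continuous_infDist_pt (E n)).comp_continuousOn hcont
      obtain ⟨t₀, ht₀, hmin⟩ := isCompact_Icc.exists_isMinOn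
        (Set.nonempty_Icc.2 zero_le_one) hcont2
      have hpos : 0 < Metric.infDist (γ t₀) (E n) :=
        ((hcl n).notMem_iff_infDist_pos hne).1 (hav t₀ ht₀ n n.lt_succ_self)
      refine ⟨min m (Metric.infDist (γ t₀) (E n)), lt_min hm hpos, ?_⟩
      intro t ht j hj y hy
      rcases Nat.lt_succ_iff_lt_or_eq.1 hj with h | h
      · exact le_trans (min_le_left _ _) (hmle t ht j h y hy)
      · rw [h] at hy
        calc min m (Metric.infDist (γ t₀) (E n)) ≤ Metric.infDist (γ t₀) (E n) :=
              min_le_right _ _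
          _ ≤ Metric.infDist (γ t) (E n) := hmin ht
          _ ≤ dist (γ t) y := Metric.infDist_le_dist_of_mem hy

lemma avoid_step [Nontrivial Y] {E : ℕ → Set Y} (hcl : ∀ k, IsClosed (E k))
    (hrem : ∀ k, MetricallyRemovable (E k)) {p q : Y} (hp : ∀ k, p ∉ E k) (hq : ∀ k, q ∉ E k)
    {σ : ℝ} (hσ : 0 < σ) (n : ℕ) (γ : ℝ → Y) (b : ℝ) (h : APred E p q σ n γ b) :
    ∃ γ' b', APred E p q σ (n + 1) γ' b' ∧ b' ≤ b / 2 ∧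
      ∀ t ∈ I01, dist (γ' t) (γ t) ≤ b := by
  obtain ⟨hcont, h0, h1, hb, hmarg, hev⟩ := h
  set F : Set Y := ⋃ j ∈ Finset.range n, E j with hFdef
  have hFm : ∀ t ∈ I01, ∀ y ∈ F, 4 * b ≤ dist (γ t) y := by
    intro t ht y hy
    simp only [hFdef, Set.mem_iUnion, Finset.mem_range, exists_prop] at hy
    obtain ⟨j, hj, hy⟩ := hy
    exact hmarg t ht j hj y hy
  obtain ⟨γ', hcont', h0', h1', hSF, hev', hdev⟩ := surgery (hrem n) hcont
    (show (0:ℝ) < 4 * b by positivity) hFm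
    (h0 ▸ hp n) (h1 ▸ hq n) (show 0 < σ / 2 ^ (n + 2) by positivity) hb
  have hav' : ∀ t ∈ I01, ∀ j < n + 1, γ' t ∉ E j := by
    intro t ht j hj hmem
    rcases Nat.lt_succ_iff_lt_or_eq.1 hj with hjn | hjn
    · have h2 := (hSF t ht).2 (γ' t)
        (by simp only [hFdef, Set.mem_iUnion, Finset.mem_range, exists_prop]
            exact ⟨j, hjn, hmem⟩)
      rw [dist_self] at h2
      linarith
    · rw [hjn] at hmem; exact (hSF t ht).1 hmem
  obtain ⟨m, hmpos, hmle⟩ := sep_margin hcont' hcl hav'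
  refine ⟨γ', min (m / 4) (b / 2), ⟨hcont', ?_, ?_,
    lt_min (by positivity) (by positivity), ?_, ?_⟩, min_le_right _ _, hdev⟩
  · rw [h0', h0]
  · rw [h1', h1]
  · intro t ht j hj y hy
    calc 4 * min (m / 4) (b / 2) ≤ 4 * (m / 4) := by
          have := min_le_left (m / 4) (b / 2); linarith
      _ = m := by ring
      _ ≤ dist (γ' t) y := hmle t ht j hj y hy
  · have hnn : (0:ℝ) ≤ dist p q + σ / 2 - σ / 2 ^ (n + 1) := by
      have h2 : σ / 2 ^ (n + 1) ≤ σ / 2 := by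
        apply div_le_div_of_nonneg_left hσ.le two_pos
        calc (2:ℝ) = 2 ^ 1 := (pow_one 2).symm
          _ ≤ 2 ^ (n + 1) := by
            apply pow_le_pow_right₀ one_le_two
            omega
      have := dist_nonneg (x := p) (y := q)
      linarith
    calc eVariationOn γ' I01
        ≤ eVariationOn γ I01 + ENNReal.ofReal (σ / 2 ^ (n + 2)) := hev'
      _ ≤ ENNReal.ofReal (dist p q + σ / 2 - σ / 2 ^ (n + 1)) +
          ENNReal.ofReal (σ / 2 ^ (n + 2)) := add_le_add_left hev _
      _ = ENNReal.ofReal (dist p q + σ / 2 - σ / 2 ^ (n + 2)) := by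
          rw [← ENNReal.ofReal_add hnn (by positivity)]
          congr 1
          have h3 : σ / 2 ^ (n + 1) = σ / 2 ^ (n + 2) + σ / 2 ^ (n + 2) := by
            rw [pow_succ]
            field_simp
            ring
          rw [h3]
          ring

lemma avoidAll [CompleteSpace Y] [Nontrivial Y] {E : ℕ → Set Y}
    (hcl : ∀ k, IsClosed (E k)) (hrem : ∀ k, MetricallyRemovable (E k))
    {p q : Y} (hp : ∀ k, p ∉ E k) (hq : ∀ k, q ∉ E k) {σ : ℝ} (hσ : 0 < σ) :
    ∃ γ : ℝ → Y, ContinuousOn γ I01 ∧ γ 0 = p ∧ γ 1 = q ∧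
      (∀ t ∈ I01, ∀ k, γ t ∉ E k) ∧ eVariationOn γ I01 ≤ ENNReal.ofReal (dist p q + σ) := by
  classical
  have hbase : APred E p q σ 0 (seg p q) 1 := by
    refine ⟨seg_cont p q, seg_zero p q, seg_one p q, one_pos,
      fun t ht j hj => absurd hj (Nat.not_lt_zero j), ?_⟩
    refine (seg_evar p q).trans (ENNReal.ofReal_le_ofReal ?_)
    norm_num
  have hstep : ∀ n (x : {gb : (ℝ → Y) × ℝ // APred E p q σ n gb.1 gb.2}),
      {gb : (ℝ → Y) × ℝ // (APred E p q σ (n + 1) gb.1 gb.2 ∧ gb.2 ≤ x.1.2 / 2 ∧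
        ∀ t ∈ I01, dist (gb.1 t) (x.1.1 t) ≤ x.1.2)} := by
    intro n x
    have hex := avoid_step hcl hrem hp hq hσ n x.1.1 x.1.2 x.2
    exact ⟨⟨hex.choose, hex.choose_spec.choose⟩, hex.choose_spec.choose_spec⟩
  let seq : ∀ n : ℕ, {gb : (ℝ → Y) × ℝ // APred E p q σ n gb.1 gb.2} :=
    fun n => Nat.rec ⟨(seg p q, 1), hbase⟩ (fun n x => ⟨(hstep n x).1, (hstep n x).2.1⟩) n
  set G : ℕ → ℝ → Y := fun n => (seq n).1.1 with hGdef
  set b : ℕ → ℝ := fun n => (seq n).1.2 with hbdef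
  have hP : ∀ n, APred E p q σ n (G n) (b n) := fun n => (seq n).2
  have hb0 : b 0 = 1 := rfl
  have hrel : ∀ n, b (n + 1) ≤ b n / 2 ∧ ∀ t ∈ I01, dist (G (n + 1) t) (G n t) ≤ b n := by
    intro n
    have hs : seq (n + 1) = ⟨(hstep n (seq n)).1, (hstep n (seq n)).2.1⟩ := rfl
    constructor
    · show (seq (n + 1)).1.2 ≤ (seq n).1.2 / 2
      rw [hs]
      exact (hstep n (seq n)).2.2.1
    · intro t ht
      show dist ((seq (n + 1)).1.1 t) ((seq n).1.1 t) ≤ (seq n).1.2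
      rw [hs]
      exact (hstep n (seq n)).2.2.2 t ht
  have hbpos : ∀ n, 0 < b n := fun n => (hP n).2.2.2.1
  have hbgeo : ∀ n, b n ≤ (1 / 2) ^ n := by
    intro n
    induction n with
    | zero => rw [hb0]; norm_num
    | succ n ihn =>
      calc b (n + 1) ≤ b n / 2 := (hrel n).1
        _ ≤ (1 / 2) ^ n / 2 := by linarith
        _ = (1 / 2) ^ (n + 1) := by rw [pow_succ]; ring
  have hchain : ∀ n k, ∀ t ∈ I01, dist (G (n + k) t) (G n t) ≤ 2 * b n - 2 * b (n + k) := by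
    intro n k
    induction k with
    | zero => intro t ht; simp
    | succ k ihk =>
      intro t ht
      have h1 := (hrel (n + k)).2 t ht
      have h2 := ihk t ht
      have h3 := (hrel (n + k)).1
      have h4 := dist_triangle (G (n + k + 1) t) (G (n + k) t) (G n t)
      have h5 : n + (k + 1) = (n + k) + 1 := rfl
      rw [h5]
      linarith [hbpos (n + k + 1), hbpos (n + k)]
  have hcau : ∀ t ∈ I01, ∃ y, Tendsto (fun n => G n t) atTop (𝓝 y) := by
    intro t ht
    have hc : CauchySeq (fun n => G n t) := by
      apply cauchySeq_of_le_geometric (1 / 2) 1 (by norm_num)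
      intro n
      calc dist (G n t) (G (n + 1) t) = dist (G (n + 1) t) (G n t) := dist_comm _ _
        _ ≤ b n := (hrel n).2 t ht
        _ ≤ (1 / 2) ^ n := hbgeo n
        _ = 1 * (1 / 2) ^ n := (one_mul _).symm
    exact cauchySeq_tendsto_of_complete hc
  set glim : ℝ → Y := fun t => limUnder atTop (fun n => G n t) with hγdef
  have htend : ∀ t ∈ I01, Tendsto (fun n => G n t) atTop (𝓝 (glim t)) := by
    intro t ht
    obtain ⟨y, hy⟩ := hcau t ht
    have : glim t = y := hy.limUnder_eq
    rwa [this]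
  have hdistlim : ∀ n, ∀ t ∈ I01, dist (glim t) (G n t) ≤ 2 * b n := by
    intro n t ht
    have h2 : Tendsto (fun m => dist (G m t) (G n t)) atTop (𝓝 (dist (glim t) (G n t))) :=
      (htend t ht).dist tendsto_const_nhds
    apply le_of_tendsto h2
    filter_upwards [eventually_ge_atTop n] with m hm
    obtain ⟨k, rfl⟩ := Nat.exists_eq_add_of_le hm
    linarith [hchain n k t ht, hbpos (n + k)]
  have hunif : TendstoUniformlyOn G glim atTop I01 := by
    rw [Metric.tendstoUniformlyOn_iff]
    intro ε hε
    obtain ⟨N, hN⟩ := exists_pow_lt_of_lt_one (show (0:ℝ) < ε / 4 by linarith)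
      (by norm_num : (1:ℝ) / 2 < 1)
    filter_upwards [eventually_ge_atTop N] with n hn t ht
    have h3 : b n ≤ (1 / 2) ^ n := hbgeo n
    have h4 : (1 / 2 : ℝ) ^ n ≤ (1 / 2) ^ N :=
      pow_le_pow_of_le_one (by norm_num) (by norm_num) hn
    have h5 := hdistlim n t ht
    calc dist (glim t) (G n t) ≤ 2 * b n := h5
      _ < ε := by nlinarith
  refine ⟨glim, hunif.continuousOn (Filter.Frequently.of_forall fun n => (hP n).1), ?_, ?_, ?_, ?_⟩
  · refine tendsto_nhds_unique (htend 0 (Set.left_mem_Icc.2 zero_le_one)) ?_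
    rw [show (fun n => G n 0) = fun _ => p from funext fun n => (hP n).2.1]
    exact tendsto_const_nhds
  · refine tendsto_nhds_unique (htend 1 (Set.right_mem_Icc.2 zero_le_one)) ?_
    rw [show (fun n => G n 1) = fun _ => q from funext fun n => (hP n).2.2.1]
    exact tendsto_const_nhds
  · intro t ht k hmem
    have hm := (hP (k + 1)).2.2.2.2.1 t ht k k.lt_succ_self (glim t) hmem
    have h6 := hdistlim (k + 1) t ht
    rw [dist_comm] at h6
    linarith [hbpos (k + 1)]
  · by_contra hcon
    push_neg at hcon
    have hlt : ENNReal.ofReal (dist p q + σ / 2) < eVariationOn glim I01 :=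
      lt_of_le_of_lt (ENNReal.ofReal_le_ofReal (by linarith)) hcon
    have haux := eVariationOn.lowerSemicontinuous_aux (F := G) (p := atTop) (f := glim)
      (s := I01) (fun t ht => htend t ht) hlt
    obtain ⟨n, hn⟩ := haux.exists
    have hevn : eVariationOn (G n) I01 ≤ ENNReal.ofReal (dist p q + σ / 2) := by
      refine (hP n).2.2.2.2.2.trans (ENNReal.ofReal_le_ofReal ?_)
      have h7 : (0:ℝ) ≤ σ / 2 ^ (n + 1) := by positivity
      linarith
    exact absurd (lt_of_lt_of_le hn hevn) (lt_irrefl _)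


/-! ### Dyadic tails: gluing countably many curves accumulating at a point -/

def sd (m : ℕ) : ℝ := (1 / 2) ^ m / 4

lemma sd_pos (m : ℕ) : 0 < sd m := by unfold sd; positivity

lemma sd0 : sd 0 = 1 / 4 := by norm_num [sd]

lemma sd_succ (m : ℕ) : sd (m + 1) = sd m / 2 := by
  unfold sd; rw [pow_succ]; ring

lemma sd_lt (m : ℕ) : sd (m + 1) < sd m := by
  rw [sd_succ]; linarith [sd_pos m]

lemma sd_anti {m k : ℕ} (h : m ≤ k) : sd k ≤ sd m := by
  unfold sd
  have := pow_le_pow_of_le_one (by norm_num : (0:ℝ) ≤ 1 / 2) (by norm_num) h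
  linarith

lemma sd_le (m : ℕ) : sd m ≤ 1 / 4 := by
  rw [← sd0]; exact sd_anti (Nat.zero_le m)

lemma sd_le' (m : ℕ) : sd (m + 1) ≤ 1 / 8 := by
  have h := sd_anti (Nat.succ_le_succ (Nat.zero_le m))
  have : sd 1 = 1 / 8 := by norm_num [sd]
  linarith

lemma exists_sd_lt {t : ℝ} (ht : 0 < t) : ∃ m, sd (m + 1) < t := by
  obtain ⟨M, hM⟩ := exists_pow_lt_of_lt_one (show (0:ℝ) < 4 * t by linarith)
    (by norm_num : (1:ℝ) / 2 < 1)
  refine ⟨M, ?_⟩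
  have h2 : (1 / 2 : ℝ) ^ (M + 1) ≤ (1 / 2) ^ M :=
    pow_le_pow_of_le_one (by norm_num) (by norm_num) (Nat.le_succ M)
  show (1 / 2 : ℝ) ^ (M + 1) / 4 < t
  linarith

open Classical in
def tail (C : ℕ → ℝ → Y) (t : ℝ) : Y :=
  if h : ∃ m, sd (m + 1) < t then
    C (Nat.find h) (affstd (sd (Nat.find h + 1)) (sd (Nat.find h)) t)
  else C 0 0

lemma tail_idx {t : ℝ} {m : ℕ} (h1 : sd (m + 1) < t) (h2 : t ≤ sd m)
    (h : ∃ k, sd (k + 1) < t) [DecidablePred fun k => sd (k + 1) < t] : Nat.find h = m := by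
  rw [Nat.find_eq_iff]
  refine ⟨h1, fun k hk => ?_⟩
  rw [not_lt]
  exact h2.trans (sd_anti (by omega))

lemma tail_eqOn (C : ℕ → ℝ → Y) (hj : ∀ k, C (k + 1) 1 = C k 0) (m : ℕ) :
    EqOn (tail C) (C m ∘ affstd (sd (m + 1)) (sd m)) (Icc (sd (m + 1)) (sd m)) := by
  classical
  intro t ht
  rcases eq_or_lt_of_le ht.1 with heq | hlt
  · rw [← heq]
    have hex : ∃ k, sd (k + 1) < sd (m + 1) := ⟨m + 1, sd_lt (m + 1)⟩
    have hidx : Nat.find hex = m + 1 := tail_idx (sd_lt (m + 1)) le_rfl hex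
    show tail C (sd (m + 1)) = (C m ∘ affstd (sd (m + 1)) (sd m)) (sd (m + 1))
    rw [tail, dif_pos hex, hidx]
    simp only [Function.comp_apply, affstd_left]
    rw [affstd_right (sd_lt (m + 1))]
    exact hj m
  · have hex : ∃ k, sd (k + 1) < t := ⟨m, hlt⟩
    have hidx : Nat.find hex = m := tail_idx hlt ht.2 hex
    show tail C t = (C m ∘ affstd (sd (m + 1)) (sd m)) t
    rw [tail, dif_pos hex, hidx]
    rfl

lemma tail_cont (C : ℕ → ℝ → Y) (hj : ∀ k, C (k + 1) 1 = C k 0)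
    (hC : ∀ m, ContinuousOn (C m) I01) (M : ℕ) :
    ContinuousOn (tail C) (Icc (sd (M + 1)) (1 / 4)) := by
  induction M with
  | zero =>
    rw [show (1:ℝ)/4 = sd 0 from sd0.symm]
    apply ContinuousOn.congr _ (tail_eqOn C hj 0)
    apply (hC 0).comp (affstd_continuous _ _).continuousOn
    intro t ht; exact affstd_mem (sd_lt 0) ht
  | succ M ihM =>
    have h1 : Icc (sd (M + 2)) ((1:ℝ) / 4) =
        Icc (sd (M + 2)) (sd (M + 1)) ∪ Icc (sd (M + 1)) (1 / 4) :=
      (Icc_union_Icc_eq_Icc (sd_lt (M + 1)).le (sd_le (M + 1))).symm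
    rw [h1]
    apply contOn_union_closed isClosed_Icc isClosed_Icc _ ihM
    apply ContinuousOn.congr _ (tail_eqOn C hj (M + 1))
    apply (hC (M + 1)).comp (affstd_continuous _ _).continuousOn
    intro t ht; exact affstd_mem (sd_lt (M + 1)) ht

lemma tail_evar (C : ℕ → ℝ → Y) (hj : ∀ k, C (k + 1) 1 = C k 0) (M : ℕ) :
    eVariationOn (tail C) (Icc (sd (M + 1)) (1 / 4)) ≤
      ∑ m ∈ Finset.range (M + 1), eVariationOn (C m) I01 := by
  induction M with
  | zero =>
    rw [Finset.sum_range_one, show (1:ℝ)/4 = sd 0 from sd0.symm]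
    exact le_of_eq (evar_eq_of_reparam (sd_lt 0) (tail_eqOn C hj 0))
  | succ M ihM =>
    rw [← evar_Icc_add (tail C) (sd_lt (M + 1)).le (sd_le (M + 1)), Finset.sum_range_succ]
    have h2 : eVariationOn (tail C) (Icc (sd (M + 2)) (sd (M + 1)))
        = eVariationOn (C (M + 1)) I01 :=
      evar_eq_of_reparam (sd_lt (M + 1)) (tail_eqOn C hj (M + 1))
    rw [h2]
    calc eVariationOn (C (M + 1)) I01 + eVariationOn (tail C) (Icc (sd (M + 1)) (1 / 4))
        = eVariationOn (tail C) (Icc (sd (M + 1)) (1 / 4)) + eVariationOn (C (M + 1)) I01 :=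
          add_comm _ _
      _ ≤ _ := add_le_add_left ihM _

lemma tail_mem (C : ℕ → ℝ → Y) {t : ℝ} (h0 : 0 < t) (h4 : t ≤ 1 / 4) :
    ∃ m u, u ∈ I01 ∧ tail C t = C m u ∧ sd (m + 1) < t ∧ t ≤ sd m := by
  classical
  have hex : ∃ k, sd (k + 1) < t := exists_sd_lt h0
  have h1 : sd (Nat.find hex + 1) < t := Nat.find_spec hex
  have h2 : t ≤ sd (Nat.find hex) := by
    rcases Nat.eq_zero_or_pos (Nat.find hex) with hz | hpos
    · rw [hz, sd0]; exact h4
    · obtain ⟨m', hm'⟩ := Nat.exists_eq_succ_of_ne_zero hpos.ne'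
      have h3 := Nat.find_min hex (m := m') (by omega)
      rw [not_lt] at h3
      rw [hm']
      exact h3
  refine ⟨Nat.find hex, affstd (sd (Nat.find hex + 1)) (sd (Nat.find hex)) t,
    affstd_mem (sd_lt _) ⟨h1.le, h2⟩, ?_, h1, h2⟩
  rw [tail, dif_pos hex]


lemma tail_close (C : ℕ → ℝ → Y) {c0 : Y} {R : ℝ} (hR : 0 ≤ R)
    (hcl : ∀ m, ∀ u ∈ I01, dist (C m u) c0 ≤ R * (1 / 2) ^ m) :
    ∀ M : ℕ, ∀ t : ℝ, 0 < t → t ≤ sd M → dist (tail C t) c0 ≤ R * (1 / 2) ^ M := by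
  intro M t h0 hts
  obtain ⟨m, u, huI, heq, h1, h2⟩ := tail_mem C h0 (hts.trans (sd_le M))
  have hmM : M ≤ m := by
    by_contra hc
    push_neg at hc
    have h3 := sd_anti (show m + 1 ≤ M by omega)
    linarith
  rw [heq]
  calc dist (C m u) c0 ≤ R * (1 / 2) ^ m := hcl m u huI
    _ ≤ R * (1 / 2) ^ M := by
        apply mul_le_mul_of_nonneg_left _ hR
        exact pow_le_pow_of_le_one (by norm_num) (by norm_num) hmM

end
end MRaux


local notation "I01" => Set.Icc (0:ℝ) 1

set_option maxHeartbeats 2000000 in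
/-- A countable union of closed metrically removable sets in `ℝⁿ` is metrically removable. -/
theorem metricallyRemovable_iUnion {n : ℕ} (E : ℕ → Set (EuclideanSpace ℝ (Fin n)))
    (hclosed : ∀ k, IsClosed (E k)) (hrem : ∀ k, MetricallyRemovable (E k)) :
    MetricallyRemovable (⋃ k, E k) := by
  intro ε hε a b
  by_cases hab : a = b
  · subst hab
    refine ⟨fun _ => a, continuousOn_const, rfl, rfl,
      fun t ht hmem => hmem.2 (Set.mem_insert a _), ?_⟩
    rw [MRaux.evar_const]
    exact zero_le
  haveI : Nontrivial (EuclideanSpace ℝ (Fin n)) := ⟨⟨a, b, hab⟩⟩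
  have hdense : Dense (⋂ k, (E k)ᶜ) :=
    dense_iInter_of_isOpen (fun k => (hclosed k).isOpen_compl)
      (fun k => MRaux.dense_compl (hrem k))
  set r : ℕ → ℝ := fun m => ε / 64 * (1 / 2) ^ m with hrdef
  have hrpos : ∀ m, 0 < r m := fun m => by rw [hrdef]; positivity
  have hranti : ∀ {m k : ℕ}, m ≤ k → r k ≤ r m := fun {m k} h => by
    rw [hrdef]
    exact mul_le_mul_of_nonneg_left
      (pow_le_pow_of_le_one (by norm_num) (by norm_num) h) (by positivity)
  have hxex : ∀ m : ℕ, ∃ x, x ∈ (⋂ k, (E k)ᶜ) ∧ dist a x < r m := fun m =>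
    hdense.exists_dist_lt a (hrpos m)
  choose x hxG hxd using hxex
  have hwex : ∀ m : ℕ, ∃ w, w ∈ (⋂ k, (E k)ᶜ) ∧ dist b w < r m := fun m =>
    hdense.exists_dist_lt b (hrpos m)
  choose w hwG hwd using hwex
  have hxE : ∀ m k, x m ∉ E k := fun m k => by
    have h := hxG m; rw [Set.mem_iInter] at h; exact h k
  have hwE : ∀ m k, w m ∉ E k := fun m k => by
    have h := hwG m; rw [Set.mem_iInter] at h; exact h k
  have hAex : ∀ m : ℕ, ∃ A : ℝ → EuclideanSpace ℝ (Fin n), ContinuousOn A I01 ∧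
      A 0 = x (m + 1) ∧ A 1 = x m ∧ (∀ t ∈ I01, ∀ k, A t ∉ E k) ∧
      eVariationOn A I01 ≤ ENNReal.ofReal (dist (x (m + 1)) (x m) + r m) :=
    fun m => MRaux.avoidAll hclosed hrem (hxE (m + 1)) (hxE m) (hrpos m)
  choose A hAc hA0 hA1 hAav hAev using hAex
  have hBex : ∀ m : ℕ, ∃ B : ℝ → EuclideanSpace ℝ (Fin n), ContinuousOn B I01 ∧
      B 0 = w m ∧ B 1 = w (m + 1) ∧ (∀ t ∈ I01, ∀ k, B t ∉ E k) ∧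
      eVariationOn B I01 ≤ ENNReal.ofReal (dist (w m) (w (m + 1)) + r m) :=
    fun m => MRaux.avoidAll hclosed hrem (hwE m) (hwE (m + 1)) (hrpos m)
  choose B hBc hB0 hB1 hBav hBev using hBex
  obtain ⟨Cc, hCc, hCc0, hCc1, hCcav, hCcev⟩ :=
    MRaux.avoidAll hclosed hrem (hxE 0) (hwE 0) (show (0:ℝ) < ε / 4 by linarith)
  set B' : ℕ → ℝ → EuclideanSpace ℝ (Fin n) := fun m u => B m (1 - u) with hB'def
  have hjA : ∀ k, A (k + 1) 1 = A k 0 := fun k => by rw [hA1, hA0]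
  have hjB : ∀ k, B' (k + 1) 1 = B' k 0 := fun k => by
    simp only [hB'def]
    rw [show (1:ℝ) - 1 = 0 by ring, show (1:ℝ) - 0 = 1 by ring, hB0, hB1]
  have hB'c : ∀ m, ContinuousOn (B' m) I01 := fun m => by
    simp only [hB'def]
    apply (hBc m).comp (by fun_prop)
    intro u hu
    exact ⟨by linarith [hu.2], by linarith [hu.1]⟩
  have hB'ev : ∀ m, eVariationOn (B' m) I01 = eVariationOn (B m) I01 := fun m => by
    simp only [hB'def]
    have hanti : AntitoneOn (fun u : ℝ => 1 - u) I01 := fun s _ t _ hst => by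
      simp only; linarith
    have hcomp := eVariationOn.comp_eq_of_antitoneOn (B m) (fun u : ℝ => 1 - u) hanti
    rw [show ((B m) ∘ fun u : ℝ => 1 - u) = fun u => B m (1 - u) from rfl] at hcomp
    rw [hcomp, Set.image_const_sub_Icc]
    norm_num
  have hxx : ∀ m, dist (x (m + 1)) (x m) ≤ 2 * r m := fun m => by
    have h1 := hxd (m + 1); have h2 := hxd m
    have h3 := dist_triangle (x (m + 1)) a (x m)
    have h4 : dist (x (m + 1)) a = dist a (x (m + 1)) := dist_comm _ _
    have h5 := hranti (by omega : m ≤ m + 1)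
    linarith
  have hww : ∀ m, dist (w m) (w (m + 1)) ≤ 2 * r m := fun m => by
    have h1 := hwd (m + 1); have h2 := hwd m
    have h3 := dist_triangle (w m) b (w (m + 1))
    have h4 : dist (w m) b = dist b (w m) := dist_comm _ _
    have h5 := hranti (by omega : m ≤ m + 1)
    linarith
  have hAball : ∀ m, ∀ u ∈ I01, dist (A m u) a ≤ (ε / 16) * (1 / 2) ^ m := by
    intro m u hu
    have h1 : dist (A m u) (x (m + 1)) ≤ dist (x (m + 1)) (x m) + r m := by
      have h := MRaux.dist_le_of_evar (add_nonneg dist_nonneg (hrpos m).le) (hAev m) hu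
        (Set.left_mem_Icc.2 zero_le_one)
      rwa [hA0] at h
    have h2 := dist_triangle (A m u) (x (m + 1)) a
    have h3 : dist (x (m + 1)) a = dist a (x (m + 1)) := dist_comm _ _
    have h4 := hxd (m + 1)
    have h5 := hranti (by omega : m ≤ m + 1)
    have h6 := hxx m
    have h7 : (4:ℝ) * r m = ε / 16 * (1 / 2) ^ m := by rw [hrdef]; ring
    linarith
  have hB'ball : ∀ m, ∀ u ∈ I01, dist (B' m u) b ≤ (ε / 16) * (1 / 2) ^ m := by
    intro m u hu
    have huI : (1 : ℝ) - u ∈ I01 := ⟨by linarith [hu.2], by linarith [hu.1]⟩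
    have h1 : dist (B m (1 - u)) (w m) ≤ dist (w m) (w (m + 1)) + r m := by
      have h := MRaux.dist_le_of_evar (add_nonneg dist_nonneg (hrpos m).le) (hBev m) huI
        (Set.left_mem_Icc.2 zero_le_one)
      rwa [hB0] at h
    have h2 := dist_triangle (B m (1 - u)) (w m) b
    have h3 : dist (w m) b = dist b (w m) := dist_comm _ _
    have h4 := hwd m
    have h6 := hww m
    have h7 : (4:ℝ) * r m = ε / 16 * (1 / 2) ^ m := by rw [hrdef]; ring
    show dist (B m (1 - u)) b ≤ _
    linarith
  set γ : ℝ → EuclideanSpace ℝ (Fin n) := fun t =>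
    if t ≤ 0 then a
    else if t ≤ 1 / 4 then MRaux.tail A t
    else if t ≤ 3 / 4 then Cc (MRaux.affstd (1 / 4) (3 / 4) t)
    else if t < 1 then MRaux.tail B' (1 - t)
    else b
    with hγdef
  have hv0 : ∀ t : ℝ, t ≤ 0 → γ t = a := fun t ht => by
    simp only [hγdef]; rw [if_pos ht]
  have hv1 : ∀ t : ℝ, 0 < t → t ≤ 1 / 4 → γ t = MRaux.tail A t := fun t h1 h2 => by
    simp only [hγdef]; rw [if_neg (by linarith), if_pos h2]
  have hv2 : ∀ t : ℝ, 1 / 4 < t → t ≤ 3 / 4 → γ t = Cc (MRaux.affstd (1 / 4) (3 / 4) t) :=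
    fun t h1 h2 => by
      simp only [hγdef]; rw [if_neg (by linarith), if_neg (by linarith), if_pos h2]
  have hv3 : ∀ t : ℝ, 3 / 4 < t → t < 1 → γ t = MRaux.tail B' (1 - t) := fun t h1 h2 => by
    simp only [hγdef]
    rw [if_neg (by linarith), if_neg (by linarith), if_neg (by linarith), if_pos h2]
  have hv4 : ∀ t : ℝ, 1 ≤ t → γ t = b := fun t ht => by
    simp only [hγdef]
    rw [if_neg (by linarith), if_neg (by linarith), if_neg (by linarith), if_neg (by linarith)]
  have hγ0 : γ 0 = a := hv0 0 le_rfl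
  have hγ1 : γ 1 = b := hv4 1 le_rfl
  have hEq1 : ∀ M : ℕ, Set.EqOn γ (MRaux.tail A) (Icc (MRaux.sd (M + 1)) (1 / 4)) := by
    intro M t ht
    exact hv1 t (lt_of_lt_of_le (MRaux.sd_pos (M + 1)) ht.1) ht.2
  have htail14 : MRaux.tail A (1 / 4) = x 0 := by
    have hmem : (1:ℝ) / 4 ∈ Icc (MRaux.sd 1) (MRaux.sd 0) :=
      ⟨by have := MRaux.sd_le' 0; linarith, le_of_eq MRaux.sd0.symm⟩
    have h := MRaux.tail_eqOn A hjA 0 hmem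
    rw [h]
    simp only [Function.comp_apply]
    rw [show (1:ℝ)/4 = MRaux.sd 0 from MRaux.sd0.symm,
      MRaux.affstd_right (MRaux.sd_lt 0), hA1]
  have htailB14 : MRaux.tail B' (1 / 4) = w 0 := by
    have hmem : (1:ℝ) / 4 ∈ Icc (MRaux.sd 1) (MRaux.sd 0) :=
      ⟨by have := MRaux.sd_le' 0; linarith, le_of_eq MRaux.sd0.symm⟩
    have h := MRaux.tail_eqOn B' hjB 0 hmem
    rw [h]
    simp only [Function.comp_apply]
    rw [show (1:ℝ)/4 = MRaux.sd 0 from MRaux.sd0.symm,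
      MRaux.affstd_right (MRaux.sd_lt 0)]
    simp only [hB'def]
    rw [show (1:ℝ) - 1 = 0 by ring, hB0]
  have hEq2 : Set.EqOn γ (Cc ∘ MRaux.affstd (1 / 4) (3 / 4)) (Icc (1 / 4) (3 / 4)) := by
    intro t ht
    rcases eq_or_lt_of_le ht.1 with heq | hlt
    · rw [← heq]
      have h1 : γ ((1:ℝ)/4) = MRaux.tail A (1/4) := hv1 _ (by norm_num) le_rfl
      rw [h1, htail14]
      show x 0 = Cc (MRaux.affstd (1/4) (3/4) (1/4))
      rw [MRaux.affstd_left, hCc0]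
    · exact hv2 t hlt ht.2
  have hEq3 : ∀ M : ℕ, Set.EqOn γ ((MRaux.tail B') ∘ (fun t : ℝ => 1 - t))
      (Icc (3 / 4) (1 - MRaux.sd (M + 1))) := by
    intro M t ht
    have hsd := MRaux.sd_pos (M + 1)
    have ht1 : t < 1 := by linarith [ht.2]
    rcases eq_or_lt_of_le ht.1 with heq | hlt
    · rw [← heq]
      have h1 : γ ((3:ℝ)/4) = Cc (MRaux.affstd (1/4) (3/4) (3/4)) := hv2 _ (by norm_num) le_rfl
      rw [h1, MRaux.affstd_right (by norm_num : (1:ℝ)/4 < 3/4), hCc1]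
      show w 0 = ((MRaux.tail B') ∘ (fun t : ℝ => 1 - t)) (3/4)
      simp only [Function.comp_apply]
      rw [show (1:ℝ) - 3/4 = 1/4 by norm_num, htailB14]
    · exact hv3 t hlt ht1
  have hcontJ : ∀ M : ℕ, ContinuousOn γ (Icc (MRaux.sd (M + 1)) (1 - MRaux.sd (M + 1))) := by
    intro M
    have hb1 : MRaux.sd (M + 1) ≤ 1/4 := MRaux.sd_le (M + 1)
    have hb2 : MRaux.sd (M + 1) ≤ 1/8 := MRaux.sd_le' M
    have c1 : ContinuousOn γ (Icc (MRaux.sd (M + 1)) (1 / 4)) :=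
      (MRaux.tail_cont A hjA hAc M).congr (hEq1 M)
    have c2 : ContinuousOn γ (Icc (1 / 4) (3 / 4)) := by
      apply ContinuousOn.congr _ hEq2
      apply hCc.comp (MRaux.affstd_continuous _ _).continuousOn
      intro t ht; exact MRaux.affstd_mem (by norm_num) ht
    have c3 : ContinuousOn γ (Icc (3 / 4) (1 - MRaux.sd (M + 1))) := by
      apply ContinuousOn.congr _ (hEq3 M)
      apply (MRaux.tail_cont B' hjB hB'c M).comp (by fun_prop)
      intro t ht
      show 1 - t ∈ Icc (MRaux.sd (M + 1)) (1/4)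
      exact ⟨by linarith [ht.2], by linarith [ht.1]⟩
    have u1 : ContinuousOn γ (Icc (MRaux.sd (M + 1)) (3/4)) := by
      rw [← Icc_union_Icc_eq_Icc hb1 (by norm_num : (1:ℝ)/4 ≤ 3/4)]
      exact MRaux.contOn_union_closed isClosed_Icc isClosed_Icc c1 c2
    rw [← Icc_union_Icc_eq_Icc (show MRaux.sd (M + 1) ≤ 3/4 by linarith)
      (show (3:ℝ)/4 ≤ 1 - MRaux.sd (M + 1) by linarith)]
    exact MRaux.contOn_union_closed isClosed_Icc isClosed_Icc u1 c3
  have hAclose := MRaux.tail_close A (c0 := a) (R := ε / 16) (by positivity) hAball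
  have hBclose := MRaux.tail_close B' (c0 := b) (R := ε / 16) (by positivity) hB'ball
  have hcont : ContinuousOn γ I01 := by
    intro t ht
    rcases eq_or_lt_of_le ht.1 with h0 | hpos
    · rw [← h0]
      rw [Metric.continuousWithinAt_iff]
      intro ε' hε'
      obtain ⟨M, hM⟩ := exists_pow_lt_of_lt_one (show 0 < ε' / (ε / 16 + 1) by positivity)
        (by norm_num : (1:ℝ)/2 < 1)
      refine ⟨MRaux.sd M, MRaux.sd_pos M, ?_⟩
      intro s hs hd
      rw [hγ0]
      rcases eq_or_lt_of_le hs.1 with hs0 | hs0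
      · rw [← hs0, hγ0, dist_self]; exact hε'
      · have hss : s ≤ MRaux.sd M := by
          rw [Real.dist_eq, sub_zero, abs_of_nonneg hs.1] at hd
          linarith
        have h2 := hAclose M s hs0 hss
        rw [← hv1 s hs0 (hss.trans (MRaux.sd_le M))] at h2
        have h4 : (ε / 16 + 1) * (1/2 : ℝ)^M < ε' := by
          rw [mul_comm, ← lt_div_iff₀ (show (0:ℝ) < ε/16 + 1 by positivity)]
          exact hM
        have h5 : (0:ℝ) < (1/2:ℝ)^M := by positivity
        nlinarith
    rcases eq_or_lt_of_le ht.2 with h1 | hlt1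
    · rw [h1]
      rw [Metric.continuousWithinAt_iff]
      intro ε' hε'
      obtain ⟨M, hM⟩ := exists_pow_lt_of_lt_one (show 0 < ε' / (ε / 16 + 1) by positivity)
        (by norm_num : (1:ℝ)/2 < 1)
      refine ⟨MRaux.sd (M + 1), MRaux.sd_pos (M + 1), ?_⟩
      intro s hs hd
      rw [hγ1]
      rcases eq_or_lt_of_le hs.2 with hs1 | hs1
      · rw [hs1, hγ1, dist_self]; exact hε'
      · have hss : 1 - s ≤ MRaux.sd (M + 1) := by
          rw [Real.dist_eq, abs_of_nonpos (by linarith)] at hd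
          linarith
        have hpos2 : 0 < 1 - s := by linarith
        have h2 := hBclose (M + 1) (1 - s) hpos2 hss
        have hs34 : 3/4 < s := by
          have := MRaux.sd_le' M
          linarith
        rw [← hv3 s hs34 hs1] at h2
        have h4 : (ε / 16 + 1) * (1/2 : ℝ)^M < ε' := by
          rw [mul_comm, ← lt_div_iff₀ (show (0:ℝ) < ε/16 + 1 by positivity)]
          exact hM
        have h5 : (0:ℝ) < (1/2:ℝ)^M := by positivity
        have h6 : ((1:ℝ)/2)^(M+1) ≤ (1/2:ℝ)^M :=
          pow_le_pow_of_le_one (by norm_num) (by norm_num) (Nat.le_succ M)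
        have h7 : (0:ℝ) ≤ ε/16 := by positivity
        nlinarith [mul_le_mul_of_nonneg_left h6 h7]
    · obtain ⟨M, hM⟩ := MRaux.exists_sd_lt (show 0 < min t (1 - t) from
        lt_min hpos (by linarith))
      have h1 : MRaux.sd (M + 1) < t := lt_of_lt_of_le hM (min_le_left _ _)
      have h2 : t < 1 - MRaux.sd (M + 1) := by
        have := lt_of_lt_of_le hM (min_le_right _ _); linarith
      have h3 : ContinuousWithinAt γ (Icc (MRaux.sd (M + 1)) (1 - MRaux.sd (M + 1))) t :=
        hcontJ M t ⟨h1.le, h2.le⟩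
      apply h3.mono_of_mem_nhdsWithin
      apply mem_nhdsWithin_of_mem_nhds
      exact Filter.mem_of_superset (Ioo_mem_nhds h1 h2) Set.Ioo_subset_Icc_self
  have havoid : ∀ t ∈ I01, γ t ∉ (⋃ k, E k) \ {a, b} := by
    intro t ht hmem
    obtain ⟨hmem1, hmem2⟩ := hmem
    rw [Set.mem_iUnion] at hmem1
    obtain ⟨k, hk⟩ := hmem1
    rcases le_or_gt t 0 with h | h
    · exact hmem2 (by rw [hv0 t h]; exact Set.mem_insert a _)
    rcases le_or_gt t (1/4) with h4 | h4
    · obtain ⟨m, u, huI, heq, _, _⟩ := MRaux.tail_mem A h h4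
      rw [hv1 t h h4, heq] at hk
      exact hAav m u huI k hk
    rcases le_or_gt t (3/4) with h34 | h34
    · rw [hv2 t h4 h34] at hk
      exact hCcav _ (MRaux.affstd_mem (by norm_num) ⟨h4.le, h34⟩) k hk
    rcases lt_or_ge t 1 with h1 | h1
    · have hpos2 : 0 < 1 - t := by linarith
      have h14 : 1 - t ≤ 1/4 := by linarith
      obtain ⟨m, u, huI, heq, _, _⟩ := MRaux.tail_mem B' hpos2 h14
      rw [hv3 t h34 h1, heq] at hk
      simp only [hB'def] at hk
      have huI' : (1:ℝ) - u ∈ I01 := ⟨by linarith [huI.2], by linarith [huI.1]⟩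
      exact hBav m (1 - u) huI' k hk
    · exact hmem2 (by rw [hv4 t h1]; exact Set.mem_insert_iff.2 (Or.inr rfl))
  have hAsum : ∀ M : ℕ, (∑ m ∈ Finset.range (M + 1), eVariationOn (A m) I01) ≤
      ENNReal.ofReal (6 * (ε / 64)) := by
    intro M
    calc ∑ m ∈ Finset.range (M + 1), eVariationOn (A m) I01
        ≤ ∑ m ∈ Finset.range (M + 1), ENNReal.ofReal (3 * r m) := by
          apply Finset.sum_le_sum
          intro m _
          refine (hAev m).trans (ENNReal.ofReal_le_ofReal ?_)
          have := hxx m; linarith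
      _ = ENNReal.ofReal (∑ m ∈ Finset.range (M + 1), 3 * r m) := by
          rw [← ENNReal.ofReal_sum_of_nonneg]
          intro m _
          have := hrpos m; linarith
      _ ≤ ENNReal.ofReal (6 * (ε / 64)) := by
          apply ENNReal.ofReal_le_ofReal
          have h8 : ∑ m ∈ Finset.range (M + 1), 3 * r m
              = 3 * (ε / 64) * ∑ m ∈ Finset.range (M + 1), (1/2 : ℝ)^m := by
            rw [Finset.mul_sum]
            apply Finset.sum_congr rfl
            intro m _
            rw [hrdef]; ring
          rw [h8]
          have h9 := sum_geometric_two_le (M + 1)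
          nlinarith [hε.le]
  have hBsum : ∀ M : ℕ, (∑ m ∈ Finset.range (M + 1), eVariationOn (B m) I01) ≤
      ENNReal.ofReal (6 * (ε / 64)) := by
    intro M
    calc ∑ m ∈ Finset.range (M + 1), eVariationOn (B m) I01
        ≤ ∑ m ∈ Finset.range (M + 1), ENNReal.ofReal (3 * r m) := by
          apply Finset.sum_le_sum
          intro m _
          refine (hBev m).trans (ENNReal.ofReal_le_ofReal ?_)
          have := hww m; linarith
      _ = ENNReal.ofReal (∑ m ∈ Finset.range (M + 1), 3 * r m) := by
          rw [← ENNReal.ofReal_sum_of_nonneg]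
          intro m _
          have := hrpos m; linarith
      _ ≤ ENNReal.ofReal (6 * (ε / 64)) := by
          apply ENNReal.ofReal_le_ofReal
          have h8 : ∑ m ∈ Finset.range (M + 1), 3 * r m
              = 3 * (ε / 64) * ∑ m ∈ Finset.range (M + 1), (1/2 : ℝ)^m := by
            rw [Finset.mul_sum]
            apply Finset.sum_congr rfl
            intro m _
            rw [hrdef]; ring
          rw [h8]
          have h9 := sum_geometric_two_le (M + 1)
          nlinarith [hε.le]
  have hJbound : ∀ M : ℕ, eVariationOn γ (Icc (MRaux.sd (M + 1)) (1 - MRaux.sd (M + 1)))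
      ≤ ENNReal.ofReal (dist a b + ε / 2) := by
    intro M
    have hb1 : MRaux.sd (M + 1) ≤ 1/4 := MRaux.sd_le (M + 1)
    have hb2 : MRaux.sd (M + 1) ≤ 1/8 := MRaux.sd_le' M
    rw [← MRaux.evar_Icc_add γ (show MRaux.sd (M + 1) ≤ 3/4 by linarith)
      (show (3:ℝ)/4 ≤ 1 - MRaux.sd (M + 1) by linarith)]
    rw [← MRaux.evar_Icc_add γ hb1 (by norm_num : (1:ℝ)/4 ≤ 3/4)]
    have p1 : eVariationOn γ (Icc (MRaux.sd (M + 1)) (1/4)) ≤ ENNReal.ofReal (6 * (ε/64)) := by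
      rw [eVariationOn.eq_of_eqOn (hEq1 M)]
      exact (MRaux.tail_evar A hjA M).trans (hAsum M)
    have p2 : eVariationOn γ (Icc (1/4) (3/4)) ≤
        ENNReal.ofReal (dist a b + 2 * (ε/64) + ε/4) := by
      rw [MRaux.evar_eq_of_reparam (by norm_num : (1:ℝ)/4 < 3/4) hEq2]
      refine hCcev.trans (ENNReal.ofReal_le_ofReal ?_)
      have h1 := hxd 0
      have h2 := hwd 0
      have h3 := dist_triangle4 (x 0) a b (w 0)
      have h4 : dist (x 0) a = dist a (x 0) := dist_comm _ _
      have h5 : r 0 = ε / 64 := by rw [hrdef]; norm_num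
      linarith
    have p3 : eVariationOn γ (Icc (3/4) (1 - MRaux.sd (M + 1))) ≤
        ENNReal.ofReal (6 * (ε/64)) := by
      rw [eVariationOn.eq_of_eqOn (hEq3 M)]
      have hanti : AntitoneOn (fun u : ℝ => 1 - u) (Icc (3/4) (1 - MRaux.sd (M + 1))) :=
        fun s _ tt _ hst => by simp only; linarith
      rw [eVariationOn.comp_eq_of_antitoneOn (MRaux.tail B') (fun u : ℝ => 1 - u) hanti,
        Set.image_const_sub_Icc]
      have he : Icc (1 - (1 - MRaux.sd (M + 1))) (1 - 3/4) = Icc (MRaux.sd (M + 1)) (1/4) := by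
        norm_num
      rw [he]
      refine (MRaux.tail_evar B' hjB M).trans ?_
      calc ∑ m ∈ Finset.range (M + 1), eVariationOn (B' m) I01
          = ∑ m ∈ Finset.range (M + 1), eVariationOn (B m) I01 :=
            Finset.sum_congr rfl fun m _ => hB'ev m
        _ ≤ _ := hBsum M
    calc eVariationOn γ (Icc (MRaux.sd (M + 1)) (1/4)) + eVariationOn γ (Icc (1/4) (3/4))
          + eVariationOn γ (Icc (3/4) (1 - MRaux.sd (M + 1)))
        ≤ ENNReal.ofReal (6 * (ε/64)) + ENNReal.ofReal (dist a b + 2 * (ε/64) + ε/4)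
          + ENNReal.ofReal (6 * (ε/64)) := add_le_add (add_le_add p1 p2) p3
      _ = ENNReal.ofReal (6 * (ε/64) + (dist a b + 2 * (ε/64) + ε/4) + 6 * (ε/64)) := by
          have hd := dist_nonneg (x := a) (y := b)
          rw [← ENNReal.ofReal_add (by linarith) (by linarith),
            ← ENNReal.ofReal_add (by linarith) (by linarith)]
      _ ≤ ENNReal.ofReal (dist a b + ε/2) := ENNReal.ofReal_le_ofReal (by linarith)
  set φ : ℕ → ℝ → ℝ := fun M t => max (MRaux.sd (M + 1)) (min t (1 - MRaux.sd (M + 1)))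
    with hφdef
  have hsub : ∀ M : ℕ, Icc (MRaux.sd (M + 1)) (1 - MRaux.sd (M + 1)) ⊆ I01 := by
    intro M s hs
    have := MRaux.sd_pos (M + 1)
    exact ⟨by linarith [hs.1], by linarith [hs.2]⟩
  have hφmono : ∀ M, MonotoneOn (φ M) I01 := fun M =>
    (Monotone.max monotone_const (monotone_id.min monotone_const)).monotoneOn _
  have hφimg : ∀ M, φ M '' I01 = Icc (MRaux.sd (M + 1)) (1 - MRaux.sd (M + 1)) := by
    intro M
    have hb2 := MRaux.sd_le' M
    apply Set.Subset.antisymm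
    · rintro _ ⟨s, hs, rfl⟩
      refine ⟨le_max_left _ _, ?_⟩
      simp only [hφdef]
      exact max_le (by linarith) (min_le_right _ _)
    · intro y hy
      refine ⟨y, hsub M hy, ?_⟩
      simp only [hφdef]
      rw [min_eq_left hy.2, max_eq_right hy.1]
  have hfMev : ∀ M, eVariationOn (γ ∘ φ M) I01 ≤ ENNReal.ofReal (dist a b + ε/2) := by
    intro M
    rw [eVariationOn.comp_eq_of_monotoneOn γ (φ M) (hφmono M), hφimg M]
    exact hJbound M
  have hφtend : ∀ t ∈ I01, Filter.Tendsto (fun M => (γ ∘ φ M) t) Filter.atTop (nhds (γ t)) := by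
    intro t ht
    rcases eq_or_lt_of_le ht.1 with h0 | hpos
    · rw [← h0]
      have hval : ∀ M, φ M 0 = MRaux.sd (M + 1) := fun M => by
        simp only [hφdef]
        have h1 := MRaux.sd_le' M
        rw [min_eq_left (by linarith), max_eq_left (by linarith [MRaux.sd_pos (M + 1)])]
      rw [tendsto_iff_dist_tendsto_zero]
      apply squeeze_zero (fun M => dist_nonneg)
      · intro M
        show dist (γ (φ M 0)) (γ 0) ≤ (ε / 16) * (1/2 : ℝ)^M
        rw [hval M, hγ0]
        have hle : MRaux.sd (M + 1) ≤ MRaux.sd M := MRaux.sd_anti (by omega : M ≤ M + 1)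
        have h2 := hAclose M (MRaux.sd (M + 1)) (MRaux.sd_pos (M + 1)) hle
        rw [← hv1 _ (MRaux.sd_pos (M + 1)) (hle.trans (MRaux.sd_le M))] at h2
        exact h2
      · have h3 := tendsto_pow_atTop_nhds_zero_of_lt_one
          (by norm_num : (0:ℝ) ≤ 1/2) (by norm_num : (1:ℝ)/2 < 1)
        have h4 := h3.const_mul (ε / 16)
        simpa using h4
    rcases eq_or_lt_of_le ht.2 with h1 | hlt1
    · rw [h1]
      have hval : ∀ M, φ M 1 = 1 - MRaux.sd (M + 1) := fun M => by
        simp only [hφdef]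
        have hb2 := MRaux.sd_le' M
        have := MRaux.sd_pos (M + 1)
        rw [min_eq_right (by linarith), max_eq_right (by linarith)]
      rw [tendsto_iff_dist_tendsto_zero]
      apply squeeze_zero (fun M => dist_nonneg)
      · intro M
        show dist (γ (φ M 1)) (γ 1) ≤ (ε / 16) * (1/2 : ℝ)^M
        rw [hval M, hγ1]
        have hb2 := MRaux.sd_le' M
        have hp := MRaux.sd_pos (M + 1)
        have hle : MRaux.sd (M + 1) ≤ MRaux.sd M := MRaux.sd_anti (by omega : M ≤ M + 1)
        have h2 := hBclose M (MRaux.sd (M + 1)) hp hle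
        have h5 : γ (1 - MRaux.sd (M + 1)) = MRaux.tail B' (1 - (1 - MRaux.sd (M + 1))) :=
          hv3 _ (by linarith) (by linarith)
        rw [h5, show 1 - (1 - MRaux.sd (M + 1)) = MRaux.sd (M + 1) by ring]
        exact h2
      · have h3 := tendsto_pow_atTop_nhds_zero_of_lt_one
          (by norm_num : (0:ℝ) ≤ 1/2) (by norm_num : (1:ℝ)/2 < 1)
        have h4 := h3.const_mul (ε / 16)
        simpa using h4
    · have hev : ∀ᶠ M in Filter.atTop, (γ ∘ φ M) t = γ t := by
        obtain ⟨M₀, hM₀⟩ := MRaux.exists_sd_lt (show 0 < min t (1 - t) from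
          lt_min hpos (by linarith))
        filter_upwards [Filter.eventually_ge_atTop M₀] with M hM
        have h5 : MRaux.sd (M + 1) ≤ MRaux.sd (M₀ + 1) := MRaux.sd_anti (by omega)
        have h6 : MRaux.sd (M + 1) < t :=
          lt_of_le_of_lt h5 (lt_of_lt_of_le hM₀ (min_le_left _ _))
        have h7 : t < 1 - MRaux.sd (M + 1) := by
          have := lt_of_lt_of_le hM₀ (min_le_right _ _); linarith
        show γ (φ M t) = γ t
        congr 1
        simp only [hφdef]
        rw [min_eq_left (by linarith), max_eq_right (by linarith)]
      exact Filter.Tendsto.congr'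
        (by filter_upwards [hev] with M h using h.symm) tendsto_const_nhds
  refine ⟨γ, hcont, hγ0, hγ1, havoid, ?_⟩
  by_contra hcon
  push_neg at hcon
  have hlt : ENNReal.ofReal (dist a b + ε/2) < eVariationOn γ I01 :=
    lt_of_le_of_lt (ENNReal.ofReal_le_ofReal (by linarith)) hcon
  have haux := eVariationOn.lowerSemicontinuous_aux (F := fun M => γ ∘ φ M)
    (p := Filter.atTop) (f := γ) (s := I01) (fun t ht => hφtend t ht) hlt
  obtain ⟨M, hM⟩ := haux.exists
  exact absurd (lt_of_lt_of_le hM (hfMev M)) (lt_irrefl _)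
end
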